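/- arXiv:1809.10818 — 6 statements merged into one kernel-verified Lean document; each statement's English description precedes it below -/
import Mathlib

section
/- Fix ε ≥ 0. Under Assumption 1, the function f* is feasible and minimizes the ambiguity among all feasible discriminant functions: for every measurable feasible f : 𝒳 → ℝ, one has R(f*, ε) ≤ R(f, ε), where R(f, ε) = P(|f(X)| ≤ ε). -/
open MeasureTheory ProbabilityTheory
open scoped ENNReal

lemma np_aux {𝒳 : Type*} [MeasurableSpace 𝒳] (μ : Measure 𝒳) [IsFiniteMeasure μ]
    (g : 𝒳 → ℝ) (hg : Measurable g) (hg1 : ∀ x, ENNReal.ofReal (g x) ≤ 1)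
    (c : ℝ) (hc : 0 < c)
    (B T : Set 𝒳) (hB : MeasurableSet B) (hT : MeasurableSet T)
    (hBg : ∀ x ∈ B \ T, c ≤ g x) (hTg : ∀ x ∈ T \ B, g x ≤ c)
    (hint : ∫⁻ x in B, ENNReal.ofReal (g x) ∂μ ≤ ∫⁻ x in T, ENNReal.ofReal (g x) ∂μ) :
    μ B ≤ μ T := by
  have hfin : ∀ s : Set 𝒳, ∫⁻ x in s, ENNReal.ofReal (g x) ∂μ ≠ ∞ := by
    intro s
    have : ∫⁻ x in s, ENNReal.ofReal (g x) ∂μ ≤ ∫⁻ _ in s, 1 ∂μ :=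
      lintegral_mono fun x => hg1 x
    rw [setLIntegral_one] at this
    exact ne_top_of_le_ne_top (measure_ne_top μ s) this
  have hsplitB := lintegral_inter_add_diff (μ := μ) (fun x => ENNReal.ofReal (g x)) B hT
  have hsplitT := lintegral_inter_add_diff (μ := μ) (fun x => ENNReal.ofReal (g x)) T hB
  rw [← hsplitB, ← hsplitT, Set.inter_comm T B] at hint
  have hdiff : ∫⁻ x in B \ T, ENNReal.ofReal (g x) ∂μ ≤ ∫⁻ x in T \ B, ENNReal.ofReal (g x) ∂μ :=
    ENNReal.le_of_add_le_add_left (hfin _) hint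
  have hlow : ENNReal.ofReal c * μ (B \ T) ≤ ∫⁻ x in B \ T, ENNReal.ofReal (g x) ∂μ := by
    rw [← setLIntegral_const (B \ T) (ENNReal.ofReal c)]
    exact setLIntegral_mono hg.ennreal_ofReal fun x hx => ENNReal.ofReal_le_ofReal (hBg x hx)
  have hhigh : ∫⁻ x in T \ B, ENNReal.ofReal (g x) ∂μ ≤ ENNReal.ofReal c * μ (T \ B) := by
    rw [← setLIntegral_const (T \ B) (ENNReal.ofReal c)]
    exact setLIntegral_mono measurable_const fun x hx => ENNReal.ofReal_le_ofReal (hTg x hx)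
  have hkey : μ (B \ T) ≤ μ (T \ B) := by
    have := hlow.trans (hdiff.trans hhigh)
    exact (ENNReal.mul_le_mul_iff_right ((ENNReal.ofReal_pos.mpr hc).ne') ENNReal.ofReal_ne_top).mp this
  calc μ B = μ (B ∩ T) + μ (B \ T) := (measure_inter_add_diff B hT).symm
    _ ≤ μ (B ∩ T) + μ (T \ B) := add_le_add_right hkey _
    _ = μ (T ∩ B) + μ (T \ B) := by rw [Set.inter_comm]
    _ = μ T := measure_inter_add_diff T hB

/-- Under Assumption 1, `f*` is feasible and minimizes the ambiguity
`R(f, ε) = P(|f(X)| ≤ ε)` among all measurable feasible discriminant functions. -/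
theorem fstar_minimizes_ambiguity
    {𝒳 : Type*} [MeasurableSpace 𝒳]
    {Ω : Type*} [MeasurableSpace Ω] (P : Measure Ω) [IsProbabilityMeasure P]
    (X : Ω → 𝒳) (Y : Ω → ℝ) (hX : Measurable X) (hY : Measurable Y)
    (hYval : ∀ ω, Y ω = 1 ∨ Y ω = -1)
    (hpos1 : 0 < P {ω | Y ω = 1}) (hposm : 0 < P {ω | Y ω = -1})
    -- η is a measurable version of the regression function x ↦ P(Y = 1 ∣ X = x)
    (η : 𝒳 → ℝ) (hη : Measurable η) (hη01 : ∀ x, η x ∈ Set.Icc (0 : ℝ) 1)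
    (hreg : ∀ A : Set 𝒳, MeasurableSet A →
      P {ω | X ω ∈ A ∧ Y ω = 1} = ∫⁻ x in A, ENNReal.ofReal (η x) ∂(P.map X))
    -- noncoverage levels and thresholds
    (αm α1 : ℝ) (hαm : αm ∈ Set.Ioo (0 : ℝ) 1) (hα1 : α1 ∈ Set.Ioo (0 : ℝ) 1)
    (tm t1 : ℝ)
    (htm : P[|{ω | Y ω = -1}] {ω | tm < η (X ω)} = ENNReal.ofReal αm)
    (ht1 : P[|{ω | Y ω = 1}] {ω | η (X ω) < t1} = ENNReal.ofReal α1)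
    -- Assumption 1: the distribution of η(X) is atomless under both class-conditional
    -- distributions, and t1 ≤ 1/2 ≤ tm
    (hatomlessm : ∀ t : ℝ, P[|{ω | Y ω = -1}] {ω | η (X ω) = t} = 0)
    (hatomless1 : ∀ t : ℝ, P[|{ω | Y ω = 1}] {ω | η (X ω) = t} = 0)
    (ht1half : t1 ≤ 1 / 2) (hhalftm : 1 / 2 ≤ tm)
    (ε : ℝ) (hε : 0 ≤ ε)
    -- the Bayes-type rule f*
    (fstar : 𝒳 → ℝ)
    (hfstar : ∀ x, fstar x =
      if tm < η x then 1 + ε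
      else if t1 ≤ η x then ε * Real.sign (η x - 1 / 2)
      else -(1 + ε))
    -- an arbitrary measurable feasible competitor f
    (f : 𝒳 → ℝ) (hf : Measurable f)
    (hfeasm : P[|{ω | Y ω = -1}] {ω | Y ω * f (X ω) < -ε} ≤ ENNReal.ofReal αm)
    (hfeas1 : P[|{ω | Y ω = 1}] {ω | Y ω * f (X ω) < -ε} ≤ ENNReal.ofReal α1) :
    -- f* is feasible, and its ambiguity is no larger than that of f
    (P[|{ω | Y ω = -1}] {ω | Y ω * fstar (X ω) < -ε} ≤ ENNReal.ofReal αm ∧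
     P[|{ω | Y ω = 1}] {ω | Y ω * fstar (X ω) < -ε} ≤ ENNReal.ofReal α1) ∧
    P {ω | |fstar (X ω)| ≤ ε} ≤ P {ω | |f (X ω)| ≤ ε} := by
  classical
  set ν := P.map X with hνdef
  haveI : IsProbabilityMeasure ν := Measure.isProbabilityMeasure_map hX.aemeasurable
  set sm : Set Ω := {ω | Y ω = -1} with hsmdef
  set s1 : Set Ω := {ω | Y ω = 1} with hs1def
  have hsm : MeasurableSet sm := hY (measurableSet_singleton (-1))
  have hs1 : MeasurableSet s1 := hY (measurableSet_singleton 1)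
  have hpm0 : P sm ≠ 0 := hposm.ne'
  have hp10 : P s1 ≠ 0 := hpos1.ne'
  -- threshold bounds
  have htm1 : tm < 1 := by
    by_contra h
    push_neg at h
    have hempty : {ω | tm < η (X ω)} = (∅ : Set Ω) := by
      ext ω
      simp only [Set.mem_setOf_eq, Set.mem_empty_iff_false, iff_false, not_lt]
      linarith [(hη01 (X ω)).2]
    rw [hempty] at htm
    simp only [measure_empty] at htm
    exact absurd htm.symm (ENNReal.ofReal_pos.mpr hαm.1).ne'
  have ht10 : 0 < t1 := by
    by_contra h
    push_neg at h
    have hempty : {ω | η (X ω) < t1} = (∅ : Set Ω) := by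
      ext ω
      simp only [Set.mem_setOf_eq, Set.mem_empty_iff_false, iff_false, not_lt]
      linarith [(hη01 (X ω)).1]
    rw [hempty] at ht1
    simp only [measure_empty] at ht1
    exact absurd ht1.symm (ENNReal.ofReal_pos.mpr hα1.1).ne'
  -- the sets in 𝒳
  set T : Set 𝒳 := {x | tm < η x} with hTdef
  set S : Set 𝒳 := {x | η x < t1} with hSdef
  set M : Set 𝒳 := {x | t1 ≤ η x ∧ η x ≤ tm} with hMdef
  set Bp : Set 𝒳 := {x | ε < f x} with hBpdef
  set Bm : Set 𝒳 := {x | f x < -ε} with hBmdef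
  set Af : Set 𝒳 := {x | |f x| ≤ ε} with hAfdef
  have hTms : MeasurableSet T := measurableSet_lt measurable_const hη
  have hSms : MeasurableSet S := measurableSet_lt hη measurable_const
  have hMms : MeasurableSet M :=
    (measurableSet_le measurable_const hη).inter (measurableSet_le hη measurable_const)
  have hBpms : MeasurableSet Bp := measurableSet_lt measurable_const hf
  have hBmms : MeasurableSet Bm := measurableSet_lt hf measurable_const
  have hAfms : MeasurableSet Af := measurableSet_le hf.abs measurable_const
  -- product formula for conditional probability
  have hst : ∀ {s : Set Ω} (t : Set Ω), MeasurableSet s → P s ≠ 0 →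
      P (s ∩ t) = P s * P[|s] t := by
    intro s t hs h0
    rw [cond_apply hs P t, ← mul_assoc, ENNReal.mul_inv_cancel h0 (measure_ne_top P s), one_mul]
  -- regression rewrite
  have hreg' : ∀ A : Set 𝒳, MeasurableSet A →
      P (s1 ∩ X ⁻¹' A) = ∫⁻ x in A, ENNReal.ofReal (η x) ∂ν := by
    intro A hA
    rw [← hreg A hA]
    congr 1
    ext ω
    simp only [Set.mem_inter_iff, Set.mem_preimage, Set.mem_setOf_eq, hs1def, and_comm]
  -- class -1 integral formula
  have hregm : ∀ A : Set 𝒳, MeasurableSet A →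
      P (sm ∩ X ⁻¹' A) = ∫⁻ x in A, ENNReal.ofReal (1 - η x) ∂ν := by
    intro A hA
    have hdisj : Disjoint (s1 ∩ X ⁻¹' A) (sm ∩ X ⁻¹' A) := by
      rw [Set.disjoint_left]
      rintro ω ⟨h1, -⟩ ⟨h2, -⟩
      simp only [hs1def, Set.mem_setOf_eq] at h1
      simp only [hsmdef, Set.mem_setOf_eq] at h2
      rw [h1] at h2; norm_num at h2
    have hunion : (s1 ∩ X ⁻¹' A) ∪ (sm ∩ X ⁻¹' A) = X ⁻¹' A := by
      ext ω
      simp only [Set.mem_union, Set.mem_inter_iff, Set.mem_preimage, hs1def, hsmdef,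
        Set.mem_setOf_eq]
      constructor
      · rintro (⟨-, h⟩ | ⟨-, h⟩) <;> exact h
      · intro h
        rcases hYval ω with h1 | h1
        · exact Or.inl ⟨h1, h⟩
        · exact Or.inr ⟨h1, h⟩
    have hsum : P (s1 ∩ X ⁻¹' A) + P (sm ∩ X ⁻¹' A) = ν A := by
      rw [← measure_union hdisj (hsm.inter (hX hA)), hunion, hνdef, Measure.map_apply hX hA]
    have hintsum : (∫⁻ x in A, ENNReal.ofReal (η x) ∂ν) +
        (∫⁻ x in A, ENNReal.ofReal (1 - η x) ∂ν) = ν A := by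
      rw [← lintegral_add_left hη.ennreal_ofReal]
      have : ∀ x, ENNReal.ofReal (η x) + ENNReal.ofReal (1 - η x) = 1 := by
        intro x
        rw [← ENNReal.ofReal_add (hη01 x).1 (by linarith [(hη01 x).2])]
        norm_num
      calc ∫⁻ x in A, (ENNReal.ofReal (η x) + ENNReal.ofReal (1 - η x)) ∂ν
          = ∫⁻ _ in A, (1 : ℝ≥0∞) ∂ν := by
            apply lintegral_congr
            intro x; rw [this x]
        _ = ν A := setLIntegral_one A
    rw [hreg' A hA] at hsum
    rw [← hintsum] at hsum
    exact WithTop.add_left_cancel (by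
      exact ne_top_of_le_ne_top (measure_ne_top ν A) (le_of_eq_of_le rfl (by
        rw [← hintsum]; exact le_add_right (α := ℝ≥0∞) le_rfl))) hsum
  -- pointwise description of fstar
  have hsign : ∀ r : ℝ, |Real.sign r| ≤ 1 := by
    intro r
    rcases lt_trichotomy r 0 with h | h | h
    · rw [Real.sign_of_neg h]; norm_num
    · rw [h, Real.sign_zero]; norm_num
    · rw [Real.sign_of_pos h]; norm_num
  have hfs : ∀ x, (ε < fstar x ↔ tm < η x) ∧ (fstar x < -ε ↔ η x < t1) ∧
      (|fstar x| ≤ ε ↔ (t1 ≤ η x ∧ η x ≤ tm)) := by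
    intro x
    have hbabs : |ε * Real.sign (η x - 1 / 2)| ≤ ε := by
      rw [abs_mul, abs_of_nonneg hε]
      calc ε * |Real.sign (η x - 1 / 2)| ≤ ε * 1 :=
        mul_le_mul_of_nonneg_left (hsign _) hε
        _ = ε := mul_one ε
    have hb' := abs_le.mp hbabs
    rw [hfstar x]
    split_ifs with h1 h2
    · refine ⟨⟨fun _ => h1, fun _ => by linarith⟩, ⟨fun h => by linarith, fun h => by linarith⟩,
        ⟨fun h => by rw [abs_of_nonneg (by linarith : (0:ℝ) ≤ 1 + ε)] at h; linarith,
         fun h => by linarith [h.2]⟩⟩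
    · push_neg at h1
      refine ⟨⟨fun h => by linarith [hb'.2], fun h => by linarith⟩,
        ⟨fun h => by linarith [hb'.1], fun h => by linarith⟩,
        ⟨fun _ => ⟨h2, h1⟩, fun _ => hbabs⟩⟩
    · push_neg at h1 h2
      refine ⟨⟨fun h => by linarith, fun h => by linarith⟩,
        ⟨fun _ => h2, fun _ => by linarith⟩,
        ⟨fun h => by rw [abs_neg, abs_of_nonneg (by linarith : (0:ℝ) ≤ 1 + ε)] at h; linarith,
         fun h => by linarith [h.1]⟩⟩
  -- feasibility of fstar
  have hfeasm' : P[|sm] {ω | Y ω * fstar (X ω) < -ε} = ENNReal.ofReal αm := by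
    have hseteq : sm ∩ {ω | Y ω * fstar (X ω) < -ε} = sm ∩ {ω | tm < η (X ω)} := by
      ext ω
      simp only [Set.mem_inter_iff, hsmdef, Set.mem_setOf_eq, and_congr_right_iff]
      intro hYω
      rw [hYω]
      constructor
      · intro h
        exact (hfs (X ω)).1.mp (by linarith)
      · intro h
        have := (hfs (X ω)).1.mpr h
        linarith
    rw [cond_apply hsm P, hseteq, ← cond_apply hsm P, htm]
  have hfeas1' : P[|s1] {ω | Y ω * fstar (X ω) < -ε} = ENNReal.ofReal α1 := by
    have hseteq : s1 ∩ {ω | Y ω * fstar (X ω) < -ε} = s1 ∩ {ω | η (X ω) < t1} := by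
      ext ω
      simp only [Set.mem_inter_iff, hs1def, Set.mem_setOf_eq, and_congr_right_iff]
      intro hYω
      rw [hYω, one_mul]
      exact (hfs (X ω)).2.1
    rw [cond_apply hs1 P, hseteq, ← cond_apply hs1 P, ht1]
  -- NP bound for Bp vs T
  have hνBpT : ν Bp ≤ ν T := by
    have hconstraint : ∫⁻ x in Bp, ENNReal.ofReal (1 - η x) ∂ν ≤
        ∫⁻ x in T, ENNReal.ofReal (1 - η x) ∂ν := by
      rw [← hregm Bp hBpms, ← hregm T hTms]
      have hseteq : sm ∩ {ω | Y ω * f (X ω) < -ε} = sm ∩ X ⁻¹' Bp := by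
        ext ω
        simp only [Set.mem_inter_iff, hsmdef, Set.mem_setOf_eq, Set.mem_preimage, hBpdef,
          and_congr_right_iff]
        intro hYω
        rw [hYω]
        constructor
        · intro h; linarith
        · intro h; linarith
      have hTeq : sm ∩ {ω | tm < η (X ω)} = sm ∩ X ⁻¹' T := rfl
      calc P (sm ∩ X ⁻¹' Bp) = P sm * P[|sm] {ω | Y ω * f (X ω) < -ε} := by
            rw [← hst _ hsm hpm0, hseteq]
        _ ≤ P sm * ENNReal.ofReal αm := by gcongr
        _ = P sm * P[|sm] {ω | tm < η (X ω)} := by rw [htm]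
        _ = P (sm ∩ X ⁻¹' T) := by rw [← hst _ hsm hpm0, hTeq]
    exact np_aux ν (fun x => 1 - η x) (measurable_const.sub hη)
      (fun x => ENNReal.ofReal_le_one.mpr (show (1:ℝ) - η x ≤ 1 by linarith [(hη01 x).1]))
      (1 - tm) (by linarith) Bp T hBpms hTms
      (fun x hx => by
        have h2 : ¬ tm < η x := hx.2
        push_neg at h2
        show (1:ℝ) - tm ≤ 1 - η x
        linarith)
      (fun x hx => by
        have h2 : tm < η x := hx.1
        show (1:ℝ) - η x ≤ 1 - tm
        linarith)
      hconstraint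
  -- NP bound for Bm vs S
  have hνBmS : ν Bm ≤ ν S := by
    have hconstraint : ∫⁻ x in Bm, ENNReal.ofReal (η x) ∂ν ≤
        ∫⁻ x in S, ENNReal.ofReal (η x) ∂ν := by
      rw [← hreg' Bm hBmms, ← hreg' S hSms]
      have hseteq : s1 ∩ {ω | Y ω * f (X ω) < -ε} = s1 ∩ X ⁻¹' Bm := by
        ext ω
        simp only [Set.mem_inter_iff, hs1def, Set.mem_setOf_eq, Set.mem_preimage, hBmdef,
          and_congr_right_iff]
        intro hYω
        rw [hYω, one_mul]
      have hSeq : s1 ∩ {ω | η (X ω) < t1} = s1 ∩ X ⁻¹' S := rfl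
      calc P (s1 ∩ X ⁻¹' Bm) = P s1 * P[|s1] {ω | Y ω * f (X ω) < -ε} := by
            rw [← hst _ hs1 hp10, hseteq]
        _ ≤ P s1 * ENNReal.ofReal α1 := by gcongr
        _ = P s1 * P[|s1] {ω | η (X ω) < t1} := by rw [ht1]
        _ = P (s1 ∩ X ⁻¹' S) := by rw [← hst _ hs1 hp10, hSeq]
    exact np_aux ν η hη
      (fun x => ENNReal.ofReal_le_one.mpr (hη01 x).2)
      t1 ht10 Bm S hBmms hSms
      (fun x hx => by
        have : ¬ η x < t1 := hx.2
        push_neg at this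
        linarith)
      (fun x hx => le_of_lt hx.1)
      hconstraint
  -- ambiguity comparison
  have hPfstar : P {ω | |fstar (X ω)| ≤ ε} = ν M := by
    have : {ω | |fstar (X ω)| ≤ ε} = X ⁻¹' M := by
      ext ω
      simp only [Set.mem_setOf_eq, Set.mem_preimage, hMdef]
      exact (hfs (X ω)).2.2
    rw [this, hνdef, Measure.map_apply hX hMms]
  have hPf : P {ω | |f (X ω)| ≤ ε} = ν Af := by
    rw [hνdef, Measure.map_apply hX hAfms]
    rfl
  have hpart1 : ν M + (ν T + ν S) = 1 := by
    have hd1 : Disjoint T S := by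
      rw [Set.disjoint_left]
      intro x hx1 hx2
      simp only [hTdef, hSdef, Set.mem_setOf_eq] at hx1 hx2
      linarith
    have hd2 : Disjoint M (T ∪ S) := by
      rw [Set.disjoint_left]
      intro x hx1 hx2
      simp only [hMdef, Set.mem_setOf_eq] at hx1
      rcases hx2 with hx2 | hx2 <;>
        simp only [hTdef, hSdef, Set.mem_setOf_eq] at hx2 <;> linarith [hx1.1, hx1.2]
    have huniv : M ∪ (T ∪ S) = Set.univ := by
      ext x
      simp only [Set.mem_union, hMdef, hTdef, hSdef, Set.mem_setOf_eq, Set.mem_univ, iff_true]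
      rcases lt_or_ge tm (η x) with h | h
      · exact Or.inr (Or.inl h)
      · rcases lt_or_ge (η x) t1 with h' | h'
        · exact Or.inr (Or.inr h')
        · exact Or.inl ⟨h', h⟩
    rw [← measure_union hd1 hSms, ← measure_union hd2 (hTms.union hSms), huniv]
    exact measure_univ
  have hpart2 : ν Af + (ν Bp + ν Bm) = 1 := by
    have hd1 : Disjoint Bp Bm := by
      rw [Set.disjoint_left]
      intro x hx1 hx2
      simp only [hBpdef, hBmdef, Set.mem_setOf_eq] at hx1 hx2
      linarith
    have hd2 : Disjoint Af (Bp ∪ Bm) := by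
      rw [Set.disjoint_left]
      intro x hx1 hx2
      simp only [hAfdef, Set.mem_setOf_eq] at hx1
      have := abs_le.mp hx1
      rcases hx2 with hx2 | hx2 <;>
        simp only [hBpdef, hBmdef, Set.mem_setOf_eq] at hx2 <;> linarith [this.1, this.2]
    have huniv : Af ∪ (Bp ∪ Bm) = Set.univ := by
      ext x
      simp only [Set.mem_union, hAfdef, hBpdef, hBmdef, Set.mem_setOf_eq, Set.mem_univ, iff_true]
      rcases lt_or_ge ε (f x) with h | h
      · exact Or.inr (Or.inl h)
      · rcases lt_or_ge (f x) (-ε) with h' | h'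
        · exact Or.inr (Or.inr h')
        · exact Or.inl (abs_le.mpr ⟨h', h⟩)
    rw [← measure_union hd1 hBmms, ← measure_union hd2 (hBpms.union hBmms), huniv]
    exact measure_univ
  have hmain : ν M ≤ ν Af := by
    have h1 : ν M + (ν T + ν S) ≤ ν Af + (ν T + ν S) := by
      rw [hpart1, ← hpart2]
      exact add_le_add_right (add_le_add hνBpT hνBmS) _
    exact (ENNReal.add_le_add_iff_right
      (ENNReal.add_ne_top.mpr ⟨measure_ne_top ν T, measure_ne_top ν S⟩)).mp h1
  refine ⟨⟨le_of_eq hfeasm', le_of_eq hfeas1'⟩, ?_⟩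
  rw [hPfstar, hPf]
  exact hmain
end

section
/- Fix ε ≥ 0. Under Assumption 1, the function f* minimizes the risk R̄ among all feasible discriminant functions: for every measurable feasible f : 𝒳 → ℝ, one has R̄(f*, ε) ≤ R̄(f, ε), where R̄(f, ε) = P(Y f(X) < −ε) + (1/2)·P(|f(X)| ≤ ε). -/
open MeasureTheory ProbabilityTheory
open scoped ENNReal

set_option maxHeartbeats 2000000 in
/-- Under Assumption 1, `f*` minimizes the risk `R̄(f, ε) = P(Y f(X) < −ε) + (1/2)·P(|f(X)| ≤ ε)` among all measurable feasible discriminant functions. -/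
theorem fstar_minimizes_Rbar
    {𝒳 : Type*} [MeasurableSpace 𝒳]
    {Ω : Type*} [MeasurableSpace Ω] (P : Measure Ω) [IsProbabilityMeasure P]
    (X : Ω → 𝒳) (Y : Ω → ℝ) (hX : Measurable X) (hY : Measurable Y)
    (hYval : ∀ ω, Y ω = 1 ∨ Y ω = -1)
    (hpos1 : 0 < P {ω | Y ω = 1}) (hposm : 0 < P {ω | Y ω = -1})
    -- η is a measurable version of the regression function x ↦ P(Y = 1 ∣ X = x)
    (η : 𝒳 → ℝ) (hη : Measurable η) (hη01 : ∀ x, η x ∈ Set.Icc (0 : ℝ) 1)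
    (hreg : ∀ A : Set 𝒳, MeasurableSet A →
      P {ω | X ω ∈ A ∧ Y ω = 1} = ∫⁻ x in A, ENNReal.ofReal (η x) ∂(P.map X))
    -- noncoverage levels and thresholds
    (αm α1 : ℝ) (hαm : αm ∈ Set.Ioo (0 : ℝ) 1) (hα1 : α1 ∈ Set.Ioo (0 : ℝ) 1)
    (tm t1 : ℝ)
    (htm : P[|{ω | Y ω = -1}] {ω | tm < η (X ω)} = ENNReal.ofReal αm)
    (ht1 : P[|{ω | Y ω = 1}] {ω | η (X ω) < t1} = ENNReal.ofReal α1)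
    -- Assumption 1: the distribution of η(X) is atomless under both class-conditional
    -- distributions, and t1 ≤ 1/2 ≤ tm
    (hatomlessm : ∀ t : ℝ, P[|{ω | Y ω = -1}] {ω | η (X ω) = t} = 0)
    (hatomless1 : ∀ t : ℝ, P[|{ω | Y ω = 1}] {ω | η (X ω) = t} = 0)
    (ht1half : t1 ≤ 1 / 2) (hhalftm : 1 / 2 ≤ tm)
    (ε : ℝ) (hε : 0 ≤ ε)
    -- the Bayes-type rule f*
    (fstar : 𝒳 → ℝ)
    (hfstar : ∀ x, fstar x =
      if tm < η x then 1 + ε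
      else if t1 ≤ η x then ε * Real.sign (η x - 1 / 2)
      else -(1 + ε))
    -- an arbitrary measurable feasible competitor f
    (f : 𝒳 → ℝ) (hf : Measurable f)
    (hfeasm : P[|{ω | Y ω = -1}] {ω | Y ω * f (X ω) < -ε} ≤ ENNReal.ofReal αm)
    (hfeas1 : P[|{ω | Y ω = 1}] {ω | Y ω * f (X ω) < -ε} ≤ ENNReal.ofReal α1) :
    (P {ω | Y ω * fstar (X ω) < -ε}).toReal
      + (1 / 2) * (P {ω | |fstar (X ω)| ≤ ε}).toReal
    ≤ (P {ω | Y ω * f (X ω) < -ε}).toReal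
      + (1 / 2) * (P {ω | |f (X ω)| ≤ ε}).toReal := by
  classical
  have hY1meas : MeasurableSet {ω | Y ω = 1} := hY (measurableSet_singleton 1)
  have hYmmeas : MeasurableSet {ω | Y ω = -1} := hY (measurableSet_singleton (-1))
  set μ : Measure 𝒳 := P.map X with hμdef
  haveI : IsProbabilityMeasure μ := Measure.isProbabilityMeasure_map hX.aemeasurable
  set A : Set 𝒳 := {x | ε < f x} with hAdef
  set C : Set 𝒳 := {x | f x < -ε} with hCdef
  set As : Set 𝒳 := {x | tm < η x} with hAsdef
  set Cs : Set 𝒳 := {x | η x < t1} with hCsdef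
  have hA : MeasurableSet A := measurableSet_lt measurable_const hf
  have hC : MeasurableSet C := measurableSet_lt hf measurable_const
  have hAs : MeasurableSet As := measurableSet_lt measurable_const hη
  have hCs : MeasurableSet Cs := measurableSet_lt hη measurable_const
  -- integrability
  have hηint : Integrable η μ := by
    refine Integrable.mono' (integrable_const (1:ℝ)) hη.aestronglyMeasurable ?_
    filter_upwards with x
    rw [Real.norm_eq_abs, abs_of_nonneg (hη01 x).1]
    exact (hη01 x).2
  have h1ηint : Integrable (fun x => 1 - η x) μ := (integrable_const 1).sub hηint
  -- basic set facts
  have hmap : ∀ (S : Set 𝒳), MeasurableSet S → μ S = P (X ⁻¹' S) :=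
    fun S hS => Measure.map_apply hX hS
  have hsetsplit : ∀ (S : Set 𝒳),
      (X ⁻¹' S) = {ω | X ω ∈ S ∧ Y ω = 1} ∪ {ω | X ω ∈ S ∧ Y ω = -1} := by
    intro S; ext ω
    simp only [Set.mem_preimage, Set.mem_union, Set.mem_setOf_eq]
    constructor
    · intro h
      rcases hYval ω with h' | h'
      · exact Or.inl ⟨h, h'⟩
      · exact Or.inr ⟨h, h'⟩
    · rintro (⟨h1, _⟩ | ⟨h1, _⟩) <;> exact h1
  have hdisj : ∀ (S T : Set 𝒳),
      Disjoint {ω | X ω ∈ S ∧ Y ω = 1} {ω | X ω ∈ T ∧ Y ω = -1} := by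
    intro S T
    rw [Set.disjoint_left]
    rintro ω ⟨_, h1⟩ ⟨_, h2⟩
    rw [h1] at h2; norm_num at h2
  have hmeas1 : ∀ (S : Set 𝒳), MeasurableSet S →
      MeasurableSet {ω | X ω ∈ S ∧ Y ω = 1} := fun S hS => (hX hS).inter hY1meas
  have hmeasm : ∀ (S : Set 𝒳), MeasurableSet S →
      MeasurableSet {ω | X ω ∈ S ∧ Y ω = -1} := fun S hS => (hX hS).inter hYmmeas
  have hsum : ∀ (S : Set 𝒳), MeasurableSet S →
      P {ω | X ω ∈ S ∧ Y ω = 1} + P {ω | X ω ∈ S ∧ Y ω = -1} = μ S := by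
    intro S hS
    rw [hmap S hS, hsetsplit S, measure_union (hdisj S S) (hmeasm S hS)]
  -- the class (-1) analogue of hreg
  have hregm : ∀ (S : Set 𝒳), MeasurableSet S →
      P {ω | X ω ∈ S ∧ Y ω = -1} = ∫⁻ x in S, ENNReal.ofReal (1 - η x) ∂μ := by
    intro S hS
    have hfin : ∫⁻ x in S, ENNReal.ofReal (η x) ∂μ ≠ ∞ := by
      have hle : ∫⁻ x in S, ENNReal.ofReal (η x) ∂μ ≤ ∫⁻ _ in S, 1 ∂μ :=
        lintegral_mono fun x => ENNReal.ofReal_le_one.mpr (hη01 x).2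
      rw [setLIntegral_one] at hle
      exact (lt_of_le_of_lt hle (measure_lt_top μ S)).ne
    have h2 : ∫⁻ x in S, ENNReal.ofReal (η x) ∂μ + ∫⁻ x in S, ENNReal.ofReal (1 - η x) ∂μ
        = μ S := by
      rw [← lintegral_add_left (hη.ennreal_ofReal)]
      have hone : (fun x => ENNReal.ofReal (η x) + ENNReal.ofReal (1 - η x))
          = fun _ => (1 : ℝ≥0∞) := by
        funext x
        rw [← ENNReal.ofReal_add (hη01 x).1 (by linarith [(hη01 x).2])]
        norm_num
      rw [hone, setLIntegral_one]
    have h3 := hsum S hS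
    rw [hreg S hS] at h3
    rw [← h2] at h3
    exact (ENNReal.add_right_inj hfin).mp h3
  -- real versions
  have real1 : ∀ (S : Set 𝒳), MeasurableSet S →
      (P {ω | X ω ∈ S ∧ Y ω = 1}).toReal = ∫ x in S, η x ∂μ := by
    intro S hS
    rw [hreg S hS, integral_eq_lintegral_of_nonneg_ae (ae_of_all _ fun x => (hη01 x).1)
      hη.aestronglyMeasurable.restrict]
  have realm : ∀ (S : Set 𝒳), MeasurableSet S →
      (P {ω | X ω ∈ S ∧ Y ω = -1}).toReal = ∫ x in S, (1 - η x) ∂μ := by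
    intro S hS
    rw [hregm S hS, integral_eq_lintegral_of_nonneg_ae
      (ae_of_all _ fun x => show (0:ℝ) ≤ 1 - η x by linarith [(hη01 x).2])
      ((measurable_const.sub hη).aestronglyMeasurable.restrict)]
  have realμ : ∀ (S : Set 𝒳), MeasurableSet S →
      (μ S).toReal = (∫ x in S, η x ∂μ) + ∫ x in S, (1 - η x) ∂μ := by
    intro S hS
    rw [← integral_add hηint.integrableOn h1ηint.integrableOn]
    have hone : (fun x => η x + (1 - η x)) = fun _ => (1 : ℝ) := by funext x; ring
    rw [hone, setIntegral_const]
    simp [Measure.real]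
  -- thresholds are nondegenerate
  have ht1pos : 0 < t1 := by
    by_contra h
    push_neg at h
    have hCse : {ω | η (X ω) < t1} = (∅ : Set Ω) := by
      ext ω
      simp only [Set.mem_setOf_eq, Set.mem_empty_iff_false, iff_false, not_lt]
      linarith [(hη01 (X ω)).1]
    have ht1' := ht1
    rw [cond_apply hY1meas, hCse] at ht1'
    simp only [Set.inter_empty, measure_empty, mul_zero] at ht1'
    have := ht1'.symm
    rw [ENNReal.ofReal_eq_zero] at this
    linarith [hα1.1]
  have htm1 : tm < 1 := by
    by_contra h
    push_neg at h
    have hAse : {ω | tm < η (X ω)} = (∅ : Set Ω) := by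
      ext ω
      simp only [Set.mem_setOf_eq, Set.mem_empty_iff_false, iff_false, not_lt]
      linarith [(hη01 (X ω)).2]
    have htm' := htm
    rw [cond_apply hYmmeas, hAse] at htm'
    simp only [Set.inter_empty, measure_empty, mul_zero] at htm'
    have := htm'.symm
    rw [ENNReal.ofReal_eq_zero] at this
    linarith [hαm.1]
  -- constraint sets
  have hset1 : {ω | Y ω = 1} ∩ {ω | Y ω * f (X ω) < -ε} = {ω | X ω ∈ C ∧ Y ω = 1} := by
    ext ω
    simp only [Set.mem_inter_iff, Set.mem_setOf_eq, hCdef]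
    constructor
    · rintro ⟨h1, h2⟩
      rw [h1, one_mul] at h2
      exact ⟨h2, h1⟩
    · rintro ⟨h2, h1⟩
      exact ⟨h1, by rw [h1, one_mul]; exact h2⟩
  have hset1s : {ω | Y ω = 1} ∩ {ω | η (X ω) < t1} = {ω | X ω ∈ Cs ∧ Y ω = 1} := by
    ext ω
    simp only [Set.mem_inter_iff, Set.mem_setOf_eq, hCsdef]
    tauto
  have hsetm : {ω | Y ω = -1} ∩ {ω | Y ω * f (X ω) < -ε} = {ω | X ω ∈ A ∧ Y ω = -1} := by
    ext ω
    simp only [Set.mem_inter_iff, Set.mem_setOf_eq, hAdef]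
    constructor
    · rintro ⟨h1, h2⟩
      rw [h1, neg_one_mul, neg_lt_neg_iff] at h2
      exact ⟨h2, h1⟩
    · rintro ⟨h2, h1⟩
      refine ⟨h1, ?_⟩
      rw [h1, neg_one_mul, neg_lt_neg_iff]
      exact h2
  have hsetms : {ω | Y ω = -1} ∩ {ω | tm < η (X ω)} = {ω | X ω ∈ As ∧ Y ω = -1} := by
    ext ω
    simp only [Set.mem_inter_iff, Set.mem_setOf_eq, hAsdef]
    tauto
  -- constraints in real form
  have hinv0 : (P {ω | Y ω = 1})⁻¹ ≠ 0 := ENNReal.inv_ne_zero.mpr (measure_ne_top _ _)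
  have hinvtop : (P {ω | Y ω = 1})⁻¹ ≠ ∞ := ENNReal.inv_ne_top.mpr hpos1.ne'
  have hinv0m : (P {ω | Y ω = -1})⁻¹ ≠ 0 := ENNReal.inv_ne_zero.mpr (measure_ne_top _ _)
  have hinvtopm : (P {ω | Y ω = -1})⁻¹ ≠ ∞ := ENNReal.inv_ne_top.mpr hposm.ne'
  have ineqC : ∫ x in C, η x ∂μ ≤ ∫ x in Cs, η x ∂μ := by
    rw [← real1 C hC, ← real1 Cs hCs]
    apply ENNReal.toReal_mono (measure_ne_top _ _)
    rw [cond_apply hY1meas] at hfeas1 ht1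
    rw [← ht1] at hfeas1
    have := (ENNReal.mul_le_mul_iff_right hinv0 hinvtop).mp hfeas1
    rwa [hset1, hset1s] at this
  have ineqA : ∫ x in A, (1 - η x) ∂μ ≤ ∫ x in As, (1 - η x) ∂μ := by
    rw [← realm A hA, ← realm As hAs]
    apply ENNReal.toReal_mono (measure_ne_top _ _)
    rw [cond_apply hYmmeas] at hfeasm htm
    rw [← htm] at hfeasm
    have := (ENNReal.mul_le_mul_iff_right hinv0m hinvtopm).mp hfeasm
    rwa [hsetm, hsetms] at this
  -- the sets of fstar
  have hsignb : ∀ r : ℝ, -1 ≤ Real.sign r ∧ Real.sign r ≤ 1 := by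
    intro r
    rcases Real.sign_apply_eq r with h | h | h <;> rw [h] <;> norm_num
  have hfsC : {x | fstar x < -ε} = Cs := by
    ext x
    simp only [Set.mem_setOf_eq, hfstar x, hCsdef]
    split_ifs with h1 h2
    · constructor <;> intro h <;> linarith
    · obtain ⟨hs1, hs2⟩ := hsignb (η x - 1/2)
      constructor <;> intro h <;> nlinarith
    · push_neg at h2
      constructor <;> intro _ <;> [exact h2; linarith]
  have hfsA : {x | ε < fstar x} = As := by
    ext x
    simp only [Set.mem_setOf_eq, hfstar x, hAsdef]
    split_ifs with h1 h2
    · constructor <;> intro _ <;> [exact h1; linarith]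
    · obtain ⟨hs1, hs2⟩ := hsignb (η x - 1/2)
      constructor <;> intro h <;> [nlinarith; exact absurd h h1]
    · constructor <;> intro h <;> [linarith; exact absurd h h1]
  have habs : ∀ g : 𝒳 → ℝ, {x | |g x| ≤ ε} = ({x | ε < g x} ∪ {x | g x < -ε})ᶜ := by
    intro g; ext x
    simp only [Set.mem_setOf_eq, Set.mem_compl_iff, Set.mem_union, abs_le, not_or, not_lt]
    tauto
  -- event decompositions
  have hEvent : ∀ g : 𝒳 → ℝ, {ω | Y ω * g (X ω) < -ε} =
      {ω | X ω ∈ {x | g x < -ε} ∧ Y ω = 1} ∪ {ω | X ω ∈ {x | ε < g x} ∧ Y ω = -1} := by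
    intro g; ext ω
    simp only [Set.mem_union, Set.mem_setOf_eq]
    rcases hYval ω with h | h <;> rw [h]
    · rw [one_mul]
      constructor
      · intro h2; exact Or.inl ⟨h2, rfl⟩
      · rintro (⟨h2, _⟩ | ⟨_, h2⟩)
        · exact h2
        · norm_num at h2
    · rw [neg_one_mul, neg_lt_neg_iff]
      constructor
      · intro h2; exact Or.inr ⟨h2, rfl⟩
      · rintro (⟨_, h2⟩ | ⟨h2, _⟩)
        · norm_num at h2
        · exact h2
  have hdisjAC : Disjoint A C := by
    rw [Set.disjoint_left]
    intro x hx1 hx2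
    simp only [hAdef, Set.mem_setOf_eq] at hx1
    simp only [hCdef, Set.mem_setOf_eq] at hx2
    linarith
  have hdisjACs : Disjoint As Cs := by
    rw [Set.disjoint_left]
    intro x hx1 hx2
    simp only [hAsdef, Set.mem_setOf_eq] at hx1
    simp only [hCsdef, Set.mem_setOf_eq] at hx2
    linarith
  -- risk expressions
  have eq1 : (P {ω | Y ω * fstar (X ω) < -ε}).toReal
      = (∫ x in Cs, η x ∂μ) + ∫ x in As, (1 - η x) ∂μ := by
    rw [hEvent fstar, hfsC, hfsA, measure_union (hdisj _ _) (hmeasm _ hAs),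
      ENNReal.toReal_add (measure_ne_top _ _) (measure_ne_top _ _),
      real1 Cs hCs, realm As hAs]
  have eq2 : (P {ω | Y ω * f (X ω) < -ε}).toReal
      = (∫ x in C, η x ∂μ) + ∫ x in A, (1 - η x) ∂μ := by
    rw [hEvent f]
    rw [show {x | f x < -ε} = C from rfl, show {x | ε < f x} = A from rfl]
    rw [measure_union (hdisj _ _) (hmeasm _ hA),
      ENNReal.toReal_add (measure_ne_top _ _) (measure_ne_top _ _),
      real1 C hC, realm A hA]
  have eqB : ∀ (S T : Set 𝒳), MeasurableSet S → MeasurableSet T → Disjoint S T →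
      (μ ((S ∪ T)ᶜ)).toReal
        = 1 - ((∫ x in S, η x ∂μ) + ∫ x in S, (1 - η x) ∂μ)
            - ((∫ x in T, η x ∂μ) + ∫ x in T, (1 - η x) ∂μ) := by
    intro S T hS hT hd
    rw [prob_compl_eq_one_sub (hS.union hT),
      ENNReal.toReal_sub_of_le prob_le_one ENNReal.one_ne_top,
      measure_union hd hT, ENNReal.toReal_add (measure_ne_top _ _) (measure_ne_top _ _),
      realμ S hS, realμ T hT, ENNReal.toReal_one]
    ring
  have eq3 : (P {ω | |fstar (X ω)| ≤ ε}).toReal = (μ ((As ∪ Cs)ᶜ)).toReal := by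
    have h' : {x | |fstar x| ≤ ε} = (As ∪ Cs)ᶜ := by rw [habs fstar, hfsA, hfsC]
    have h'' : {ω | |fstar (X ω)| ≤ ε} = X ⁻¹' ((As ∪ Cs)ᶜ) := by
      rw [← h']; rfl
    rw [h'', ← hmap _ ((hAs.union hCs).compl)]
  have eq4 : (P {ω | |f (X ω)| ≤ ε}).toReal = (μ ((A ∪ C)ᶜ)).toReal := by
    have h' : {x | |f x| ≤ ε} = (A ∪ C)ᶜ := habs f
    have h'' : {ω | |f (X ω)| ≤ ε} = X ⁻¹' ((A ∪ C)ᶜ) := by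
      rw [← h']; rfl
    rw [h'', ← hmap _ ((hA.union hC).compl)]
  -- splitting of set integrals
  have split : ∀ (S T : Set 𝒳), MeasurableSet S → MeasurableSet T →
      ∀ (h : 𝒳 → ℝ), Integrable h μ →
      ∫ x in S, h x ∂μ = (∫ x in S \ T, h x ∂μ) + ∫ x in S ∩ T, h x ∂μ := by
    intro S T hS hT h hint
    conv_lhs => rw [← Set.diff_union_inter S T]
    rw [setIntegral_union Set.disjoint_sdiff_inter (hS.inter hT)
      hint.integrableOn hint.integrableOn]
  -- key inequality 1 (class +1 side)
  have key1 : (∫ x in Cs, η x ∂μ) - (∫ x in Cs, (1 - η x) ∂μ)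
      ≤ (∫ x in C, η x ∂μ) - ∫ x in C, (1 - η x) ∂μ := by
    set lam : ℝ := (2 * t1 - 1) / t1 with hlamdef
    set g : 𝒳 → ℝ := fun x => (η x - t1) / t1 with hgdef
    have hgint : Integrable g μ := (hηint.sub (integrable_const t1)).div_const t1
    have hD : ∀ (S : Set 𝒳), MeasurableSet S →
        (∫ x in S, η x ∂μ) - (∫ x in S, (1 - η x) ∂μ)
          = (∫ x in S, g x ∂μ) + lam * ∫ x in S, η x ∂μ := by
      intro S hS
      rw [← integral_sub hηint.integrableOn h1ηint.integrableOn, ← integral_const_mul,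
        ← integral_add hgint.integrableOn (hηint.integrableOn.const_mul lam)]
      have hfun : (fun x => η x - (1 - η x)) = fun x => g x + lam * η x := by
        funext x
        simp only [hgdef, hlamdef]
        field_simp
        ring
      rw [hfun]
    have s1 := split C Cs hC hCs g hgint
    have s2 := split Cs C hCs hC g hgint
    rw [Set.inter_comm Cs C] at s2
    have hpos : 0 ≤ ∫ x in C \ Cs, g x ∂μ := by
      apply setIntegral_nonneg (hC.diff hCs)
      intro x hx
      have hxt : ¬ η x < t1 := hx.2
      exact div_nonneg (by linarith [not_lt.mp hxt]) ht1pos.le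
    have hneg : ∫ x in Cs \ C, g x ∂μ ≤ 0 := by
      apply setIntegral_nonpos (hCs.diff hC)
      intro x hx
      have hxt : η x < t1 := hx.1
      exact div_nonpos_of_nonpos_of_nonneg (by linarith) ht1pos.le
    have hlam : lam ≤ 0 := div_nonpos_of_nonpos_of_nonneg (by linarith) ht1pos.le
    have hmul : lam * (∫ x in Cs, η x ∂μ) ≤ lam * ∫ x in C, η x ∂μ := by
      nlinarith [ineqC, hlam]
    rw [hD Cs hCs, hD C hC, s1, s2]
    linarith
  -- key inequality 2 (class -1 side)
  have key2 : (∫ x in A, η x ∂μ) - (∫ x in A, (1 - η x) ∂μ)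
      ≤ (∫ x in As, η x ∂μ) - ∫ x in As, (1 - η x) ∂μ := by
    have htm1' : 0 < 1 - tm := by linarith
    set lam : ℝ := (2 * tm - 1) / (1 - tm) with hlamdef
    set g : 𝒳 → ℝ := fun x => (η x - tm) / (1 - tm) with hgdef
    have hgint : Integrable g μ := (hηint.sub (integrable_const tm)).div_const (1 - tm)
    have hD : ∀ (S : Set 𝒳), MeasurableSet S →
        (∫ x in S, η x ∂μ) - (∫ x in S, (1 - η x) ∂μ)
          = (∫ x in S, g x ∂μ) + lam * ∫ x in S, (1 - η x) ∂μ := by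
      intro S hS
      rw [← integral_sub hηint.integrableOn h1ηint.integrableOn, ← integral_const_mul,
        ← integral_add hgint.integrableOn (h1ηint.integrableOn.const_mul lam)]
      have hfun : (fun x => η x - (1 - η x)) = fun x => g x + lam * (1 - η x) := by
        funext x
        simp only [hgdef, hlamdef]
        field_simp
        ring
      rw [hfun]
    have s1 := split A As hA hAs g hgint
    have s2 := split As A hAs hA g hgint
    rw [Set.inter_comm As A] at s2
    have hneg : ∫ x in A \ As, g x ∂μ ≤ 0 := by
      apply setIntegral_nonpos (hA.diff hAs)
      intro x hx
      have hxt : ¬ tm < η x := hx.2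
      exact div_nonpos_of_nonpos_of_nonneg (by linarith [not_lt.mp hxt]) htm1'.le
    have hpos : 0 ≤ ∫ x in As \ A, g x ∂μ := by
      apply setIntegral_nonneg (hAs.diff hA)
      intro x hx
      have hxt : tm < η x := hx.1
      exact div_nonneg (by linarith) htm1'.le
    have hlam : 0 ≤ lam := div_nonneg (by linarith) htm1'.le
    have hmul : lam * (∫ x in A, (1 - η x) ∂μ) ≤ lam * ∫ x in As, (1 - η x) ∂μ := by
      nlinarith [ineqA, hlam]
    rw [hD As hAs, hD A hA, s1, s2]
    linarith
  -- put everything together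
  rw [eq1, eq2, eq3, eq4, eqB As Cs hAs hCs hdisjACs, eqB A C hA hC hdisjAC]
  linarith [key1, key2]
end

section
/- (Theorem 1, Fisher consistency of the ε-hinge loss.) Fix ε ≥ 0. Under Assumption 1, f* minimizes the ε-hinge risk among all feasible discriminant functions: for every measurable feasible f : 𝒳 → ℝ, one has R_H(f*, ε) ≤ R_H(f, ε), where R_H(f, ε) = E[max(0, 1 + ε − Y f(X))]. -/
open MeasureTheory ProbabilityTheory
open scoped ENNReal

set_option maxHeartbeats 1000000

lemma hinge_core (h ε a b tm t1 v w : ℝ)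
    (hh0 : 0 ≤ h) (hh1 : h ≤ 1) (hε : 0 ≤ ε)
    (ht10 : 0 < t1) (ht1h : t1 ≤ 1/2) (htmh : 1/2 ≤ tm) (htm1 : tm < 1)
    (ha : a * (1 - tm) = 2*tm - 1) (hb : b * t1 = 1 - 2*t1)
    (hw : w = if tm < h then 1+ε else if t1 ≤ h then ε * Real.sign (h - 1/2) else -(1+ε)) :
    h * max 0 (1+ε-w) + (1-h) * max 0 (1+ε+w)
      + (if ε < w then a*(1-h) else 0) + (if w < -ε then b*h else 0)
    ≤ h * max 0 (1+ε-v) + (1-h) * max 0 (1+ε+v)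
      + (if ε < v then a*(1-h) else 0) + (if v < -ε then b*h else 0) := by
  have ha0 : 0 ≤ a := by nlinarith
  have hb0 : 0 ≤ b := by nlinarith
  have hM1 : (0:ℝ) ≤ max 0 (1+ε-v) := le_max_left _ _
  have hM1' : 1+ε-v ≤ max 0 (1+ε-v) := le_max_right _ _
  have hM2 : (0:ℝ) ≤ max 0 (1+ε+v) := le_max_left _ _
  have hM2' : 1+ε+v ≤ max 0 (1+ε+v) := le_max_right _ _
  set M1 := max 0 (1+ε-v) with hM1def
  set M2 := max 0 (1+ε+v) with hM2def
  set A := a * (1-h) with hAdef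
  set B := b * h with hBdef
  have hA0 : 0 ≤ A := mul_nonneg ha0 (by linarith)
  have hB0 : 0 ≤ B := mul_nonneg hb0 hh0
  rcases lt_or_ge tm h with hc | hc
  · -- w = 1 + ε
    rw [if_pos hc] at hw
    subst hw
    have hs : (1:ℝ)/2 < h := lt_of_le_of_lt htmh hc
    have hkey : A ≤ 2*h-1 := by nlinarith [mul_nonneg ha0 (by linarith : (0:ℝ) ≤ h - tm)]
    have e1 : max 0 (1+ε-(1+ε)) = (0:ℝ) := by norm_num
    have e2 : max 0 (1+ε+(1+ε)) = 2+2*ε := by rw [max_eq_right] <;> linarith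
    rw [e1, e2, if_pos (by linarith : ε < 1+ε), if_neg (by linarith : ¬ (1+ε < -ε))]
    clear ha hb ha0 hb0 ht10 ht1h htmh htm1 hc hAdef hBdef hM1def hM2def
    clear_value A B M1 M2
    clear a b tm t1
    split_ifs with i1 i2 i2 <;>
      nlinarith [mul_nonneg hε (by linarith : (0:ℝ) ≤ 2*h-1), hM1', hM2', hM1, hM2]
  · rw [if_neg (not_lt.mpr hc)] at hw
    rcases le_or_gt t1 h with hc2 | hc2
    · -- middle: w = ε * sign (h - 1/2)
      rw [if_pos hc2] at hw
      have hkeyA : 2*h-1 ≤ A := by nlinarith [mul_nonneg ha0 (by linarith : (0:ℝ) ≤ tm - h)]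
      have hkeyB : 1-2*h ≤ B := by nlinarith [mul_nonneg hb0 (by linarith : (0:ℝ) ≤ h - t1)]
      rcases lt_trichotomy h (1/2) with hs | hs | hs
      · rw [Real.sign_of_neg (by linarith : h - 1/2 < 0)] at hw
        subst hw
        have e1 : max 0 (1+ε-ε*(-1)) = 1+2*ε := by rw [max_eq_right] <;> ring_nf <;> linarith
        have e2 : max 0 (1+ε+ε*(-1)) = (1:ℝ) := by rw [max_eq_right] <;> ring_nf <;> linarith
        rw [e1, e2, if_neg (by nlinarith : ¬ (ε < ε*(-1))), if_neg (by nlinarith : ¬ (ε*(-1) < -ε))]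
        clear ha hb ha0 hb0 ht10 ht1h htmh htm1 hc hc2 hkeyA hAdef hBdef hM1def hM2def
        clear_value A B M1 M2
        clear a b tm t1
        split_ifs with i1 i2 i2 <;>
          nlinarith [mul_nonneg hε (by linarith : (0:ℝ) ≤ 1-2*h), hM1', hM2', hM1, hM2]
      · subst hs
        norm_num at hw
        subst hw
        have e1 : max 0 (1+ε-0) = 1+ε := by rw [max_eq_right] <;> linarith
        have e2 : max 0 (1+ε+0) = 1+ε := by rw [max_eq_right] <;> linarith
        rw [e1, e2, if_neg (by linarith : ¬ (ε < 0)), if_neg (by linarith : ¬ ((0:ℝ) < -ε))]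
        split_ifs with i1 i2 i2 <;> linarith
      · rw [Real.sign_of_pos (by linarith : 0 < h - 1/2)] at hw
        subst hw
        have e1 : max 0 (1+ε-ε*1) = (1:ℝ) := by rw [max_eq_right] <;> ring_nf <;> linarith
        have e2 : max 0 (1+ε+ε*1) = 1+2*ε := by rw [max_eq_right] <;> ring_nf <;> linarith
        rw [e1, e2, if_neg (by nlinarith : ¬ (ε < ε*1)), if_neg (by nlinarith : ¬ (ε*1 < -ε))]
        clear ha hb ha0 hb0 ht10 ht1h htmh htm1 hc hc2 hkeyB hAdef hBdef hM1def hM2def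
        clear_value A B M1 M2
        clear a b tm t1
        split_ifs with i1 i2 i2 <;>
          nlinarith [mul_nonneg hε (by linarith : (0:ℝ) ≤ 2*h-1), hM1', hM2', hM1, hM2]
    · -- bottom: w = -(1+ε)
      rw [if_neg (not_le.mpr hc2)] at hw
      subst hw
      have hs : h < 1/2 := lt_of_lt_of_le hc2 ht1h
      have hkey : B ≤ 1-2*h := by nlinarith [mul_nonneg hb0 (by linarith : (0:ℝ) ≤ t1 - h)]
      have e1 : max 0 (1+ε- -(1+ε)) = 2+2*ε := by rw [max_eq_right] <;> linarith
      have e2 : max 0 (1+ε+ -(1+ε)) = (0:ℝ) := max_eq_left (by linarith)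
      rw [e1, e2, if_neg (by linarith : ¬ (ε < -(1+ε))), if_pos (by linarith : -(1+ε) < -ε)]
      clear ha hb ha0 hb0 ht10 ht1h htmh htm1 hc hc2 hAdef hBdef hM1def hM2def
      clear_value A B M1 M2
      clear a b tm t1
      split_ifs with i1 i2 i2 <;>
        nlinarith [mul_nonneg hε (by linarith : (0:ℝ) ≤ 1-2*h), hM1', hM2', hM1, hM2]


lemma measurable_realSign : Measurable Real.sign := by
  have : Real.sign = fun r : ℝ => if r < 0 then (-1:ℝ) else if 0 < r then 1 else 0 := by
    funext r; rfl
  rw [this]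
  exact Measurable.ite (measurableSet_lt measurable_id measurable_const) measurable_const
    (Measurable.ite (measurableSet_lt measurable_const measurable_id) measurable_const
      measurable_const)

lemma ofReal_expr (h u ε a b : ℝ) (hh0 : 0 ≤ h) (hh1 : h ≤ 1) (ha0 : 0 ≤ a) (hb0 : 0 ≤ b) :
    ENNReal.ofReal (h * max 0 (1+ε-u) + (1-h) * max 0 (1+ε+u)
      + (if ε < u then a*(1-h) else 0) + (if u < -ε then b*h else 0))
    = ENNReal.ofReal h * ENNReal.ofReal (max 0 (1+ε-u))
      + ENNReal.ofReal (1-h) * ENNReal.ofReal (max 0 (1+ε+u))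
      + (if ε < u then ENNReal.ofReal a * ENNReal.ofReal (1-h) else 0)
      + (if u < -ε then ENNReal.ofReal b * ENNReal.ofReal h else 0) := by
  have h1 : (0:ℝ) ≤ max 0 (1+ε-u) := le_max_left _ _
  have h2 : (0:ℝ) ≤ max 0 (1+ε+u) := le_max_left _ _
  have h3 : (0:ℝ) ≤ 1 - h := by linarith
  have g1 : (0:ℝ) ≤ h * max 0 (1+ε-u) := mul_nonneg hh0 h1
  have g2 : (0:ℝ) ≤ (1-h) * max 0 (1+ε+u) := mul_nonneg h3 h2
  have g3 : (0:ℝ) ≤ (if ε < u then a*(1-h) else 0) := by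
    split_ifs
    · exact mul_nonneg ha0 h3
    · exact le_refl 0
  have g4 : (0:ℝ) ≤ (if u < -ε then b*h else 0) := by
    split_ifs
    · exact mul_nonneg hb0 hh0
    · exact le_refl 0
  rw [ENNReal.ofReal_add (by linarith) g4, ENNReal.ofReal_add (by linarith) g3,
    ENNReal.ofReal_add g1 g2, ENNReal.ofReal_mul hh0, ENNReal.ofReal_mul h3]
  congr 1
  · congr 1
    split_ifs
    · rw [ENNReal.ofReal_mul ha0]
    · exact ENNReal.ofReal_zero
  · split_ifs
    · rw [ENNReal.ofReal_mul hb0]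
    · exact ENNReal.ofReal_zero


/-- Theorem 1, Fisher consistency of the ε-hinge loss: Under Assumption 1, `f*` minimizes the ε-hinge risk `R_H(f, ε) = E[max(0, 1 + ε − Y f(X))]` among all measurable feasible discriminant functions. -/
theorem fstar_minimizes_hinge_risk
    {𝒳 : Type*} [MeasurableSpace 𝒳]
    {Ω : Type*} [MeasurableSpace Ω] (P : Measure Ω) [IsProbabilityMeasure P]
    (X : Ω → 𝒳) (Y : Ω → ℝ) (hX : Measurable X) (hY : Measurable Y)
    (hYval : ∀ ω, Y ω = 1 ∨ Y ω = -1)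
    (hpos1 : 0 < P {ω | Y ω = 1}) (hposm : 0 < P {ω | Y ω = -1})
    -- η is a measurable version of the regression function x ↦ P(Y = 1 ∣ X = x)
    (η : 𝒳 → ℝ) (hη : Measurable η) (hη01 : ∀ x, η x ∈ Set.Icc (0 : ℝ) 1)
    (hreg : ∀ A : Set 𝒳, MeasurableSet A →
      P {ω | X ω ∈ A ∧ Y ω = 1} = ∫⁻ x in A, ENNReal.ofReal (η x) ∂(P.map X))
    -- noncoverage levels and thresholds
    (αm α1 : ℝ) (hαm : αm ∈ Set.Ioo (0 : ℝ) 1) (hα1 : α1 ∈ Set.Ioo (0 : ℝ) 1)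
    (tm t1 : ℝ)
    (htm : P[|{ω | Y ω = -1}] {ω | tm < η (X ω)} = ENNReal.ofReal αm)
    (ht1 : P[|{ω | Y ω = 1}] {ω | η (X ω) < t1} = ENNReal.ofReal α1)
    -- Assumption 1: the distribution of η(X) is atomless under both class-conditional
    -- distributions, and t1 ≤ 1/2 ≤ tm
    (hatomlessm : ∀ t : ℝ, P[|{ω | Y ω = -1}] {ω | η (X ω) = t} = 0)
    (hatomless1 : ∀ t : ℝ, P[|{ω | Y ω = 1}] {ω | η (X ω) = t} = 0)
    (ht1half : t1 ≤ 1 / 2) (hhalftm : 1 / 2 ≤ tm)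
    (ε : ℝ) (hε : 0 ≤ ε)
    -- the Bayes-type rule f*
    (fstar : 𝒳 → ℝ)
    (hfstar : ∀ x, fstar x =
      if tm < η x then 1 + ε
      else if t1 ≤ η x then ε * Real.sign (η x - 1 / 2)
      else -(1 + ε))
    -- an arbitrary measurable feasible competitor f
    (f : 𝒳 → ℝ) (hf : Measurable f)
    (hfeasm : P[|{ω | Y ω = -1}] {ω | Y ω * f (X ω) < -ε} ≤ ENNReal.ofReal αm)
    (hfeas1 : P[|{ω | Y ω = 1}] {ω | Y ω * f (X ω) < -ε} ≤ ENNReal.ofReal α1) :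
    ∫⁻ ω, ENNReal.ofReal (max 0 (1 + ε - Y ω * fstar (X ω))) ∂P
    ≤ ∫⁻ ω, ENNReal.ofReal (max 0 (1 + ε - Y ω * f (X ω))) ∂P := by
  classical
  set μ := P.map X with hμdef
  set S1 : Set Ω := {ω | Y ω = 1} with hS1def
  set Sm : Set Ω := {ω | Y ω = -1} with hSmdef
  have hS1m : MeasurableSet S1 := hY (measurableSet_singleton 1)
  have hSmm : MeasurableSet Sm := hY (measurableSet_singleton (-1))
  have hcompl : S1ᶜ = Sm := by
    ext ω
    simp only [Set.mem_compl_iff, Set.mem_setOf_eq, hS1def, hSmdef]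
    rcases hYval ω with h | h <;> simp [h] <;> norm_num
  -- measurability of fstar
  have hfstar_eq : fstar = fun x =>
      if tm < η x then 1 + ε else if t1 ≤ η x then ε * Real.sign (η x - 1/2) else -(1+ε) :=
    funext hfstar
  have hF : Measurable fstar := by
    rw [hfstar_eq]
    refine Measurable.ite (measurableSet_lt measurable_const hη) measurable_const ?_
    refine Measurable.ite (measurableSet_le measurable_const hη) ?_ measurable_const
    exact (measurable_realSign.comp (hη.sub measurable_const)).const_mul ε
  -- class-conditional densities
  have hkey1 : ∀ A : Set 𝒳, MeasurableSet A →
      P (X ⁻¹' A ∩ S1) = ∫⁻ x in A, ENNReal.ofReal (η x) ∂μ := by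
    intro A hA
    rw [← hreg A hA]
    congr 1
  have hμA : ∀ A : Set 𝒳, MeasurableSet A → μ A = P (X ⁻¹' A) := fun A hA =>
    Measure.map_apply hX hA
  have hkeym : ∀ A : Set 𝒳, MeasurableSet A →
      P (X ⁻¹' A ∩ Sm) = ∫⁻ x in A, ENNReal.ofReal (1 - η x) ∂μ := by
    intro A hA
    have hsplit : P (X ⁻¹' A ∩ S1) + P (X ⁻¹' A ∩ Sm) = μ A := by
      rw [hμA A hA, ← hcompl, ← measure_inter_add_diff (X ⁻¹' A) hS1m, Set.diff_eq]
    have hdens : ∫⁻ x in A, ENNReal.ofReal (η x) ∂μ + ∫⁻ x in A, ENNReal.ofReal (1 - η x) ∂μ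
        = μ A := by
      rw [← lintegral_add_left (by fun_prop) _]
      rw [show (fun x => ENNReal.ofReal (η x) + ENNReal.ofReal (1 - η x)) = fun _ => (1:ℝ≥0∞) by
        funext x
        rw [← ENNReal.ofReal_add (hη01 x).1 (by linarith [(hη01 x).2])]
        norm_num]
      exact setLIntegral_one A
    have hfin : ∫⁻ x in A, ENNReal.ofReal (η x) ∂μ ≠ ∞ := by
      refine ne_top_of_le_ne_top (measure_ne_top μ A) ?_
      rw [← hdens]; exact le_self_add
    have := hsplit.trans hdens.symm
    rw [hkey1 A hA] at this
    exact (ENNReal.cancel_of_ne hfin).inj.mp this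
  -- transfer lemmas
  have htrans1 : ∀ g : 𝒳 → ℝ≥0∞, Measurable g →
      ∫⁻ ω in S1, g (X ω) ∂P = ∫⁻ x, ENNReal.ofReal (η x) * g x ∂μ := by
    intro g hg
    have hmap : (P.restrict S1).map X = μ.withDensity (fun x => ENNReal.ofReal (η x)) := by
      ext A hA
      rw [Measure.map_apply hX hA, Measure.restrict_apply (hX hA), withDensity_apply _ hA]
      exact hkey1 A hA
    calc ∫⁻ ω in S1, g (X ω) ∂P = ∫⁻ x, g x ∂((P.restrict S1).map X) :=
          (lintegral_map hg hX).symm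
      _ = ∫⁻ x, ENNReal.ofReal (η x) * g x ∂μ := by
          rw [hmap, lintegral_withDensity_eq_lintegral_mul μ (by fun_prop) hg]
          rfl
  have htransm : ∀ g : 𝒳 → ℝ≥0∞, Measurable g →
      ∫⁻ ω in Sm, g (X ω) ∂P = ∫⁻ x, ENNReal.ofReal (1 - η x) * g x ∂μ := by
    intro g hg
    have hmap : (P.restrict Sm).map X = μ.withDensity (fun x => ENNReal.ofReal (1 - η x)) := by
      ext A hA
      rw [Measure.map_apply hX hA, Measure.restrict_apply (hX hA), withDensity_apply _ hA]
      exact hkeym A hA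
    calc ∫⁻ ω in Sm, g (X ω) ∂P = ∫⁻ x, g x ∂((P.restrict Sm).map X) :=
          (lintegral_map hg hX).symm
      _ = ∫⁻ x, ENNReal.ofReal (1 - η x) * g x ∂μ := by
          rw [hmap, lintegral_withDensity_eq_lintegral_mul μ (by fun_prop) hg]
          rfl
  -- hinge risk decomposition
  have hinge : ∀ g : 𝒳 → ℝ, Measurable g →
      ∫⁻ ω, ENNReal.ofReal (max 0 (1 + ε - Y ω * g (X ω))) ∂P
        = ∫⁻ x, ENNReal.ofReal (η x) * ENNReal.ofReal (max 0 (1 + ε - g x)) ∂μ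
          + ∫⁻ x, ENNReal.ofReal (1 - η x) * ENNReal.ofReal (max 0 (1 + ε + g x)) ∂μ := by
    intro g hg
    rw [← lintegral_add_compl (fun ω => ENNReal.ofReal (max 0 (1 + ε - Y ω * g (X ω)))) hS1m]
    congr 1
    · rw [setLIntegral_congr_fun (g := fun ω => ENNReal.ofReal (max 0 (1 + ε - g (X ω)))) hS1m
        (fun ω (hω : Y ω = 1) => by rw [hω]; norm_num)]
      exact htrans1 (fun x => ENNReal.ofReal (max 0 (1 + ε - g x))) (by fun_prop)
    · rw [hcompl, setLIntegral_congr_fun (g := fun ω => ENNReal.ofReal (max 0 (1 + ε + g (X ω))))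
        hSmm (fun ω (hω : Y ω = -1) => by rw [hω]; ring_nf)]
      exact htransm (fun x => ENNReal.ofReal (max 0 (1 + ε + g x))) (by fun_prop)
  -- conditional probability conversions
  have hmul : ∀ (S T : Set Ω), MeasurableSet S → P S ≠ 0 → P (S ∩ T) = P S * P[|S] T := by
    intro S T hS h0
    rw [cond_apply hS, ← mul_assoc, ENNReal.mul_inv_cancel h0 (measure_ne_top P S), one_mul]
  have hEm : ∫⁻ x in {x | tm < η x}, ENNReal.ofReal (1 - η x) ∂μ
      = P Sm * ENNReal.ofReal αm := by
    calc ∫⁻ x in {x | tm < η x}, ENNReal.ofReal (1 - η x) ∂μ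
        = P (X ⁻¹' {x | tm < η x} ∩ Sm) :=
          (hkeym _ (measurableSet_lt measurable_const hη)).symm
      _ = P (Sm ∩ {ω | tm < η (X ω)}) := by rw [Set.inter_comm]; rfl
      _ = P Sm * P[|Sm] {ω | tm < η (X ω)} := hmul _ _ hSmm hposm.ne'
      _ = P Sm * ENNReal.ofReal αm := by rw [htm]
  have hE1 : ∫⁻ x in {x | η x < t1}, ENNReal.ofReal (η x) ∂μ
      = P S1 * ENNReal.ofReal α1 := by
    calc ∫⁻ x in {x | η x < t1}, ENNReal.ofReal (η x) ∂μ
        = P (X ⁻¹' {x | η x < t1} ∩ S1) :=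
          (hkey1 _ (measurableSet_lt hη measurable_const)).symm
      _ = P (S1 ∩ {ω | η (X ω) < t1}) := by rw [Set.inter_comm]; rfl
      _ = P S1 * P[|S1] {ω | η (X ω) < t1} := hmul _ _ hS1m hpos1.ne'
      _ = P S1 * ENNReal.ofReal α1 := by rw [ht1]
  have hFm : ∫⁻ x in {x | ε < f x}, ENNReal.ofReal (1 - η x) ∂μ
      ≤ P Sm * ENNReal.ofReal αm := by
    have hsetm : X ⁻¹' {x | ε < f x} ∩ Sm = Sm ∩ {ω | Y ω * f (X ω) < -ε} := by
      ext ω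
      simp only [Set.mem_inter_iff, Set.mem_preimage, Set.mem_setOf_eq, hSmdef]
      constructor
      · rintro ⟨h1, h2⟩
        rw [h2]
        exact ⟨rfl, by linarith⟩
      · rintro ⟨h2, h1⟩
        rw [h2] at h1
        exact ⟨by linarith, h2⟩
    calc ∫⁻ x in {x | ε < f x}, ENNReal.ofReal (1 - η x) ∂μ
        = P (X ⁻¹' {x | ε < f x} ∩ Sm) :=
          (hkeym _ (measurableSet_lt measurable_const hf)).symm
      _ = P (Sm ∩ {ω | Y ω * f (X ω) < -ε}) := by rw [hsetm]
      _ = P Sm * P[|Sm] {ω | Y ω * f (X ω) < -ε} := hmul _ _ hSmm hposm.ne'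
      _ ≤ P Sm * ENNReal.ofReal αm := mul_le_mul_right hfeasm _
  have hF1 : ∫⁻ x in {x | f x < -ε}, ENNReal.ofReal (η x) ∂μ
      ≤ P S1 * ENNReal.ofReal α1 := by
    have hset1' : X ⁻¹' {x | f x < -ε} ∩ S1 = S1 ∩ {ω | Y ω * f (X ω) < -ε} := by
      ext ω
      simp only [Set.mem_inter_iff, Set.mem_preimage, Set.mem_setOf_eq, hS1def]
      constructor
      · rintro ⟨h1, h2⟩
        rw [h2]
        exact ⟨rfl, by linarith⟩
      · rintro ⟨h2, h1⟩
        rw [h2] at h1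
        exact ⟨by linarith, h2⟩
    calc ∫⁻ x in {x | f x < -ε}, ENNReal.ofReal (η x) ∂μ
        = P (X ⁻¹' {x | f x < -ε} ∩ S1) :=
          (hkey1 _ (measurableSet_lt hf measurable_const)).symm
      _ = P (S1 ∩ {ω | Y ω * f (X ω) < -ε}) := by rw [hset1']
      _ = P S1 * P[|S1] {ω | Y ω * f (X ω) < -ε} := hmul _ _ hS1m hpos1.ne'
      _ ≤ P S1 * ENNReal.ofReal α1 := mul_le_mul_right hfeas1 _
  -- thresholds are nondegenerate
  have htm1 : tm < 1 := by
    by_contra hcon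
    push_neg at hcon
    have hem : {ω | tm < η (X ω)} = (∅ : Set Ω) := by
      ext ω
      simp only [Set.mem_setOf_eq, Set.mem_empty_iff_false, iff_false, not_lt]
      exact le_trans (hη01 (X ω)).2 hcon
    rw [hem, measure_empty] at htm
    exact absurd htm.symm (ne_of_gt (ENNReal.ofReal_pos.mpr hαm.1))
  have ht10 : 0 < t1 := by
    by_contra hcon
    push_neg at hcon
    have hem : {ω | η (X ω) < t1} = (∅ : Set Ω) := by
      ext ω
      simp only [Set.mem_setOf_eq, Set.mem_empty_iff_false, iff_false, not_lt]
      exact le_trans hcon (hη01 (X ω)).1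
    rw [hem, measure_empty] at ht1
    exact absurd ht1.symm (ne_of_gt (ENNReal.ofReal_pos.mpr hα1.1))
  -- Lagrange multipliers
  set a : ℝ := (2*tm-1)/(1-tm) with hadef
  set b : ℝ := (1-2*t1)/t1 with hbdef
  have haa : a * (1-tm) = 2*tm-1 := div_mul_cancel₀ _ (by linarith)
  have hbb : b * t1 = 1-2*t1 := div_mul_cancel₀ _ (by linarith)
  have ha0 : 0 ≤ a := div_nonneg (by linarith) (by linarith)
  have hb0 : 0 ≤ b := div_nonneg (by linarith) (by linarith)
  -- fstar level sets
  have hsetS1 : {x | ε < fstar x} = {x | tm < η x} := by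
    ext x
    simp only [Set.mem_setOf_eq, hfstar x]
    split_ifs with h1 h2
    · exact iff_of_true (by linarith) h1
    · refine iff_of_false ?_ h1
      rcases Real.sign_apply_eq (η x - 1/2) with hs | hs | hs <;> rw [hs] <;> nlinarith
    · exact iff_of_false (by linarith) h1
  have hsetS2 : {x | fstar x < -ε} = {x | η x < t1} := by
    ext x
    simp only [Set.mem_setOf_eq, hfstar x]
    split_ifs with h1 h2
    · exact iff_of_false (by linarith) (fun hcon => absurd h1 (by push_neg; linarith))
    · refine iff_of_false ?_ (not_lt.mpr h2)
      rcases Real.sign_apply_eq (η x - 1/2) with hs | hs | hs <;> rw [hs] <;> nlinarith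
    · exact iff_of_true (by linarith) (lt_of_not_ge h2)
  -- pointwise comparison in ℝ≥0∞
  have hpoint : ∀ x,
      ENNReal.ofReal (η x) * ENNReal.ofReal (max 0 (1+ε - fstar x))
        + ENNReal.ofReal (1 - η x) * ENNReal.ofReal (max 0 (1+ε + fstar x))
        + (if ε < fstar x then ENNReal.ofReal a * ENNReal.ofReal (1-η x) else 0)
        + (if fstar x < -ε then ENNReal.ofReal b * ENNReal.ofReal (η x) else 0)
      ≤ ENNReal.ofReal (η x) * ENNReal.ofReal (max 0 (1+ε - f x))
        + ENNReal.ofReal (1 - η x) * ENNReal.ofReal (max 0 (1+ε + f x))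
        + (if ε < f x then ENNReal.ofReal a * ENNReal.ofReal (1-η x) else 0)
        + (if f x < -ε then ENNReal.ofReal b * ENNReal.ofReal (η x) else 0) := by
    intro x
    rw [← ofReal_expr (η x) (fstar x) ε a b (hη01 x).1 (hη01 x).2 ha0 hb0,
        ← ofReal_expr (η x) (f x) ε a b (hη01 x).1 (hη01 x).2 ha0 hb0]
    exact ENNReal.ofReal_le_ofReal (hinge_core (η x) ε a b tm t1 (f x) (fstar x)
      (hη01 x).1 (hη01 x).2 hε ht10 ht1half hhalftm htm1 haa hbb (hfstar x))
  -- splitting the integral of the Lagrangian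
  have hsplit : ∀ g : 𝒳 → ℝ, Measurable g →
      ∫⁻ x, (ENNReal.ofReal (η x) * ENNReal.ofReal (max 0 (1+ε - g x))
        + ENNReal.ofReal (1 - η x) * ENNReal.ofReal (max 0 (1+ε + g x))
        + (if ε < g x then ENNReal.ofReal a * ENNReal.ofReal (1-η x) else 0)
        + (if g x < -ε then ENNReal.ofReal b * ENNReal.ofReal (η x) else 0)) ∂μ
      = (∫⁻ x, ENNReal.ofReal (η x) * ENNReal.ofReal (max 0 (1+ε - g x)) ∂μ)
        + (∫⁻ x, ENNReal.ofReal (1 - η x) * ENNReal.ofReal (max 0 (1+ε + g x)) ∂μ)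
        + ENNReal.ofReal a * ∫⁻ x in {x | ε < g x}, ENNReal.ofReal (1-η x) ∂μ
        + ENNReal.ofReal b * ∫⁻ x in {x | g x < -ε}, ENNReal.ofReal (η x) ∂μ := by
    intro g hg
    have m2 : Measurable fun x =>
        ENNReal.ofReal (1-η x) * ENNReal.ofReal (max 0 (1+ε + g x)) := by fun_prop
    have ms3 : MeasurableSet {x | ε < g x} := measurableSet_lt measurable_const hg
    have ms4 : MeasurableSet {x | g x < -ε} := measurableSet_lt hg measurable_const
    have m3 : Measurable fun x =>
        (if ε < g x then ENNReal.ofReal a * ENNReal.ofReal (1-η x) else 0) :=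
      Measurable.ite ms3 (by fun_prop) measurable_const
    have m4 : Measurable fun x =>
        (if g x < -ε then ENNReal.ofReal b * ENNReal.ofReal (η x) else 0) :=
      Measurable.ite ms4 (by fun_prop) measurable_const
    rw [lintegral_add_right _ m4, lintegral_add_right _ m3, lintegral_add_right _ m2]
    congr 1
    congr 1
    · have heq : (fun x => if ε < g x then ENNReal.ofReal a * ENNReal.ofReal (1-η x) else 0)
          = fun x => {x | ε < g x}.indicator
              (fun x => ENNReal.ofReal a * ENNReal.ofReal (1-η x)) x := by
        funext x
        rw [Set.indicator_apply]
        rfl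
      rw [heq, lintegral_indicator ms3]
      exact lintegral_const_mul (ENNReal.ofReal a) (by fun_prop)
    · have heq : (fun x => if g x < -ε then ENNReal.ofReal b * ENNReal.ofReal (η x) else 0)
          = fun x => {x | g x < -ε}.indicator
              (fun x => ENNReal.ofReal b * ENNReal.ofReal (η x)) x := by
        funext x
        rw [Set.indicator_apply]
        rfl
      rw [heq, lintegral_indicator ms4]
      exact lintegral_const_mul (ENNReal.ofReal b) (by fun_prop)
  -- put it together
  have hmono := lintegral_mono (μ := μ) hpoint
  rw [hsplit fstar hF, hsplit f hf, hsetS1, hsetS2, hEm, hE1] at hmono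
  set C := ENNReal.ofReal a * (P Sm * ENNReal.ofReal αm)
    + ENNReal.ofReal b * (P S1 * ENNReal.ofReal α1) with hCdef
  have hCne : C ≠ ⊤ := by
    rw [hCdef]
    exact ENNReal.add_ne_top.mpr
      ⟨ENNReal.mul_ne_top ENNReal.ofReal_ne_top
        (ENNReal.mul_ne_top (measure_ne_top P Sm) ENNReal.ofReal_ne_top),
       ENNReal.mul_ne_top ENNReal.ofReal_ne_top
        (ENNReal.mul_ne_top (measure_ne_top P S1) ENNReal.ofReal_ne_top)⟩
  have hchain : ((∫⁻ x, ENNReal.ofReal (η x) * ENNReal.ofReal (max 0 (1+ε - fstar x)) ∂μ)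
        + (∫⁻ x, ENNReal.ofReal (1-η x) * ENNReal.ofReal (max 0 (1+ε + fstar x)) ∂μ)) + C
      ≤ ((∫⁻ x, ENNReal.ofReal (η x) * ENNReal.ofReal (max 0 (1+ε - f x)) ∂μ)
        + (∫⁻ x, ENNReal.ofReal (1-η x) * ENNReal.ofReal (max 0 (1+ε + f x)) ∂μ)) + C := by
    rw [hCdef, ← add_assoc, ← add_assoc]
    refine le_trans hmono ?_
    exact add_le_add (add_le_add le_rfl (mul_le_mul_right hFm _)) (mul_le_mul_right hF1 _)
  have hfinal := (ENNReal.add_le_add_iff_right hCne).mp hchain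
  rw [hinge fstar hF, hinge f hf]
  exact hfinal
end

section
/- Fix ε ≥ 0. Under Assumptions 1 and 2 (with 0 < c ≤ 1/2), f* minimizes the modified risk (1/2 − c)·P(|f(X)| ≤ ε) + P(Y f(X) < −ε) among all feasible discriminant functions: for every measurable feasible f : 𝒳 → ℝ, (1/2 − c)·P(|f*(X)| ≤ ε) + P(Y f*(X) < −ε) ≤ (1/2 − c)·P(|f(X)| ≤ ε) + P(Y f(X) < −ε). -/
open MeasureTheory ProbabilityTheory
open scoped ENNReal

set_option maxHeartbeats 1600000

/-- Under Assumptions 1 and 2 (with 0 < c ≤ 1/2), `f*` minimizes the modified risk `(1/2 − c)·P(|f(X)| ≤ ε) + P(Y f(X) < −ε)` among all measurable feasible discriminant functions. -/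
theorem fstar_minimizes_modified_risk
    {𝒳 : Type*} [MeasurableSpace 𝒳]
    {Ω : Type*} [MeasurableSpace Ω] (P : Measure Ω) [IsProbabilityMeasure P]
    (X : Ω → 𝒳) (Y : Ω → ℝ) (hX : Measurable X) (hY : Measurable Y)
    (hYval : ∀ ω, Y ω = 1 ∨ Y ω = -1)
    (hpos1 : 0 < P {ω | Y ω = 1}) (hposm : 0 < P {ω | Y ω = -1})
    -- η is a measurable version of the regression function x ↦ P(Y = 1 ∣ X = x)
    (η : 𝒳 → ℝ) (hη : Measurable η) (hη01 : ∀ x, η x ∈ Set.Icc (0 : ℝ) 1)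
    (hreg : ∀ A : Set 𝒳, MeasurableSet A →
      P {ω | X ω ∈ A ∧ Y ω = 1} = ∫⁻ x in A, ENNReal.ofReal (η x) ∂(P.map X))
    -- noncoverage levels and thresholds
    (αm α1 : ℝ) (hαm : αm ∈ Set.Ioo (0 : ℝ) 1) (hα1 : α1 ∈ Set.Ioo (0 : ℝ) 1)
    (tm t1 : ℝ)
    (htm : P[|{ω | Y ω = -1}] {ω | tm < η (X ω)} = ENNReal.ofReal αm)
    (ht1 : P[|{ω | Y ω = 1}] {ω | η (X ω) < t1} = ENNReal.ofReal α1)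
    -- Assumption 1: the distribution of η(X) is atomless under both class-conditional
    -- distributions, and t1 ≤ 1/2 ≤ tm
    (hatomlessm : ∀ t : ℝ, P[|{ω | Y ω = -1}] {ω | η (X ω) = t} = 0)
    (hatomless1 : ∀ t : ℝ, P[|{ω | Y ω = 1}] {ω | η (X ω) = t} = 0)
    (ht1half : t1 ≤ 1 / 2) (hhalftm : 1 / 2 ≤ tm)
    -- Assumption 2
    (c : ℝ) (hc : 0 < c) (hctm : c ≤ tm - 1 / 2) (hct1 : c ≤ 1 / 2 - t1)    (hchalf : c ≤ 1 / 2)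
    (ε : ℝ) (hε : 0 ≤ ε)
    -- the Bayes-type rule f*
    (fstar : 𝒳 → ℝ)
    (hfstar : ∀ x, fstar x =
      if tm < η x then 1 + ε
      else if t1 ≤ η x then ε * Real.sign (η x - 1 / 2)
      else -(1 + ε))
    -- an arbitrary measurable feasible competitor f
    (f : 𝒳 → ℝ) (hf : Measurable f)
    (hfeasm : P[|{ω | Y ω = -1}] {ω | Y ω * f (X ω) < -ε} ≤ ENNReal.ofReal αm)
    (hfeas1 : P[|{ω | Y ω = 1}] {ω | Y ω * f (X ω) < -ε} ≤ ENNReal.ofReal α1) :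
    (1 / 2 - c) * (P {ω | |fstar (X ω)| ≤ ε}).toReal
      + (P {ω | Y ω * fstar (X ω) < -ε}).toReal
    ≤ (1 / 2 - c) * (P {ω | |f (X ω)| ≤ ε}).toReal
      + (P {ω | Y ω * f (X ω) < -ε}).toReal := by
    classical
  have hη0 : ∀ x, 0 ≤ η x := fun x => (hη01 x).1
  have hη1 : ∀ x, η x ≤ 1 := fun x => (hη01 x).2
  set μ : Measure 𝒳 := P.map X with hμdef
  haveI : IsProbabilityMeasure μ := Measure.isProbabilityMeasure_map hX.aemeasurable
  have hmY1 : MeasurableSet {ω | Y ω = 1} := hY (measurableSet_singleton 1)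
  have hmYm : MeasurableSet {ω | Y ω = -1} := hY (measurableSet_singleton (-1))
  have hp1ne : P {ω | Y ω = 1} ≠ 0 := ne_of_gt hpos1
  have hpmne : P {ω | Y ω = -1} ≠ 0 := ne_of_gt hposm
  -- convert conditional probabilities to joint probabilities
  have hcond_conv : ∀ (s t : Set Ω), MeasurableSet s → P s ≠ 0 →
      P (s ∩ t) = (P[|s]) t * P s := by
    intro s t hs hs0
    rw [cond_apply hs P t, mul_comm ((P s)⁻¹) (P (s ∩ t)), mul_assoc,
      ENNReal.inv_mul_cancel hs0 (measure_ne_top _ _), mul_one]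
  -- thresholds are in the interior
  have ht1pos : 0 < t1 := by
    by_contra h
    push_neg at h
    have hempty : {ω | η (X ω) < t1} = (∅ : Set Ω) := by
      ext ω
      simp only [Set.mem_setOf_eq, Set.mem_empty_iff_false, iff_false, not_lt]
      exact le_trans h (hη0 (X ω))
    rw [hempty, measure_empty] at ht1
    exact absurd ht1.symm (ne_of_gt (ENNReal.ofReal_pos.mpr hα1.1))
  have htm1 : tm < 1 := by
    by_contra h
    push_neg at h
    have hempty : {ω | tm < η (X ω)} = (∅ : Set Ω) := by
      ext ω
      simp only [Set.mem_setOf_eq, Set.mem_empty_iff_false, iff_false, not_lt]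
      exact le_trans (hη1 (X ω)) h
    rw [hempty, measure_empty] at htm
    exact absurd htm.symm (ne_of_gt (ENNReal.ofReal_pos.mpr hαm.1))
  have ht1tm : t1 ≤ tm := le_trans ht1half hhalftm
  set L : ℝ := 1 / 2 - c with hLdef
  have hLt1 : t1 ≤ L := by rw [hLdef]; linarith
  have hLtm : 1 - tm ≤ L := by rw [hLdef]; linarith
  have hLpos : 0 < L := lt_of_lt_of_le ht1pos hLt1
  have htm1' : 0 < 1 - tm := by linarith
  set a1 : ℝ := L / t1 with ha1def
  set am : ℝ := L / (1 - tm) with hamdef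
  have ha1t1 : a1 * t1 = L := div_mul_cancel₀ _ (ne_of_gt ht1pos)
  have hamtm : am * (1 - tm) = L := div_mul_cancel₀ _ (ne_of_gt htm1')
  have ha1ge : 1 ≤ a1 := (one_le_div ht1pos).mpr hLt1
  have hamge : 1 ≤ am := (one_le_div htm1').mpr hLtm
  have ha1pos : (0:ℝ) ≤ a1 := by linarith
  have hampos : (0:ℝ) ≤ am := by linarith
  -- properties of Real.sign
  have hsign : ∀ d : ℝ, Real.sign d = -1 ∨ Real.sign d = 0 ∨ Real.sign d = 1 := by
    intro d
    rcases lt_trichotomy d 0 with h | h | h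
    · exact Or.inl (Real.sign_of_neg h)
    · refine Or.inr (Or.inl ?_); rw [h]; exact Real.sign_zero
    · exact Or.inr (Or.inr (Real.sign_of_pos h))
  have habs_sign : ∀ d : ℝ, |ε * Real.sign d| ≤ ε := by
    intro d
    have h1 : |Real.sign d| ≤ 1 := by rcases hsign d with h | h | h <;> rw [h] <;> norm_num
    calc |ε * Real.sign d| = ε * |Real.sign d| := by rw [abs_mul, abs_of_nonneg hε]
    _ ≤ ε * 1 := mul_le_mul_of_nonneg_left h1 hε
    _ = ε := mul_one ε
  -- region descriptions of fstar
  have hS1 : ∀ x, fstar x < -ε ↔ η x < t1 := by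
    intro x
    rw [hfstar x]
    split_ifs with h1 h2
    · constructor
      · intro h; linarith
      · intro h; linarith
    · constructor
      · intro h
        have := habs_sign (η x - 1 / 2)
        rw [abs_le] at this
        linarith [this.1]
      · intro h; linarith
    · push_neg at h2
      constructor
      · intro _; exact h2
      · intro _; linarith
  have hS2 : ∀ x, ε < fstar x ↔ tm < η x := by
    intro x
    rw [hfstar x]
    split_ifs with h1 h2
    · constructor
      · intro _; exact h1
      · intro _; linarith
    · constructor
      · intro h
        have := habs_sign (η x - 1 / 2)
        rw [abs_le] at this
        linarith [this.2]
      · intro h; exact absurd h h1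
    · push_neg at h1 h2
      constructor
      · intro h; linarith
      · intro h; linarith
  have hS3 : ∀ x, |fstar x| ≤ ε ↔ (t1 ≤ η x ∧ η x ≤ tm) := by
    intro x
    rw [hfstar x]
    split_ifs with h1 h2
    · rw [abs_of_nonneg (by linarith : (0:ℝ) ≤ 1 + ε)]
      constructor
      · intro h; linarith
      · intro h; linarith [h.2]
    · push_neg at h1
      constructor
      · intro _; exact ⟨h2, h1⟩
      · intro _; exact habs_sign (η x - 1 / 2)
    · push_neg at h1 h2
      rw [abs_of_nonpos (by linarith : -(1 + ε) ≤ 0)]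
      constructor
      · intro h; linarith
      · intro h; linarith [h.1]
  -- regression identity for the negative class
  have hregm : ∀ B : Set 𝒳, MeasurableSet B →
      P {ω | X ω ∈ B ∧ Y ω = -1} = ∫⁻ x in B, ENNReal.ofReal (1 - η x) ∂μ := by
    intro B hB
    have hm1 : MeasurableSet {ω | X ω ∈ B ∧ Y ω = 1} := (hX hB).inter hmY1
    have hm2 : MeasurableSet {ω | X ω ∈ B ∧ Y ω = -1} := (hX hB).inter hmYm
    have hdisj : Disjoint {ω | X ω ∈ B ∧ Y ω = 1} {ω | X ω ∈ B ∧ Y ω = -1} := by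
      rw [Set.disjoint_left]
      rintro ω ⟨_, h1⟩ ⟨_, h2⟩
      rw [h1] at h2
      norm_num at h2
    have hsplitB : (X ⁻¹' B) = {ω | X ω ∈ B ∧ Y ω = 1} ∪ {ω | X ω ∈ B ∧ Y ω = -1} := by
      ext ω
      simp only [Set.mem_preimage, Set.mem_union, Set.mem_setOf_eq]
      rcases hYval ω with h | h
      · constructor
        · intro hb; exact Or.inl ⟨hb, h⟩
        · rintro (⟨hb, _⟩ | ⟨hb, _⟩) <;> exact hb
      · constructor
        · intro hb; exact Or.inr ⟨hb, h⟩
        · rintro (⟨hb, _⟩ | ⟨hb, _⟩) <;> exact hb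
    have hadd : μ B = P {ω | X ω ∈ B ∧ Y ω = 1} + P {ω | X ω ∈ B ∧ Y ω = -1} := by
      rw [hμdef, Measure.map_apply hX hB, hsplitB, measure_union hdisj hm2]
    have hone : (∫⁻ x in B, ENNReal.ofReal (η x) ∂μ)
        + (∫⁻ x in B, ENNReal.ofReal (1 - η x) ∂μ) = μ B := by
      rw [← lintegral_add_left (hη.ennreal_ofReal), ← setLIntegral_one B]
      refine setLIntegral_congr_fun hB (fun x _ => ?_)
      rw [← ENNReal.ofReal_add (hη0 x) (by linarith [hη1 x] : (0:ℝ) ≤ 1 - η x)]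
      norm_num
    have hItop : (∫⁻ x in B, ENNReal.ofReal (η x) ∂μ) ≠ ⊤ := by
      rw [← hreg B hB]
      exact measure_ne_top _ _
    have hfin : (∫⁻ x in B, ENNReal.ofReal (η x) ∂μ)
        + (∫⁻ x in B, ENNReal.ofReal (1 - η x) ∂μ)
        = (∫⁻ x in B, ENNReal.ofReal (η x) ∂μ) + P {ω | X ω ∈ B ∧ Y ω = -1} := by
      rw [hone, hadd, hreg B hB]
    exact ((ENNReal.add_right_inj hItop).mp hfin).symm
  -- splitting of the error event
  have hsplitM : ∀ (g : 𝒳 → ℝ) (B1 B2 : Set 𝒳), MeasurableSet B1 → MeasurableSet B2 →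
      (∀ x, g x < -ε ↔ x ∈ B1) → (∀ x, ε < g x ↔ x ∈ B2) →
      P {ω | Y ω * g (X ω) < -ε}
        = (∫⁻ x in B1, ENNReal.ofReal (η x) ∂μ)
          + ∫⁻ x in B2, ENNReal.ofReal (1 - η x) ∂μ := by
    intro g B1 B2 hB1 hB2 hg1 hg2
    have hm1 : MeasurableSet {ω | X ω ∈ B1 ∧ Y ω = 1} := (hX hB1).inter hmY1
    have hm2 : MeasurableSet {ω | X ω ∈ B2 ∧ Y ω = -1} := (hX hB2).inter hmYm
    have hdisj : Disjoint {ω | X ω ∈ B1 ∧ Y ω = 1} {ω | X ω ∈ B2 ∧ Y ω = -1} := by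
      rw [Set.disjoint_left]
      rintro ω ⟨_, h1⟩ ⟨_, h2⟩
      rw [h1] at h2
      norm_num at h2
    have hset : {ω | Y ω * g (X ω) < -ε}
        = {ω | X ω ∈ B1 ∧ Y ω = 1} ∪ {ω | X ω ∈ B2 ∧ Y ω = -1} := by
      ext ω
      simp only [Set.mem_setOf_eq, Set.mem_union]
      rcases hYval ω with h | h
      · rw [h, one_mul]
        constructor
        · intro hlt; exact Or.inl ⟨(hg1 _).mp hlt, rfl⟩
        · rintro (⟨hb, _⟩ | ⟨_, hbad⟩)
          · exact (hg1 _).mpr hb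
          · norm_num at hbad
      · rw [h]
        constructor
        · intro hlt
          refine Or.inr ⟨(hg2 _).mp (by linarith), rfl⟩
        · rintro (⟨_, hbad⟩ | ⟨hb, _⟩)
          · norm_num at hbad
          · have := (hg2 _).mpr hb
            linarith
    rw [hset, measure_union hdisj hm2, hreg B1 hB1, hregm B2 hB2]
  -- the regions
  set An : Set 𝒳 := {x | η x < t1} with hAndef
  set Ap : Set 𝒳 := {x | tm < η x} with hApdef
  set Am : Set 𝒳 := {x | t1 ≤ η x ∧ η x ≤ tm} with hAmdef
  set Fn : Set 𝒳 := {x | f x < -ε} with hFndef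
  set Fp : Set 𝒳 := {x | ε < f x} with hFpdef
  set Fm : Set 𝒳 := {x | |f x| ≤ ε} with hFmdef
  have hmAn : MeasurableSet An := hη measurableSet_Iio
  have hmAp : MeasurableSet Ap := hη measurableSet_Ioi
  have hmAm : MeasurableSet Am := (hη measurableSet_Ici).inter (hη measurableSet_Iic)
  have hmFn : MeasurableSet Fn := hf measurableSet_Iio
  have hmFp : MeasurableSet Fp := hf measurableSet_Ioi
  have hmFm : MeasurableSet Fm := hf.abs measurableSet_Iic
  -- the Lagrangian cost integral
  have hcost_int : ∀ A B1 B2 : Set 𝒳, MeasurableSet A → MeasurableSet B1 → MeasurableSet B2 →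
      ∫⁻ x, (A.indicator (fun _ => ENNReal.ofReal L) x
          + B1.indicator (fun y => ENNReal.ofReal a1 * ENNReal.ofReal (η y)) x
          + B2.indicator (fun y => ENNReal.ofReal am * ENNReal.ofReal (1 - η y)) x) ∂μ
        = ENNReal.ofReal L * μ A
          + ENNReal.ofReal a1 * (∫⁻ x in B1, ENNReal.ofReal (η x) ∂μ)
          + ENNReal.ofReal am * ∫⁻ x in B2, ENNReal.ofReal (1 - η x) ∂μ := by
    intro A B1 B2 hA hB1 hB2
    have m1 : Measurable (A.indicator (fun _ : 𝒳 => ENNReal.ofReal L)) :=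
      measurable_const.indicator hA
    have m2 : Measurable (B1.indicator (fun y => ENNReal.ofReal a1 * ENNReal.ofReal (η y))) :=
      (measurable_const.mul hη.ennreal_ofReal).indicator hB1
    rw [lintegral_add_left (f := fun x => A.indicator (fun _ : 𝒳 => ENNReal.ofReal L) x
        + B1.indicator (fun y => ENNReal.ofReal a1 * ENNReal.ofReal (η y)) x) (m1.add m2),
      lintegral_add_left m1]
    rw [lintegral_indicator hA, lintegral_indicator hB1, lintegral_indicator hB2,
      setLIntegral_const,
      lintegral_const_mul _ hη.ennreal_ofReal,
      lintegral_const_mul _ (f := fun x => ENNReal.ofReal (1 - η x))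
        (measurable_const.sub hη).ennreal_ofReal]
  -- pointwise optimality of fstar
  have hmain : ∀ x, ∃ v : ℝ,
      (Am.indicator (fun _ => ENNReal.ofReal L) x
          + An.indicator (fun y => ENNReal.ofReal a1 * ENNReal.ofReal (η y)) x
          + Ap.indicator (fun y => ENNReal.ofReal am * ENNReal.ofReal (1 - η y)) x)
        = ENNReal.ofReal v
      ∧ v ≤ L ∧ v ≤ a1 * η x ∧ v ≤ am * (1 - η x) := by
    intro x
    have he0 := hη0 x
    have he1 := hη1 x
    rcases lt_trichotomy (η x) t1 with hx | hx | hx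
    · refine ⟨a1 * η x, ?_, ?_, le_refl _, ?_⟩
      · have h1 : x ∉ Am := fun h => absurd (show t1 ≤ η x from h.1) (not_le.mpr hx)
        have h2 : x ∈ An := hx
        have h3 : x ∉ Ap := fun h =>
          absurd (show tm < η x from h) (not_lt.mpr (by linarith))
        rw [Set.indicator_of_notMem h1, Set.indicator_of_mem h2,
          Set.indicator_of_notMem h3, zero_add, add_zero, ← ENNReal.ofReal_mul ha1pos]
      · nlinarith [mul_le_mul_of_nonneg_left (le_of_lt hx) ha1pos]
      · nlinarith [mul_le_mul_of_nonneg_left (le_of_lt hx) ha1pos,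
          mul_le_mul_of_nonneg_left (show (1:ℝ) - tm ≤ 1 - η x by linarith) hampos]
    · refine ⟨L, ?_, le_refl _, ?_, ?_⟩
      · have h1 : x ∈ Am := ⟨le_of_eq hx.symm, by linarith⟩
        have h2 : x ∉ An := fun h =>
          absurd (show η x < t1 from h) (not_lt.mpr (by linarith))
        have h3 : x ∉ Ap := fun h =>
          absurd (show tm < η x from h) (not_lt.mpr (by linarith))
        rw [Set.indicator_of_mem h1, Set.indicator_of_notMem h2,
          Set.indicator_of_notMem h3, add_zero, add_zero]
      · nlinarith [mul_le_mul_of_nonneg_left (show t1 ≤ η x by linarith) ha1pos]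
      · nlinarith [mul_le_mul_of_nonneg_left (show (1:ℝ) - tm ≤ 1 - η x by linarith) hampos]
    · rcases le_or_gt (η x) tm with hx2 | hx2
      · refine ⟨L, ?_, le_refl _, ?_, ?_⟩
        · have h1 : x ∈ Am := ⟨le_of_lt hx, hx2⟩
          have h2 : x ∉ An := fun h =>
            absurd (show η x < t1 from h) (not_lt.mpr (by linarith))
          have h3 : x ∉ Ap := fun h =>
            absurd (show tm < η x from h) (not_lt.mpr (by linarith))
          rw [Set.indicator_of_mem h1, Set.indicator_of_notMem h2,
            Set.indicator_of_notMem h3, add_zero, add_zero]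
        · nlinarith [mul_le_mul_of_nonneg_left (show t1 ≤ η x by linarith) ha1pos]
        · nlinarith [mul_le_mul_of_nonneg_left (show (1:ℝ) - tm ≤ 1 - η x by linarith) hampos]
      · refine ⟨am * (1 - η x), ?_, ?_, ?_, le_refl _⟩
        · have h1 : x ∉ Am := fun h => absurd (show η x ≤ tm from h.2) (not_le.mpr hx2)
          have h2 : x ∉ An := fun h =>
            absurd (show η x < t1 from h) (not_lt.mpr (by linarith))
          have h3 : x ∈ Ap := hx2
          rw [Set.indicator_of_notMem h1, Set.indicator_of_notMem h2,
            Set.indicator_of_mem h3, zero_add, zero_add, ← ENNReal.ofReal_mul hampos]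
        · nlinarith [mul_le_mul_of_nonneg_left (show (1:ℝ) - η x ≤ 1 - tm by linarith) hampos]
        · nlinarith [mul_le_mul_of_nonneg_left (show (1:ℝ) - η x ≤ 1 - tm by linarith) hampos,
            mul_le_mul_of_nonneg_left (show t1 ≤ η x by linarith) ha1pos]
  have hpt : ∀ x,
      (Am.indicator (fun _ => ENNReal.ofReal L) x
          + An.indicator (fun y => ENNReal.ofReal a1 * ENNReal.ofReal (η y)) x
          + Ap.indicator (fun y => ENNReal.ofReal am * ENNReal.ofReal (1 - η y)) x)
      ≤ (Fm.indicator (fun _ => ENNReal.ofReal L) x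
          + Fn.indicator (fun y => ENNReal.ofReal a1 * ENNReal.ofReal (η y)) x
          + Fp.indicator (fun y => ENNReal.ofReal am * ENNReal.ofReal (1 - η y)) x) := by
    intro x
    obtain ⟨v, hv, hvL, hv1, hvm⟩ := hmain x
    rw [hv]
    by_cases hx1 : f x < -ε
    · have h1 : x ∉ Fm := fun h =>
        absurd (show |f x| ≤ ε from h) (by rw [abs_le]; push_neg; intro hc'; linarith)
      have h2 : x ∈ Fn := hx1
      have h3 : x ∉ Fp := fun h =>
        absurd (show ε < f x from h) (not_lt.mpr (by linarith))
      rw [Set.indicator_of_notMem h1, Set.indicator_of_mem h2,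
        Set.indicator_of_notMem h3, zero_add, add_zero, ← ENNReal.ofReal_mul ha1pos]
      exact ENNReal.ofReal_le_ofReal hv1
    · by_cases hx2 : ε < f x
      · have h1 : x ∉ Fm := fun h =>
          absurd (show |f x| ≤ ε from h) (by rw [abs_le]; push_neg; intro hc'; linarith)
        have h2 : x ∉ Fn := hx1
        have h3 : x ∈ Fp := hx2
        rw [Set.indicator_of_notMem h1, Set.indicator_of_notMem h2,
          Set.indicator_of_mem h3, zero_add, zero_add, ← ENNReal.ofReal_mul hampos]
        exact ENNReal.ofReal_le_ofReal hvm
      · push_neg at hx1 hx2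
        have h1 : x ∈ Fm := by
          show |f x| ≤ ε
          rw [abs_le]
          exact ⟨by linarith, hx2⟩
        have h2 : x ∉ Fn := fun h =>
          absurd (show f x < -ε from h) (not_lt.mpr (by linarith))
        have h3 : x ∉ Fp := fun h =>
          absurd (show ε < f x from h) (not_lt.mpr (by linarith))
        rw [Set.indicator_of_mem h1, Set.indicator_of_notMem h2,
          Set.indicator_of_notMem h3, add_zero, add_zero]
        exact ENNReal.ofReal_le_ofReal hvL
  -- named integrals
  set I1 : ℝ≥0∞ := ∫⁻ x in An, ENNReal.ofReal (η x) ∂μ with hI1def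
  set I2 : ℝ≥0∞ := ∫⁻ x in Ap, ENNReal.ofReal (1 - η x) ∂μ with hI2def
  set K1 : ℝ≥0∞ := ∫⁻ x in Fn, ENNReal.ofReal (η x) ∂μ with hK1def
  set K2 : ℝ≥0∞ := ∫⁻ x in Fp, ENNReal.ofReal (1 - η x) ∂μ with hK2def
  have hI1top : I1 ≠ ⊤ := by rw [hI1def, ← hreg An hmAn]; exact measure_ne_top _ _
  have hI2top : I2 ≠ ⊤ := by rw [hI2def, ← hregm Ap hmAp]; exact measure_ne_top _ _
  have hK1top : K1 ≠ ⊤ := by rw [hK1def, ← hreg Fn hmFn]; exact measure_ne_top _ _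
  have hK2top : K2 ≠ ⊤ := by rw [hK2def, ← hregm Fp hmFp]; exact measure_ne_top _ _
  -- saturation of constraints by fstar
  have hsat1 : I1 = ENNReal.ofReal α1 * P {ω | Y ω = 1} := by
    rw [hI1def, ← hreg An hmAn]
    have hseteq : {ω | X ω ∈ An ∧ Y ω = 1} = {ω | Y ω = 1} ∩ {ω | η (X ω) < t1} := by
      ext ω
      simp only [hAndef, Set.mem_setOf_eq, Set.mem_inter_iff]
      exact and_comm
    rw [hseteq, hcond_conv _ _ hmY1 hp1ne, ht1]
  have hsatm : I2 = ENNReal.ofReal αm * P {ω | Y ω = -1} := by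
    rw [hI2def, ← hregm Ap hmAp]
    have hseteq : {ω | X ω ∈ Ap ∧ Y ω = -1} = {ω | Y ω = -1} ∩ {ω | tm < η (X ω)} := by
      ext ω
      simp only [hApdef, Set.mem_setOf_eq, Set.mem_inter_iff]
      exact and_comm
    rw [hseteq, hcond_conv _ _ hmYm hpmne, htm]
  -- feasibility of f
  have hfeasK1 : K1 ≤ ENNReal.ofReal α1 * P {ω | Y ω = 1} := by
    rw [hK1def, ← hreg Fn hmFn]
    have hseteq : {ω | X ω ∈ Fn ∧ Y ω = 1}
        = {ω | Y ω = 1} ∩ {ω | Y ω * f (X ω) < -ε} := by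
      ext ω
      simp only [hFndef, Set.mem_setOf_eq, Set.mem_inter_iff]
      constructor
      · rintro ⟨hb, h1⟩; exact ⟨h1, by rw [h1, one_mul]; exact hb⟩
      · rintro ⟨h1, hb⟩; rw [h1, one_mul] at hb; exact ⟨hb, h1⟩
    rw [hseteq, hcond_conv _ _ hmY1 hp1ne]
    gcongr
  have hfeasK2 : K2 ≤ ENNReal.ofReal αm * P {ω | Y ω = -1} := by
    rw [hK2def, ← hregm Fp hmFp]
    have hseteq : {ω | X ω ∈ Fp ∧ Y ω = -1}
        = {ω | Y ω = -1} ∩ {ω | Y ω * f (X ω) < -ε} := by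
      ext ω
      simp only [hFpdef, Set.mem_setOf_eq, Set.mem_inter_iff]
      constructor
      · rintro ⟨hb, h1⟩; exact ⟨h1, by rw [h1]; linarith⟩
      · rintro ⟨h1, hb⟩; rw [h1] at hb; exact ⟨by linarith, h1⟩
    rw [hseteq, hcond_conv _ _ hmYm hpmne]
    gcongr
  -- main integrated inequality
  have hmono := lintegral_mono (μ := μ) fun x => hpt x
  rw [hcost_int Am An Ap hmAm hmAn hmAp, hcost_int Fm Fn Fp hmFm hmFn hmFp] at hmono
  -- rewrite the four probabilities in the goal
  have hPAstar : P {ω | |fstar (X ω)| ≤ ε} = μ Am := by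
    have hseteq : {ω | |fstar (X ω)| ≤ ε} = X ⁻¹' Am := by
      ext ω
      simp only [Set.mem_setOf_eq, Set.mem_preimage, hAmdef]
      exact hS3 (X ω)
    rw [hseteq, hμdef, Measure.map_apply hX hmAm]
  have hPAf : P {ω | |f (X ω)| ≤ ε} = μ Fm := by
    have hseteq : {ω | |f (X ω)| ≤ ε} = X ⁻¹' Fm := by
      ext ω
      simp only [Set.mem_setOf_eq, Set.mem_preimage, hFmdef]
    rw [hseteq, hμdef, Measure.map_apply hX hmFm]
  have hMstar : P {ω | Y ω * fstar (X ω) < -ε} = I1 + I2 :=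
    hsplitM fstar An Ap hmAn hmAp (fun x => hS1 x) (fun x => hS2 x)
  have hMf : P {ω | Y ω * f (X ω) < -ε} = K1 + K2 :=
    hsplitM f Fn Fp hmFn hmFp (fun x => Iff.rfl) (fun x => Iff.rfl)
  rw [hPAstar, hPAf, hMstar, hMf,
    ENNReal.toReal_add hI1top hI2top, ENNReal.toReal_add hK1top hK2top]
  -- pass to real numbers
  have hofa1 : (ENNReal.ofReal a1).toReal = a1 := ENNReal.toReal_ofReal ha1pos
  have hofam : (ENNReal.ofReal am).toReal = am := ENNReal.toReal_ofReal hampos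
  have hofL : (ENNReal.ofReal L).toReal = L := ENNReal.toReal_ofReal hLpos.le
  have hfin1 : ENNReal.ofReal L * μ Am + ENNReal.ofReal a1 * I1 ≠ ⊤ :=
    ENNReal.add_ne_top.mpr ⟨ENNReal.mul_ne_top ENNReal.ofReal_ne_top (measure_ne_top _ _),
      ENNReal.mul_ne_top ENNReal.ofReal_ne_top hI1top⟩
  have hfin2 : ENNReal.ofReal L * μ Fm + ENNReal.ofReal a1 * K1 ≠ ⊤ :=
    ENNReal.add_ne_top.mpr ⟨ENNReal.mul_ne_top ENNReal.ofReal_ne_top (measure_ne_top _ _),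
      ENNReal.mul_ne_top ENNReal.ofReal_ne_top hK1top⟩
  have hRHStop : ENNReal.ofReal L * μ Fm + ENNReal.ofReal a1 * K1
      + ENNReal.ofReal am * K2 ≠ ⊤ :=
    ENNReal.add_ne_top.mpr ⟨hfin2, ENNReal.mul_ne_top ENNReal.ofReal_ne_top hK2top⟩
  have hmonoR := ENNReal.toReal_mono hRHStop hmono
  rw [ENNReal.toReal_add hfin1 (ENNReal.mul_ne_top ENNReal.ofReal_ne_top hI2top),
    ENNReal.toReal_add hfin2 (ENNReal.mul_ne_top ENNReal.ofReal_ne_top hK2top),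
    ENNReal.toReal_add (ENNReal.mul_ne_top ENNReal.ofReal_ne_top (measure_ne_top _ _))
      (ENNReal.mul_ne_top ENNReal.ofReal_ne_top hI1top),
    ENNReal.toReal_add (ENNReal.mul_ne_top ENNReal.ofReal_ne_top (measure_ne_top _ _))
      (ENNReal.mul_ne_top ENNReal.ofReal_ne_top hK1top),
    ENNReal.toReal_mul, ENNReal.toReal_mul, ENNReal.toReal_mul, ENNReal.toReal_mul,
    ENNReal.toReal_mul, ENNReal.toReal_mul, hofa1, hofam, hofL] at hmonoR
  have hsat1R : I1.toReal = α1 * (P {ω | Y ω = 1}).toReal := by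
    rw [hsat1, ENNReal.toReal_mul, ENNReal.toReal_ofReal hα1.1.le]
  have hsatmR : I2.toReal = αm * (P {ω | Y ω = -1}).toReal := by
    rw [hsatm, ENNReal.toReal_mul, ENNReal.toReal_ofReal hαm.1.le]
  have hfeasK1R : K1.toReal ≤ α1 * (P {ω | Y ω = 1}).toReal := by
    have := ENNReal.toReal_mono
      (ENNReal.mul_ne_top ENNReal.ofReal_ne_top (measure_ne_top _ _)) hfeasK1
    rwa [ENNReal.toReal_mul, ENNReal.toReal_ofReal hα1.1.le] at this
  have hfeasK2R : K2.toReal ≤ αm * (P {ω | Y ω = -1}).toReal := by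
    have := ENNReal.toReal_mono
      (ENNReal.mul_ne_top ENNReal.ofReal_ne_top (measure_ne_top _ _)) hfeasK2
    rwa [ENNReal.toReal_mul, ENNReal.toReal_ofReal hαm.1.le] at this
  nlinarith [hmonoR, hsat1R, hsatmR, hfeasK1R, hfeasK2R,
    mul_nonneg (by linarith : (0:ℝ) ≤ a1 - 1) (by linarith : (0:ℝ) ≤ I1.toReal - K1.toReal),
    mul_nonneg (by linarith : (0:ℝ) ≤ am - 1) (by linarith : (0:ℝ) ≤ I2.toReal - K2.toReal)]
end

section
/- Fix ε ≥ 0. Under Assumptions 1 and 2, for every measurable feasible f̂ : 𝒳 → ℝ, the excess ambiguity is controlled by the excess R̄-risk: R(f̂, ε) − R(f*, ε) ≤ (1/c)·(R̄(f̂, ε) − R̄(f*, ε)). -/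
open MeasureTheory ProbabilityTheory
open scoped ENNReal

set_option maxHeartbeats 1000000 in
theorem ambiguity_core_aux
    (t1 tm c : ℝ)
    (pb0 pb1 pb2 pm0 pm1 pm2 pc0 pc1 pc2 : ℝ)
    (qb0 qb1 qb2 qm0 qm1 qm2 qc0 qc1 qc2 : ℝ)
    (ht1pos : 0 < t1) (htm1 : tm < 1)
    (ht1half : t1 ≤ 1 / 2) (hhalftm : 1 / 2 ≤ tm)
    (hc : 0 < c) (hctm : c ≤ tm - 1 / 2) (hct1 : c ≤ 1 / 2 - t1)
    (hpc0 : 0 ≤ pc0) (hqb2 : 0 ≤ qb2)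
    (e1 : (1 - t1) * pm0 ≤ t1 * qm0)
    (e2 : (1 - t1) * pc0 ≤ t1 * qc0)
    (e3 : t1 * qb1 ≤ (1 - t1) * pb1)
    (e4 : (1 - tm) * pc1 ≤ tm * qc1)
    (e5 : tm * qb2 ≤ (1 - tm) * pb2)
    (e6 : tm * qm2 ≤ (1 - tm) * pm2)
    (f1 : pb0 + pb1 + pb2 ≤ pb0 + pm0 + pc0)
    (f2 : qc0 + qc1 + qc2 ≤ qb2 + qm2 + qc2) :
    c * ((pm0 + pm1 + pm2 + (qm0 + qm1 + qm2))
        - (pb1 + pm1 + pc1 + (qb1 + qm1 + qc1)))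
    ≤ ((pb0 + pb1 + pb2) + (qc0 + qc1 + qc2)
        + (1 / 2) * (pm0 + pm1 + pm2 + (qm0 + qm1 + qm2)))
      - ((pb0 + pm0 + pc0) + (qb2 + qm2 + qc2)
        + (1 / 2) * (pb1 + pm1 + pc1 + (qb1 + qm1 + qc1))) := by
  have hch : c ≤ 1 / 2 := by linarith
  have htt : t1 ≤ tm := by linarith
  have h2' : (1 - tm) * pc0 ≤ t1 * qc0 := by nlinarith [mul_nonneg (sub_nonneg.2 htt) hpc0]
  have h5' : t1 * qb2 ≤ (1 - tm) * pb2 := by nlinarith [mul_nonneg (sub_nonneg.2 htt) hqb2]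
  set D : ℝ := (((pb0 + pb1 + pb2) + (qc0 + qc1 + qc2)
        + (1 / 2) * (pm0 + pm1 + pm2 + (qm0 + qm1 + qm2)))
      - ((pb0 + pm0 + pc0) + (qb2 + qm2 + qc2)
        + (1 / 2) * (pb1 + pm1 + pc1 + (qb1 + qm1 + qc1))))
      - c * ((pm0 + pm1 + pm2 + (qm0 + qm1 + qm2))
        - (pb1 + pm1 + pc1 + (qb1 + qm1 + qc1))) with hD
  have key : t1 * (1 - tm) * D
      = (1 / 2 - c) * (1 - tm) * (t1 * qm0 - (1 - t1) * pm0)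
      + (1 / 2 - c) * (t1 * qc0 - (1 - tm) * pc0)
      + (1 / 2 - c) * (1 - tm) * ((1 - t1) * pb1 - t1 * qb1)
      + (1 / 2 - c) * t1 * (tm * qc1 - (1 - tm) * pc1)
      + (1 / 2 - c) * ((1 - tm) * pb2 - t1 * qb2)
      + (1 / 2 - c) * t1 * ((1 - tm) * pm2 - tm * qm2)
      + (1 - tm) * (t1 - 1 / 2 + c) * ((pb1 + pb2) - (pm0 + pc0))
      + t1 * (1 / 2 - tm + c) * ((qc0 + qc1) - (qb2 + qm2)) := by
    rw [hD]; ring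
  have hpos : (0:ℝ) < t1 * (1 - tm) := mul_pos ht1pos (by linarith)
  have hDnn : 0 ≤ t1 * (1 - tm) * D := by
    rw [key]
    have T1 : 0 ≤ (1 / 2 - c) * (1 - tm) * (t1 * qm0 - (1 - t1) * pm0) :=
      mul_nonneg (mul_nonneg (by linarith) (by linarith)) (by linarith)
    have T2 : 0 ≤ (1 / 2 - c) * (t1 * qc0 - (1 - tm) * pc0) :=
      mul_nonneg (by linarith) (by linarith)
    have T3 : 0 ≤ (1 / 2 - c) * (1 - tm) * ((1 - t1) * pb1 - t1 * qb1) :=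
      mul_nonneg (mul_nonneg (by linarith) (by linarith)) (by linarith)
    have T4 : 0 ≤ (1 / 2 - c) * t1 * (tm * qc1 - (1 - tm) * pc1) :=
      mul_nonneg (mul_nonneg (by linarith) (by linarith)) (by linarith)
    have T5 : 0 ≤ (1 / 2 - c) * ((1 - tm) * pb2 - t1 * qb2) :=
      mul_nonneg (by linarith) (by linarith)
    have T6 : 0 ≤ (1 / 2 - c) * t1 * ((1 - tm) * pm2 - tm * qm2) :=
      mul_nonneg (mul_nonneg (by linarith) (by linarith)) (by linarith)
    have T7 : 0 ≤ (1 - tm) * (t1 - 1 / 2 + c) * ((pb1 + pb2) - (pm0 + pc0)) := by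
      have h1 : pb1 + pb2 - (pm0 + pc0) ≤ 0 := by linarith
      have h2 : t1 - 1 / 2 + c ≤ 0 := by linarith
      nlinarith [mul_nonneg (mul_nonneg (by linarith : (0:ℝ) ≤ 1 - tm)
        (neg_nonneg.2 h2)) (neg_nonneg.2 h1)]
    have T8 : 0 ≤ t1 * (1 / 2 - tm + c) * ((qc0 + qc1) - (qb2 + qm2)) := by
      have h1 : qc0 + qc1 - (qb2 + qm2) ≤ 0 := by linarith
      have h2 : 1 / 2 - tm + c ≤ 0 := by linarith
      nlinarith [mul_nonneg (mul_nonneg (le_of_lt ht1pos)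
        (neg_nonneg.2 h2)) (neg_nonneg.2 h1)]
    linarith
  have hfin : 0 ≤ D := le_of_mul_le_mul_left (by simpa using hDnn) hpos
  rw [hD] at hfin
  linarith

set_option maxHeartbeats 2000000 in
/-- Under Assumptions 1 and 2, for every measurable feasible `f̂`, the excess ambiguity is controlled by the excess `R̄`-risk: `R(f̂, ε) − R(f*, ε) ≤ (1/c)·(R̄(f̂, ε) − R̄(f*, ε))`. -/
theorem excess_ambiguity_le_excess_Rbar
    {𝒳 : Type*} [MeasurableSpace 𝒳]
    {Ω : Type*} [MeasurableSpace Ω] (P : Measure Ω) [IsProbabilityMeasure P]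
    (X : Ω → 𝒳) (Y : Ω → ℝ) (hX : Measurable X) (hY : Measurable Y)
    (hYval : ∀ ω, Y ω = 1 ∨ Y ω = -1)
    (hpos1 : 0 < P {ω | Y ω = 1}) (hposm : 0 < P {ω | Y ω = -1})
    -- η is a measurable version of the regression function x ↦ P(Y = 1 ∣ X = x)
    (η : 𝒳 → ℝ) (hη : Measurable η) (hη01 : ∀ x, η x ∈ Set.Icc (0 : ℝ) 1)
    (hreg : ∀ A : Set 𝒳, MeasurableSet A →
      P {ω | X ω ∈ A ∧ Y ω = 1} = ∫⁻ x in A, ENNReal.ofReal (η x) ∂(P.map X))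
    -- noncoverage levels and thresholds
    (αm α1 : ℝ) (hαm : αm ∈ Set.Ioo (0 : ℝ) 1) (hα1 : α1 ∈ Set.Ioo (0 : ℝ) 1)
    (tm t1 : ℝ)
    (htm : P[|{ω | Y ω = -1}] {ω | tm < η (X ω)} = ENNReal.ofReal αm)
    (ht1 : P[|{ω | Y ω = 1}] {ω | η (X ω) < t1} = ENNReal.ofReal α1)
    -- Assumption 1: the distribution of η(X) is atomless under both class-conditional
    -- distributions, and t1 ≤ 1/2 ≤ tm
    (hatomlessm : ∀ t : ℝ, P[|{ω | Y ω = -1}] {ω | η (X ω) = t} = 0)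
    (hatomless1 : ∀ t : ℝ, P[|{ω | Y ω = 1}] {ω | η (X ω) = t} = 0)
    (ht1half : t1 ≤ 1 / 2) (hhalftm : 1 / 2 ≤ tm)
    -- Assumption 2
    (c : ℝ) (hc : 0 < c) (hctm : c ≤ tm - 1 / 2) (hct1 : c ≤ 1 / 2 - t1)
    (ε : ℝ) (hε : 0 ≤ ε)
    -- the Bayes-type rule f*
    (fstar : 𝒳 → ℝ)
    (hfstar : ∀ x, fstar x =
      if tm < η x then 1 + ε
      else if t1 ≤ η x then ε * Real.sign (η x - 1 / 2)
      else -(1 + ε))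
    -- an arbitrary measurable feasible competitor f
    (f : 𝒳 → ℝ) (hf : Measurable f)
    (hfeasm : P[|{ω | Y ω = -1}] {ω | Y ω * f (X ω) < -ε} ≤ ENNReal.ofReal αm)
    (hfeas1 : P[|{ω | Y ω = 1}] {ω | Y ω * f (X ω) < -ε} ≤ ENNReal.ofReal α1) :
    (P {ω | |f (X ω)| ≤ ε}).toReal - (P {ω | |fstar (X ω)| ≤ ε}).toReal
    ≤ (1 / c) *
      (((P {ω | Y ω * f (X ω) < -ε}).toReal
          + (1 / 2) * (P {ω | |f (X ω)| ≤ ε}).toReal)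
        - ((P {ω | Y ω * fstar (X ω) < -ε}).toReal
          + (1 / 2) * (P {ω | |fstar (X ω)| ≤ ε}).toReal)) := by
  clear hatomlessm hatomless1
  have hη0 : ∀ x, 0 ≤ η x := fun x => (hη01 x).1
  have hη1 : ∀ x, η x ≤ 1 := fun x => (hη01 x).2
  set μ : Measure 𝒳 := P.map X with hμdef
  haveI hμprob : IsProbabilityMeasure μ := Measure.isProbabilityMeasure_map hX.aemeasurable
  have hintη : Integrable η μ :=
    ⟨hη.aestronglyMeasurable, HasFiniteIntegral.of_bounded (C := 1)
      (ae_of_all _ fun x => by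
        rw [Real.norm_eq_abs, abs_le]; exact ⟨by linarith [hη0 x], hη1 x⟩)⟩
  have hint1 : Integrable (fun x => 1 - η x) μ := (integrable_const 1).sub hintη
  -- the six regions
  set B : Set 𝒳 := {x | f x < -ε} with hBdef
  set C : Set 𝒳 := {x | ε < f x} with hCdef
  set Md : Set 𝒳 := {x | |f x| ≤ ε} with hMdef
  set G0 : Set 𝒳 := {x | η x < t1} with hG0def
  set G1 : Set 𝒳 := {x | t1 ≤ η x ∧ η x ≤ tm} with hG1def
  set G2 : Set 𝒳 := {x | tm < η x} with hG2def
  have hmB : MeasurableSet B := measurableSet_lt hf measurable_const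
  have hmC : MeasurableSet C := measurableSet_lt measurable_const hf
  have hmMd : MeasurableSet Md := measurableSet_le hf.abs measurable_const
  have hmG0 : MeasurableSet G0 := measurableSet_lt hη measurable_const
  have hmG1 : MeasurableSet G1 :=
    (measurableSet_le measurable_const hη).inter (measurableSet_le hη measurable_const)
  have hmG2 : MeasurableSet G2 := measurableSet_lt measurable_const hη
  have hs1 : MeasurableSet {ω | Y ω = 1} := hY (measurableSet_singleton 1)
  have hsm : MeasurableSet {ω | Y ω = -1} := hY (measurableSet_singleton (-1))
  -- L1 : probability of (X ∈ A, Y = 1)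
  have L1 : ∀ A : Set 𝒳, MeasurableSet A →
      (P {ω | X ω ∈ A ∧ Y ω = 1}).toReal = ∫ x in A, η x ∂μ := by
    intro A hA
    rw [hreg A hA,
      ← ofReal_integral_eq_lintegral_ofReal hintη.integrableOn (ae_of_all _ fun x => hη0 x),
      ENNReal.toReal_ofReal (setIntegral_nonneg hA fun x _ => hη0 x)]
  -- split over Y
  have hPsplitP : ∀ A : Set 𝒳, MeasurableSet A →
      P (X ⁻¹' A) = P {ω | X ω ∈ A ∧ Y ω = 1} + P {ω | X ω ∈ A ∧ Y ω = -1} := by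
    intro A hA
    have hset : X ⁻¹' A = {ω | X ω ∈ A ∧ Y ω = 1} ∪ {ω | X ω ∈ A ∧ Y ω = -1} := by
      ext ω
      constructor
      · intro h
        rcases hYval ω with h1 | h1
        · exact Or.inl ⟨h, h1⟩
        · exact Or.inr ⟨h, h1⟩
      · rintro (⟨h, _⟩ | ⟨h, _⟩) <;> exact h
    have hdisj : Disjoint {ω | X ω ∈ A ∧ Y ω = 1} {ω | X ω ∈ A ∧ Y ω = -1} := by
      rw [Set.disjoint_left]
      rintro ω ⟨_, h1⟩ ⟨_, h2⟩
      rw [h1] at h2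
      norm_num at h2
    rw [hset, measure_union hdisj ((hX hA).inter hsm)]
  have L2 : ∀ A : Set 𝒳, MeasurableSet A →
      (P {ω | X ω ∈ A ∧ Y ω = -1}).toReal = ∫ x in A, (1 - η x) ∂μ := by
    intro A hA
    have htr : (P (X ⁻¹' A)).toReal
        = (P {ω | X ω ∈ A ∧ Y ω = 1}).toReal + (P {ω | X ω ∈ A ∧ Y ω = -1}).toReal := by
      rw [hPsplitP A hA, ENNReal.toReal_add (measure_ne_top _ _) (measure_ne_top _ _)]
    have hμA : (P (X ⁻¹' A)).toReal = (μ A).toReal := by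
      rw [hμdef, Measure.map_apply hX hA]
    have hone : ∫ x in A, (1:ℝ) ∂μ = (μ A).toReal := by simp [Measure.real]
    have hsub : ∫ x in A, (1 - η x) ∂μ = (μ A).toReal - ∫ x in A, η x ∂μ := by
      rw [integral_sub (integrable_const 1).integrableOn hintη.integrableOn, hone]
    rw [hsub, ← L1 A hA]
    linarith [htr, hμA]
  -- events with Y·g < -ε
  have hEvGen : ∀ (g : 𝒳 → ℝ) (Bg Cg : Set 𝒳), MeasurableSet Bg → MeasurableSet Cg →
      (∀ x, g x < -ε ↔ x ∈ Bg) → (∀ x, ε < g x ↔ x ∈ Cg) →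
      (P {ω | Y ω * g (X ω) < -ε}).toReal
        = ∫ x in Bg, η x ∂μ + ∫ x in Cg, (1 - η x) ∂μ := by
    intro g Bg Cg hmBg hmCg hBgiff hCgiff
    have hset : {ω | Y ω * g (X ω) < -ε}
        = {ω | X ω ∈ Bg ∧ Y ω = 1} ∪ {ω | X ω ∈ Cg ∧ Y ω = -1} := by
      ext ω
      simp only [Set.mem_setOf_eq, Set.mem_union]
      rcases hYval ω with h1 | h1 <;> rw [h1]
      · constructor
        · intro h
          exact Or.inl ⟨(hBgiff _).1 (by linarith), rfl⟩
        · rintro (⟨hb, _⟩ | ⟨_, habs⟩)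
          · have := (hBgiff (X ω)).2 hb
            linarith
          · norm_num at habs
      · constructor
        · intro h
          exact Or.inr ⟨(hCgiff _).1 (by linarith), rfl⟩
        · rintro (⟨_, habs⟩ | ⟨hcc, _⟩)
          · norm_num at habs
          · have := (hCgiff (X ω)).2 hcc
            linarith
    have hdisj : Disjoint {ω | X ω ∈ Bg ∧ Y ω = 1} {ω | X ω ∈ Cg ∧ Y ω = -1} := by
      rw [Set.disjoint_left]
      rintro ω ⟨_, h1⟩ ⟨_, h2⟩
      rw [h1] at h2
      norm_num at h2
    rw [hset, measure_union hdisj ((hX hmCg).inter hsm),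
      ENNReal.toReal_add (measure_ne_top _ _) (measure_ne_top _ _),
      L1 Bg hmBg, L2 Cg hmCg]
  -- ambiguity probabilities
  have hAmbGen : ∀ (g : 𝒳 → ℝ) (Mg : Set 𝒳), MeasurableSet Mg →
      (∀ x, |g x| ≤ ε ↔ x ∈ Mg) →
      (P {ω | |g (X ω)| ≤ ε}).toReal
        = ∫ x in Mg, η x ∂μ + ∫ x in Mg, (1 - η x) ∂μ := by
    intro g Mg hmMg hiff
    have hset : {ω | |g (X ω)| ≤ ε} = X ⁻¹' Mg := by
      ext ω
      simp only [Set.mem_setOf_eq, Set.mem_preimage]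
      exact hiff _
    rw [hset, hPsplitP Mg hmMg,
      ENNReal.toReal_add (measure_ne_top _ _) (measure_ne_top _ _),
      L1 Mg hmMg, L2 Mg hmMg]
  -- the regions of fstar
  have hfsB : ∀ x, fstar x < -ε ↔ x ∈ G0 := by
    intro x
    rw [hfstar x]
    simp only [hG0def, Set.mem_setOf_eq]
    split_ifs with h1 h2
    · constructor
      · intro h; linarith
      · intro h; linarith
    · push_neg at h1
      constructor
      · intro h
        rcases Real.sign_apply_eq (η x - 1/2) with hs | hs | hs <;> rw [hs] at h <;> linarith
      · intro h; linarith
    · push_neg at h1 h2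
      constructor
      · intro _; exact h2
      · intro _; linarith
  have hfsC : ∀ x, ε < fstar x ↔ x ∈ G2 := by
    intro x
    rw [hfstar x]
    simp only [hG2def, Set.mem_setOf_eq]
    split_ifs with h1 h2
    · constructor
      · intro _; exact h1
      · intro _; linarith
    · push_neg at h1
      constructor
      · intro h
        rcases Real.sign_apply_eq (η x - 1/2) with hs | hs | hs <;> rw [hs] at h <;> linarith
      · intro h; linarith
    · push_neg at h1 h2
      constructor
      · intro h; linarith
      · intro h; linarith
  have hfsM : ∀ x, |fstar x| ≤ ε ↔ x ∈ G1 := by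
    intro x
    rw [hfstar x]
    simp only [hG1def, Set.mem_setOf_eq]
    split_ifs with h1 h2
    · constructor
      · intro h
        rw [abs_le] at h
        obtain ⟨_, h⟩ := h
        linarith
      · rintro ⟨_, h⟩; linarith
    · push_neg at h1
      constructor
      · intro _; exact ⟨h2, h1⟩
      · intro _
        rw [abs_le]
        rcases Real.sign_apply_eq (η x - 1/2) with hs | hs | hs <;> rw [hs] <;>
          constructor <;> linarith
    · push_neg at h1 h2
      constructor
      · intro h
        rw [abs_le] at h
        obtain ⟨h, _⟩ := h
        linarith
      · rintro ⟨h, _⟩; linarith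
  -- splitting integrals over the η-regions
  have hsplitG : ∀ (g : 𝒳 → ℝ), Integrable g μ → ∀ A : Set 𝒳, MeasurableSet A →
      ∫ x in A, g x ∂μ
        = ∫ x in A ∩ G0, g x ∂μ + ∫ x in A ∩ G1, g x ∂μ + ∫ x in A ∩ G2, g x ∂μ := by
    intro g hg A hA
    have hu : A = (A ∩ G0) ∪ ((A ∩ G1) ∪ (A ∩ G2)) := by
      ext x
      simp only [Set.mem_union, Set.mem_inter_iff, hG0def, hG1def, hG2def, Set.mem_setOf_eq]
      constructor
      · intro hx
        by_cases h0 : η x < t1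
        · exact Or.inl ⟨hx, h0⟩
        · by_cases h2 : tm < η x
          · exact Or.inr (Or.inr ⟨hx, h2⟩)
          · exact Or.inr (Or.inl ⟨hx, le_of_not_gt h0, le_of_not_gt h2⟩)
      · rintro (⟨h, _⟩ | ⟨h, _⟩ | ⟨h, _⟩) <;> exact h
    have hd1 : Disjoint (A ∩ G1) (A ∩ G2) := by
      rw [Set.disjoint_left]
      rintro x ⟨_, hx1⟩ ⟨_, hx2⟩
      simp only [hG1def, Set.mem_setOf_eq] at hx1
      simp only [hG2def, Set.mem_setOf_eq] at hx2
      linarith [hx1.2]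
    have hd0 : Disjoint (A ∩ G0) ((A ∩ G1) ∪ (A ∩ G2)) := by
      rw [Set.disjoint_left]
      rintro x ⟨_, hx0⟩ hx
      simp only [hG0def, Set.mem_setOf_eq] at hx0
      rcases hx with ⟨_, hx1⟩ | ⟨_, hx2⟩
      · simp only [hG1def, Set.mem_setOf_eq] at hx1
        linarith [hx1.1]
      · simp only [hG2def, Set.mem_setOf_eq] at hx2
        linarith
    calc ∫ x in A, g x ∂μ
        = ∫ x in (A ∩ G0) ∪ ((A ∩ G1) ∪ (A ∩ G2)), g x ∂μ := by rw [← hu]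
      _ = ∫ x in A ∩ G0, g x ∂μ + ∫ x in A ∩ G1, g x ∂μ + ∫ x in A ∩ G2, g x ∂μ := by
          rw [setIntegral_union hd0 ((hA.inter hmG1).union (hA.inter hmG2))
              hg.integrableOn hg.integrableOn,
            setIntegral_union hd1 (hA.inter hmG2) hg.integrableOn hg.integrableOn]
          ring
  -- splitting integrals over the f-regions
  have hsplitF : ∀ (g : 𝒳 → ℝ), Integrable g μ → ∀ A : Set 𝒳, MeasurableSet A →
      ∫ x in A, g x ∂μ
        = ∫ x in B ∩ A, g x ∂μ + ∫ x in Md ∩ A, g x ∂μ + ∫ x in C ∩ A, g x ∂μ := by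
    intro g hg A hA
    have hu : A = (B ∩ A) ∪ ((Md ∩ A) ∪ (C ∩ A)) := by
      ext x
      simp only [Set.mem_union, Set.mem_inter_iff, hBdef, hCdef, hMdef, Set.mem_setOf_eq]
      constructor
      · intro hx
        by_cases hb : f x < -ε
        · exact Or.inl ⟨hb, hx⟩
        · by_cases hcx : ε < f x
          · exact Or.inr (Or.inr ⟨hcx, hx⟩)
          · exact Or.inr (Or.inl ⟨abs_le.2 ⟨by linarith [le_of_not_gt hb], le_of_not_gt hcx⟩, hx⟩)
      · rintro (⟨_, h⟩ | ⟨_, h⟩ | ⟨_, h⟩) <;> exact h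
    have hd1 : Disjoint (Md ∩ A) (C ∩ A) := by
      rw [Set.disjoint_left]
      rintro x ⟨hx1, _⟩ ⟨hx2, _⟩
      simp only [hMdef, Set.mem_setOf_eq] at hx1
      simp only [hCdef, Set.mem_setOf_eq] at hx2
      rw [abs_le] at hx1
      linarith [hx1.2]
    have hd0 : Disjoint (B ∩ A) ((Md ∩ A) ∪ (C ∩ A)) := by
      rw [Set.disjoint_left]
      rintro x ⟨hx0, _⟩ hx
      simp only [hBdef, Set.mem_setOf_eq] at hx0
      rcases hx with ⟨hx1, _⟩ | ⟨hx2, _⟩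
      · simp only [hMdef, Set.mem_setOf_eq] at hx1
        rw [abs_le] at hx1
        linarith [hx1.1]
      · simp only [hCdef, Set.mem_setOf_eq] at hx2
        linarith
    calc ∫ x in A, g x ∂μ
        = ∫ x in (B ∩ A) ∪ ((Md ∩ A) ∪ (C ∩ A)), g x ∂μ := by rw [← hu]
      _ = ∫ x in B ∩ A, g x ∂μ + ∫ x in Md ∩ A, g x ∂μ + ∫ x in C ∩ A, g x ∂μ := by
          rw [setIntegral_union hd0 ((hmMd.inter hA).union (hmC.inter hA))
              hg.integrableOn hg.integrableOn,
            setIntegral_union hd1 (hmC.inter hA) hg.integrableOn hg.integrableOn]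
          ring
  -- feasibility in integral form
  have hfeasC' : ∫ x in C, (1 - η x) ∂μ ≤ ∫ x in G2, (1 - η x) ∂μ := by
    have h1 : P ({ω | Y ω = -1} ∩ {ω | Y ω * f (X ω) < -ε})
        ≤ P ({ω | Y ω = -1} ∩ {ω | tm < η (X ω)}) := by
      have hfm := hfeasm
      rw [cond_apply hsm P] at hfm
      rw [cond_apply hsm P] at htm
      rw [← htm] at hfm
      exact (ENNReal.mul_le_mul_iff_right (ENNReal.inv_ne_zero.2 (measure_ne_top _ _))
        (ENNReal.inv_ne_top.2 hposm.ne')).1 hfm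
    have hset1 : {ω | Y ω = -1} ∩ {ω | Y ω * f (X ω) < -ε} = {ω | X ω ∈ C ∧ Y ω = -1} := by
      ext ω
      simp only [Set.mem_inter_iff, Set.mem_setOf_eq, hCdef]
      constructor
      · rintro ⟨hy, hlt⟩
        rw [hy] at hlt
        exact ⟨by linarith, hy⟩
      · rintro ⟨hcx, hy⟩
        refine ⟨hy, ?_⟩
        rw [hy]
        linarith
    have hset2 : {ω | Y ω = -1} ∩ {ω | tm < η (X ω)} = {ω | X ω ∈ G2 ∧ Y ω = -1} := by
      ext ω
      simp only [Set.mem_inter_iff, Set.mem_setOf_eq, hG2def]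
      exact ⟨fun ⟨a, b⟩ => ⟨b, a⟩, fun ⟨a, b⟩ => ⟨b, a⟩⟩
    rw [← L2 C hmC, ← L2 G2 hmG2]
    apply ENNReal.toReal_mono (measure_ne_top _ _)
    rw [← hset1, ← hset2]
    exact h1
  have hfeasB' : ∫ x in B, η x ∂μ ≤ ∫ x in G0, η x ∂μ := by
    have h1 : P ({ω | Y ω = 1} ∩ {ω | Y ω * f (X ω) < -ε})
        ≤ P ({ω | Y ω = 1} ∩ {ω | η (X ω) < t1}) := by
      have hfm := hfeas1
      rw [cond_apply hs1 P] at hfm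
      rw [cond_apply hs1 P] at ht1
      rw [← ht1] at hfm
      exact (ENNReal.mul_le_mul_iff_right (ENNReal.inv_ne_zero.2 (measure_ne_top _ _))
        (ENNReal.inv_ne_top.2 hpos1.ne')).1 hfm
    have hset1 : {ω | Y ω = 1} ∩ {ω | Y ω * f (X ω) < -ε} = {ω | X ω ∈ B ∧ Y ω = 1} := by
      ext ω
      simp only [Set.mem_inter_iff, Set.mem_setOf_eq, hBdef]
      constructor
      · rintro ⟨hy, hlt⟩
        rw [hy] at hlt
        exact ⟨by linarith, hy⟩
      · rintro ⟨hcx, hy⟩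
        refine ⟨hy, ?_⟩
        rw [hy]
        linarith
    have hset2 : {ω | Y ω = 1} ∩ {ω | η (X ω) < t1} = {ω | X ω ∈ G0 ∧ Y ω = 1} := by
      ext ω
      simp only [Set.mem_inter_iff, Set.mem_setOf_eq, hG0def]
      exact ⟨fun ⟨a, b⟩ => ⟨b, a⟩, fun ⟨a, b⟩ => ⟨b, a⟩⟩
    rw [← L1 B hmB, ← L1 G0 hmG0]
    apply ENNReal.toReal_mono (measure_ne_top _ _)
    rw [← hset1, ← hset2]
    exact h1
  -- t1 > 0 and tm < 1
  have hG0pos : 0 < ∫ x in G0, η x ∂μ := by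
    have hset : {ω | Y ω = 1} ∩ {ω | η (X ω) < t1} = {ω | X ω ∈ G0 ∧ Y ω = 1} := by
      ext ω
      simp only [Set.mem_inter_iff, Set.mem_setOf_eq, hG0def]
      exact ⟨fun ⟨a, b⟩ => ⟨b, a⟩, fun ⟨a, b⟩ => ⟨b, a⟩⟩
    have h0 : P {ω | X ω ∈ G0 ∧ Y ω = 1} ≠ 0 := by
      intro h
      rw [cond_apply hs1 P, hset, h, mul_zero] at ht1
      exact absurd ht1.symm (ENNReal.ofReal_pos.2 hα1.1).ne'
    rw [← L1 G0 hmG0]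
    exact ENNReal.toReal_pos h0 (measure_ne_top _ _)
  have ht1pos : 0 < t1 := by
    by_contra hcon
    push_neg at hcon
    have hemp : G0 = ∅ := by
      ext x
      simp only [hG0def, Set.mem_setOf_eq, Set.mem_empty_iff_false, iff_false, not_lt]
      linarith [hη0 x]
    rw [hemp] at hG0pos
    simp at hG0pos
  have hG2pos : 0 < ∫ x in G2, (1 - η x) ∂μ := by
    have hset : {ω | Y ω = -1} ∩ {ω | tm < η (X ω)} = {ω | X ω ∈ G2 ∧ Y ω = -1} := by
      ext ω
      simp only [Set.mem_inter_iff, Set.mem_setOf_eq, hG2def]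
      exact ⟨fun ⟨a, b⟩ => ⟨b, a⟩, fun ⟨a, b⟩ => ⟨b, a⟩⟩
    have h0 : P {ω | X ω ∈ G2 ∧ Y ω = -1} ≠ 0 := by
      intro h
      rw [cond_apply hsm P, hset, h, mul_zero] at htm
      exact absurd htm.symm (ENNReal.ofReal_pos.2 hαm.1).ne'
    rw [← L2 G2 hmG2]
    exact ENNReal.toReal_pos h0 (measure_ne_top _ _)
  have htm1 : tm < 1 := by
    by_contra hcon
    push_neg at hcon
    have hemp : G2 = ∅ := by
      ext x
      simp only [hG2def, Set.mem_setOf_eq, Set.mem_empty_iff_false, iff_false, not_lt]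
      linarith [hη1 x]
    rw [hemp] at hG2pos
    simp at hG2pos
  -- cell inequality helper
  have hcellb : ∀ (a b : ℝ) (g1 g2 : 𝒳 → ℝ), Integrable g1 μ → Integrable g2 μ →
      ∀ A : Set 𝒳, MeasurableSet A → (∀ x ∈ A, a * g1 x ≤ b * g2 x) →
      a * ∫ x in A, g1 x ∂μ ≤ b * ∫ x in A, g2 x ∂μ := by
    intro a b g1 g2 hg1 hg2 A hA hpt
    rw [← integral_const_mul, ← integral_const_mul]
    exact setIntegral_mono_on (hg1.integrableOn.const_mul a)
      (hg2.integrableOn.const_mul b) hA hpt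
  -- memberships
  have hmemG0 : ∀ x, x ∈ G0 → η x < t1 := by
    intro x hx; simpa only [hG0def, Set.mem_setOf_eq] using hx
  have hmemG1 : ∀ x, x ∈ G1 → t1 ≤ η x ∧ η x ≤ tm := by
    intro x hx; simpa only [hG1def, Set.mem_setOf_eq] using hx
  have hmemG2 : ∀ x, x ∈ G2 → tm < η x := by
    intro x hx; simpa only [hG2def, Set.mem_setOf_eq] using hx
  -- the six cell inequalities
  have e1 : (1 - t1) * ∫ x in Md ∩ G0, η x ∂μ ≤ t1 * ∫ x in Md ∩ G0, (1 - η x) ∂μ := by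
    apply hcellb _ _ _ _ hintη hint1 _ (hmMd.inter hmG0)
    rintro x ⟨_, hx⟩
    have := hmemG0 x hx
    nlinarith
  have e2 : (1 - t1) * ∫ x in C ∩ G0, η x ∂μ ≤ t1 * ∫ x in C ∩ G0, (1 - η x) ∂μ := by
    apply hcellb _ _ _ _ hintη hint1 _ (hmC.inter hmG0)
    rintro x ⟨_, hx⟩
    have := hmemG0 x hx
    nlinarith
  have e3 : t1 * ∫ x in B ∩ G1, (1 - η x) ∂μ ≤ (1 - t1) * ∫ x in B ∩ G1, η x ∂μ := by
    apply hcellb _ _ _ _ hint1 hintη _ (hmB.inter hmG1)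
    rintro x ⟨_, hx⟩
    have := hmemG1 x hx
    nlinarith [this.1]
  have e4 : (1 - tm) * ∫ x in C ∩ G1, η x ∂μ ≤ tm * ∫ x in C ∩ G1, (1 - η x) ∂μ := by
    apply hcellb _ _ _ _ hintη hint1 _ (hmC.inter hmG1)
    rintro x ⟨_, hx⟩
    have := hmemG1 x hx
    nlinarith [this.2]
  have e5 : tm * ∫ x in B ∩ G2, (1 - η x) ∂μ ≤ (1 - tm) * ∫ x in B ∩ G2, η x ∂μ := by
    apply hcellb _ _ _ _ hint1 hintη _ (hmB.inter hmG2)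
    rintro x ⟨_, hx⟩
    have := hmemG2 x hx
    nlinarith
  have e6 : tm * ∫ x in Md ∩ G2, (1 - η x) ∂μ ≤ (1 - tm) * ∫ x in Md ∩ G2, η x ∂μ := by
    apply hcellb _ _ _ _ hint1 hintη _ (hmMd.inter hmG2)
    rintro x ⟨_, hx⟩
    have := hmemG2 x hx
    nlinarith
  -- nonnegativity of two cells
  have hpc0nn : 0 ≤ ∫ x in C ∩ G0, η x ∂μ :=
    setIntegral_nonneg (hmC.inter hmG0) fun x _ => hη0 x
  have hqb2nn : 0 ≤ ∫ x in B ∩ G2, (1 - η x) ∂μ :=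
    setIntegral_nonneg (hmB.inter hmG2) fun x _ => by linarith [hη1 x]
  -- splits
  have s1 : ∫ x in B, η x ∂μ
      = ∫ x in B ∩ G0, η x ∂μ + ∫ x in B ∩ G1, η x ∂μ + ∫ x in B ∩ G2, η x ∂μ :=
    hsplitG η hintη B hmB
  have s2 : ∫ x in C, (1 - η x) ∂μ
      = ∫ x in C ∩ G0, (1 - η x) ∂μ + ∫ x in C ∩ G1, (1 - η x) ∂μ
        + ∫ x in C ∩ G2, (1 - η x) ∂μ :=
    hsplitG _ hint1 C hmC
  have s3 : ∫ x in Md, η x ∂μ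
      = ∫ x in Md ∩ G0, η x ∂μ + ∫ x in Md ∩ G1, η x ∂μ + ∫ x in Md ∩ G2, η x ∂μ :=
    hsplitG η hintη Md hmMd
  have s4 : ∫ x in Md, (1 - η x) ∂μ
      = ∫ x in Md ∩ G0, (1 - η x) ∂μ + ∫ x in Md ∩ G1, (1 - η x) ∂μ
        + ∫ x in Md ∩ G2, (1 - η x) ∂μ :=
    hsplitG _ hint1 Md hmMd
  have s5 : ∫ x in G0, η x ∂μ
      = ∫ x in B ∩ G0, η x ∂μ + ∫ x in Md ∩ G0, η x ∂μ + ∫ x in C ∩ G0, η x ∂μ :=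
    hsplitF η hintη G0 hmG0
  have s6 : ∫ x in G2, (1 - η x) ∂μ
      = ∫ x in B ∩ G2, (1 - η x) ∂μ + ∫ x in Md ∩ G2, (1 - η x) ∂μ
        + ∫ x in C ∩ G2, (1 - η x) ∂μ :=
    hsplitF _ hint1 G2 hmG2
  have s7 : ∫ x in G1, η x ∂μ
      = ∫ x in B ∩ G1, η x ∂μ + ∫ x in Md ∩ G1, η x ∂μ + ∫ x in C ∩ G1, η x ∂μ :=
    hsplitF η hintη G1 hmG1
  have s8 : ∫ x in G1, (1 - η x) ∂μ
      = ∫ x in B ∩ G1, (1 - η x) ∂μ + ∫ x in Md ∩ G1, (1 - η x) ∂μ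
        + ∫ x in C ∩ G1, (1 - η x) ∂μ :=
    hsplitF _ hint1 G1 hmG1
  -- feasibility in cell form
  have f1 : ∫ x in B ∩ G0, η x ∂μ + ∫ x in B ∩ G1, η x ∂μ + ∫ x in B ∩ G2, η x ∂μ
      ≤ ∫ x in B ∩ G0, η x ∂μ + ∫ x in Md ∩ G0, η x ∂μ + ∫ x in C ∩ G0, η x ∂μ := by
    rw [← s1, ← s5]; exact hfeasB'
  have f2 : ∫ x in C ∩ G0, (1 - η x) ∂μ + ∫ x in C ∩ G1, (1 - η x) ∂μ
        + ∫ x in C ∩ G2, (1 - η x) ∂μ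
      ≤ ∫ x in B ∩ G2, (1 - η x) ∂μ + ∫ x in Md ∩ G2, (1 - η x) ∂μ
        + ∫ x in C ∩ G2, (1 - η x) ∂μ := by
    rw [← s2, ← s6]; exact hfeasC'
  -- the core inequality
  have core := ambiguity_core_aux t1 tm c
    (∫ x in B ∩ G0, η x ∂μ) (∫ x in B ∩ G1, η x ∂μ) (∫ x in B ∩ G2, η x ∂μ)
    (∫ x in Md ∩ G0, η x ∂μ) (∫ x in Md ∩ G1, η x ∂μ) (∫ x in Md ∩ G2, η x ∂μ)
    (∫ x in C ∩ G0, η x ∂μ) (∫ x in C ∩ G1, η x ∂μ) (∫ x in C ∩ G2, η x ∂μ)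
    (∫ x in B ∩ G0, (1 - η x) ∂μ) (∫ x in B ∩ G1, (1 - η x) ∂μ)
    (∫ x in B ∩ G2, (1 - η x) ∂μ)
    (∫ x in Md ∩ G0, (1 - η x) ∂μ) (∫ x in Md ∩ G1, (1 - η x) ∂μ)
    (∫ x in Md ∩ G2, (1 - η x) ∂μ)
    (∫ x in C ∩ G0, (1 - η x) ∂μ) (∫ x in C ∩ G1, (1 - η x) ∂μ)
    (∫ x in C ∩ G2, (1 - η x) ∂μ)
    ht1pos htm1 ht1half hhalftm hc hctm hct1 hpc0nn hqb2nn
    e1 e2 e3 e4 e5 e6 f1 f2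
  -- rewrite the goal in integral form
  have hEvf : (P {ω | Y ω * f (X ω) < -ε}).toReal
      = ∫ x in B, η x ∂μ + ∫ x in C, (1 - η x) ∂μ :=
    hEvGen f B C hmB hmC
      (fun x => by simp only [hBdef, Set.mem_setOf_eq])
      (fun x => by simp only [hCdef, Set.mem_setOf_eq])
  have hEvfs : (P {ω | Y ω * fstar (X ω) < -ε}).toReal
      = ∫ x in G0, η x ∂μ + ∫ x in G2, (1 - η x) ∂μ :=
    hEvGen fstar G0 G2 hmG0 hmG2 hfsB hfsC
  have hAmbf : (P {ω | |f (X ω)| ≤ ε}).toReal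
      = ∫ x in Md, η x ∂μ + ∫ x in Md, (1 - η x) ∂μ :=
    hAmbGen f Md hmMd (fun x => by simp only [hMdef, Set.mem_setOf_eq])
  have hAmbfs : (P {ω | |fstar (X ω)| ≤ ε}).toReal
      = ∫ x in G1, η x ∂μ + ∫ x in G1, (1 - η x) ∂μ :=
    hAmbGen fstar G1 hmG1 hfsM
  rw [hEvf, hEvfs, hAmbf, hAmbfs]
  have hgoal : ∀ a b : ℝ, c * a ≤ b → a ≤ 1 / c * b := by
    intro a b h
    calc a = 1 / c * (c * a) := by field_simp
      _ ≤ 1 / c * b := by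
          apply mul_le_mul_of_nonneg_left h
          positivity
  apply hgoal
  rw [s1, s2, s3, s4, s5, s6, s7, s8]
  linarith [core]
end

section
/- Fix ε ≥ 0. Under Assumptions 1 and 2, with C = 1/(4c) + 1/2, for every measurable feasible f : 𝒳 → ℝ, the excess R̄-risk is controlled by the excess ε-hinge risk: R̄(f, ε) − R̄(f*, ε) ≤ C·(R_H(f, ε) − R_H(f*, ε)). -/
set_option maxHeartbeats 1000000


open MeasureTheory ProbabilityTheory
open scoped ENNReal



lemma psi_min
    (c t1 tm ε : ℝ) (hc : 0 < c) (hε : 0 ≤ ε)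
    (ht1c : c ≤ 1/2 - t1) (htmc : c ≤ tm - 1/2) (ht10 : 0 < t1) (htm1 : tm < 1)
    (C A B : ℝ) (hC : C = 1/(4*c) + 1/2)
    (hA : A = (C - 1/2)/t1 - 2*C) (hB : B = (C - 1/2)/(1 - tm) - 2*C)
    (η u v : ℝ) (hη0 : 0 ≤ η) (hη1 : η ≤ 1)
    (hv : v = if tm < η then 1+ε else if t1 ≤ η then ε * Real.sign (η - 1/2) else -(1+ε)) :
    C * (η * max 0 (1+ε-v) + (1-η) * max 0 (1+ε+v))
      + A * (η * (if v < -ε then 1 else 0)) + B * ((1-η) * (if ε < v then 1 else 0))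
      - 1/2 * (if |v| ≤ ε then 1 else 0)
    ≤ C * (η * max 0 (1+ε-u) + (1-η) * max 0 (1+ε+u))
      + A * (η * (if u < -ε then 1 else 0)) + B * ((1-η) * (if ε < u then 1 else 0))
      - 1/2 * (if |u| ≤ ε then 1 else 0) := by
  have hc2 : c < 1/2 := by linarith
  have hC0 : (0:ℝ) < C - 1/2 := by
    rw [hC]; have : 0 < 1/(4*c) := by positivity
    linarith
  have hCpos : (0:ℝ) < C := by linarith
  have ht1' : t1 ≤ 1/2 - c := by linarith
  have htm' : 1 - tm ≤ 1/2 - c := by linarith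
  have htm0 : 0 < 1 - tm := by linarith
  have hhc : (0:ℝ) < 1/2 - c := by linarith
  have hCc : (C - 1/2) * (4*c) = 1 := by rw [hC]; field_simp; ring
  have hAB : ∀ d : ℝ, 0 < d → d ≤ 1/2 - c → -(1/2) ≤ (C - 1/2)/d - 2*C := by
    intro d hd hd'
    have h1 : (C-1/2)/(1/2-c) ≤ (C-1/2)/d := div_le_div_of_nonneg_left hC0.le hd hd'
    have h2 : 2*C - 1/2 ≤ (C-1/2)/(1/2-c) := by
      rw [le_div_iff₀ hhc]; linarith only [hCc, hc]
    linarith only [h1, h2]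
  have hA2 : -(1/2) ≤ A := by rw [hA]; exact hAB t1 ht10 ht1'
  have hB2 : -(1/2) ≤ B := by rw [hB]; exact hAB (1-tm) htm0 htm'
  -- abbreviations
  obtain ⟨W, hW⟩ : ∃ x : ℝ, x = C*(1+2*ε*η) + A*η := ⟨_, rfl⟩
  obtain ⟨Vm, hVm⟩ : ∃ x : ℝ, x = η*(2*C*(1+ε)+A) := ⟨_, rfl⟩
  obtain ⟨Ve, hVe⟩ : ∃ x : ℝ, x = C*(1+2*ε-2*ε*η) + B*(1-η) := ⟨_, rfl⟩
  obtain ⟨V1, hV1⟩ : ∃ x : ℝ, x = (1-η)*(2*C*(1+ε)+B) := ⟨_, rfl⟩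
  obtain ⟨M, hM⟩ : ∃ x : ℝ, x = C*(1+ε) - C*ε*|1-2*η| - 1/2 := ⟨_, rfl⟩
  obtain ⟨M', hM'⟩ : ∃ x : ℝ, x = C*(1+2*ε*(1-η)) - 1/2 := ⟨_, rfl⟩
  obtain ⟨M'', hM''⟩ : ∃ x : ℝ, x = C*(1+2*ε*η) - 1/2 := ⟨_, rfl⟩
  have habs1 : 1-2*η ≤ |1-2*η| := le_abs_self _
  have habs2 : -(1-2*η) ≤ |1-2*η| := neg_le_abs _
  have hq1 : 0 ≤ C*ε*(|1-2*η| - (1-2*η)) :=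
    mul_nonneg (mul_nonneg hCpos.le hε) (by linarith only [habs1])
  have hq2 : 0 ≤ C*ε*(|1-2*η| + (1-2*η)) :=
    mul_nonneg (mul_nonneg hCpos.le hε) (by linarith only [habs2])
  have hAη : -(1/2) ≤ A*η := by
    have := mul_nonneg (by linarith only [hA2] : (0:ℝ) ≤ A + 1/2) hη0
    linarith only [this, hη1]
  have hBη : -(1/2) ≤ B*(1-η) := by
    have := mul_nonneg (by linarith only [hB2] : (0:ℝ) ≤ B + 1/2)
      (by linarith only [hη1] : (0:ℝ) ≤ 1-η)
    linarith only [this, hη0]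
  have hMM' : M ≤ M' := by rw [hM, hM']; linarith only [hq2]
  have hMM'' : M ≤ M'' := by rw [hM, hM'']; linarith only [hq1]
  have hMW : M ≤ W := by rw [hM, hW]; linarith only [hq1, hAη]
  have hMVe : M ≤ Ve := by rw [hM, hVe]; linarith only [hq2, hBη]
  have hidWVm : Vm = W + C*(2*η-1) := by rw [hVm, hW]; ring
  have hidVeV1 : V1 = Ve + C*(1-2*η) := by rw [hV1, hVe]; ring
  have hV1M' : (1-tm)*(V1 - M') = (C-1/2)*(tm-η) := by
    rw [hV1, hM', hB]; field_simp; ring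
  have hVmM'' : t1*(Vm - M'') = (C-1/2)*(η-t1) := by
    rw [hVm, hM'', hA]; field_simp; ring
  -- the value at v, bounded by each of the five quantities
  obtain ⟨Φv, hΦv⟩ : ∃ x : ℝ, x = C * (η * max 0 (1+ε-v) + (1-η) * max 0 (1+ε+v))
      + A * (η * (if v < -ε then 1 else 0)) + B * ((1-η) * (if ε < v then 1 else 0))
      - 1/2 * (if |v| ≤ ε then 1 else 0) := ⟨_, rfl⟩
  rw [← hΦv]
  have hbounds : Φv ≤ W ∧ Φv ≤ Vm ∧ Φv ≤ M ∧ Φv ≤ Ve ∧ Φv ≤ V1 := by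
    rcases lt_or_ge tm η with hz1 | hz1
    · -- zone η > tm : Φv = V1
      have hvv : v = 1+ε := by rw [hv, if_pos hz1]
      have hval : Φv = V1 := by
        rw [hΦv, hvv, if_neg (by intro h; linarith), if_pos (by linarith),
          if_neg (by rw [abs_of_nonneg (by linarith : (0:ℝ) ≤ 1+ε)]; intro h; linarith),
          max_eq_left (by linarith : 1+ε-(1+ε) ≤ 0),
          max_eq_right (by linarith : (0:ℝ) ≤ 1+ε+(1+ε)), hV1]
        ring
      have hη2 : 1/2 ≤ η := by linarith
      have hMeq : M = M' := by
        rw [hM, hM', abs_of_nonpos (by linarith : 1-2*η ≤ 0)]; ring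
      have hV1M : V1 ≤ M := by
        have h1 : 0 ≤ (C-1/2)*(η-tm) := mul_nonneg hC0.le (by linarith only [hz1])
        have h0 : (1-tm)*(V1-M') ≤ (1-tm)*0 := by
          rw [hV1M']; linarith only [h1]
        have h2 := (mul_le_mul_iff_right₀ htm0).mp h0
        linarith only [h2, hMeq, hMM']
      have hWVm : W ≤ Vm := by
        have h1 : 0 ≤ C*(2*η-1) := mul_nonneg hCpos.le (by linarith only [hη2])
        linarith only [hidWVm, h1]
      have hV1Ve : V1 ≤ Ve := by
        have h1 : 0 ≤ C*(2*η-1) := mul_nonneg hCpos.le (by linarith only [hη2])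
        linarith only [hidVeV1, h1]
      exact ⟨by rw [hval]; linarith only [hV1M, hMW],
        by rw [hval]; linarith only [hV1M, hMW, hWVm],
        by rw [hval]; exact hV1M,
        by rw [hval]; exact hV1Ve,
        le_of_eq hval⟩
    · rcases le_or_gt t1 η with hz2 | hz2
      · -- middle zone : Φv = M
        have hvv : v = ε * Real.sign (η - 1/2) := by
          rw [hv, if_neg (not_lt.2 hz1), if_pos hz2]
        have hval : Φv = M := by
          rcases lt_trichotomy η (1/2) with hη2 | hη2 | hη2
          · have hs : Real.sign (η - 1/2) = -1 := Real.sign_of_neg (by linarith)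
            have hvv2 : v = -ε := by rw [hvv, hs]; ring
            have hMeq : M = M'' := by
              rw [hM, hM'', abs_of_nonneg (by linarith : (0:ℝ) ≤ 1-2*η)]; ring
            rw [hΦv, hvv2, if_neg (by intro h; linarith), if_neg (by intro h; linarith),
              if_pos (by rw [abs_neg, abs_of_nonneg hε]),
              max_eq_right (by linarith : (0:ℝ) ≤ 1+ε-(-ε)),
              max_eq_right (by linarith : (0:ℝ) ≤ 1+ε+(-ε)), hMeq, hM'']
            ring
          · have hs : Real.sign (η - 1/2) = 0 := by
              rw [show η - (1/2:ℝ) = 0 by linarith, Real.sign_zero]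
            have hvv2 : v = 0 := by rw [hvv, hs]; ring
            rw [hΦv, hvv2, if_neg (by intro h; linarith), if_neg (by intro h; linarith),
              if_pos (by rw [abs_zero]; exact hε),
              max_eq_right (by linarith : (0:ℝ) ≤ 1+ε-0),
              max_eq_right (by linarith : (0:ℝ) ≤ 1+ε+0), hM,
              show |1-2*η| = 0 by rw [show 1-2*η = 0 by linarith, abs_zero]]
            ring
          · have hs : Real.sign (η - 1/2) = 1 := Real.sign_of_pos (by linarith)
            have hvv2 : v = ε := by rw [hvv, hs]; ring
            have hMeq : M = M' := by
              rw [hM, hM', abs_of_nonpos (by linarith : 1-2*η ≤ 0)]; ring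
            rw [hΦv, hvv2, if_neg (by intro h; linarith), if_neg (by intro h; linarith),
              if_pos (by rw [abs_of_nonneg hε]),
              max_eq_right (by linarith : (0:ℝ) ≤ 1+ε-ε),
              max_eq_right (by linarith : (0:ℝ) ≤ 1+ε+ε), hMeq, hM']
            ring
        have hMVm : M ≤ Vm := by
          have h1 : 0 ≤ (C-1/2)*(η-t1) := mul_nonneg hC0.le (by linarith only [hz2])
          have h0 : t1*0 ≤ t1*(Vm-M'') := by rw [hVmM'']; linarith only [h1]
          have h2 := (mul_le_mul_iff_right₀ ht10).mp h0
          linarith only [h2, hMM'']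
        have hMV1 : M ≤ V1 := by
          have h1 : 0 ≤ (C-1/2)*(tm-η) := mul_nonneg hC0.le (by linarith only [hz1])
          have h0 : (1-tm)*0 ≤ (1-tm)*(V1-M') := by rw [hV1M']; linarith only [h1]
          have h2 := (mul_le_mul_iff_right₀ htm0).mp h0
          linarith only [h2, hMM']
        exact ⟨by rw [hval]; exact hMW, by rw [hval]; exact hMVm, le_of_eq hval,
          by rw [hval]; exact hMVe, by rw [hval]; exact hMV1⟩
      · -- zone η < t1 : Φv = Vm
        have hvv : v = -(1+ε) := by rw [hv, if_neg (not_lt.2 hz1), if_neg (not_le.2 hz2)]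
        have hval : Φv = Vm := by
          rw [hΦv, hvv, if_pos (by linarith), if_neg (by intro h; linarith),
            if_neg (by rw [abs_neg, abs_of_nonneg (by linarith : (0:ℝ) ≤ 1+ε)]; intro h; linarith),
            max_eq_right (by linarith : (0:ℝ) ≤ 1+ε-(-(1+ε))),
            max_eq_left (by linarith : 1+ε+(-(1+ε)) ≤ 0), hVm]
          ring
        have hη2 : η ≤ 1/2 := by linarith
        have hMeq : M = M'' := by
          rw [hM, hM'', abs_of_nonneg (by linarith : (0:ℝ) ≤ 1-2*η)]; ring
        have hVmM : Vm ≤ M := by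
          have h1 : 0 ≤ (C-1/2)*(t1-η) := mul_nonneg hC0.le (by linarith only [hz2])
          have h0 : t1*(Vm-M'') ≤ t1*0 := by rw [hVmM'']; linarith only [h1]
          have h2 := (mul_le_mul_iff_right₀ ht10).mp h0
          linarith only [h2, hMeq]
        have hVmW : Vm ≤ W := by
          have h1 : 0 ≤ C*(1-2*η) := mul_nonneg hCpos.le (by linarith only [hη2])
          linarith only [hidWVm, h1]
        have hVeV1 : Ve ≤ V1 := by
          have h1 : 0 ≤ C*(1-2*η) := mul_nonneg hCpos.le (by linarith only [hη2])
          linarith only [hidVeV1, h1]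
        exact ⟨by rw [hval]; exact hVmW, le_of_eq hval, by rw [hval]; exact hVmM,
          by rw [hval]; linarith only [hVmM, hMVe],
          by rw [hval]; linarith only [hVmM, hMVe, hVeV1]⟩
  obtain ⟨hb1, hb2, hb3, hb4, hb5⟩ := hbounds
  -- now case on u
  rcases lt_or_ge u (-ε) with hu | hu
  · rw [if_pos hu, if_neg (by intro h; linarith), if_neg (by
      intro h
      have h2 : -u ≤ |u| := neg_le_abs u
      have h3 : |u| ≤ ε := h
      linarith),
      max_eq_right (by linarith : (0:ℝ) ≤ 1+ε-u)]
    rcases le_or_gt (-(1+ε)) u with hu2 | hu2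
    · rw [max_eq_right (by linarith : (0:ℝ) ≤ 1+ε+u)]
      rcases le_or_gt η (1/2) with hη2 | hη2
      · have hint : 0 ≤ C*((u+(1+ε))*(1-2*η)) :=
          mul_nonneg hCpos.le (mul_nonneg (by linarith) (by linarith))
        linarith only [hb2, hVm, hint]
      · have hint : 0 ≤ C*((-(u+ε))*(2*η-1)) :=
          mul_nonneg hCpos.le (mul_nonneg (by linarith) (by linarith))
        linarith only [hb1, hW, hint]
    · rw [max_eq_left (by linarith : 1+ε+u ≤ 0)]
      have hint : 0 ≤ C*(η*(-(1+ε)-u)) :=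
        mul_nonneg hCpos.le (mul_nonneg hη0 (by linarith))
      linarith only [hb2, hVm, hint]
  · rcases le_or_gt u ε with hu3 | hu3
    · rw [if_neg (by intro h; linarith), if_neg (by intro h; linarith),
        if_pos (abs_le.2 ⟨by linarith, hu3⟩),
        max_eq_right (by linarith : (0:ℝ) ≤ 1+ε-u),
        max_eq_right (by linarith : (0:ℝ) ≤ 1+ε+u)]
      have h2 : |u*(1-2*η)| ≤ ε*|1-2*η| := by
        rw [abs_mul]
        exact mul_le_mul_of_nonneg_right (abs_le.2 ⟨by linarith, hu3⟩) (abs_nonneg _)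
      have h3 : -(ε*|1-2*η|) ≤ u*(1-2*η) := (abs_le.1 h2).1
      have hint : C*(-(ε*|1-2*η|)) ≤ C*(u*(1-2*η)) :=
        mul_le_mul_of_nonneg_left h3 hCpos.le
      linarith only [hb3, hM, hint]
    · rw [if_neg (by intro h; linarith), if_pos hu3, if_neg (by
        intro h
        have h2 : u ≤ |u| := le_abs_self u
        have h3 : |u| ≤ ε := h
        linarith),
        max_eq_right (by linarith : (0:ℝ) ≤ 1+ε+u)]
      rcases le_or_gt u (1+ε) with hu4 | hu4
      · rw [max_eq_right (by linarith : (0:ℝ) ≤ 1+ε-u)]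
        rcases le_or_gt η (1/2) with hη2 | hη2
        · have hint : 0 ≤ C*((u-ε)*(1-2*η)) :=
            mul_nonneg hCpos.le (mul_nonneg (by linarith) (by linarith))
          linarith only [hb4, hVe, hint]
        · have hint : 0 ≤ C*(((1+ε)-u)*(2*η-1)) :=
            mul_nonneg hCpos.le (mul_nonneg (by linarith) (by linarith))
          linarith only [hb5, hV1, hint]
      · rw [max_eq_left (by linarith : 1+ε-u ≤ 0)]
        have hint : 0 ≤ C*((1-η)*(u-(1+ε))) :=
          mul_nonneg hCpos.le (mul_nonneg (by linarith) (by linarith))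
        linarith only [hb5, hV1, hint]


lemma AB_lower (c d C : ℝ) (hc : 0 < c) (hd : 0 < d) (hd' : d ≤ 1/2 - c)
    (hC : C = 1/(4*c) + 1/2) : -(1/2) ≤ (C - 1/2)/d - 2*C := by
  have hhc : (0:ℝ) < 1/2 - c := lt_of_lt_of_le hd hd'
  have hC0 : (0:ℝ) < C - 1/2 := by
    rw [hC]; have : 0 < 1/(4*c) := by positivity
    linarith
  have hCc : (C - 1/2) * (4*c) = 1 := by rw [hC]; field_simp; ring
  have h1 : (C-1/2)/(1/2-c) ≤ (C-1/2)/d := div_le_div_of_nonneg_left hC0.le hd hd'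
  have h2 : 2*C - 1/2 ≤ (C-1/2)/(1/2-c) := by
    rw [le_div_iff₀ hhc]; linarith only [hCc, hc]
  linarith only [h1, h2]

/-- Under Assumptions 1 and 2, with `C = 1/(4c) + 1/2`, for every measurable feasible `f`, the excess `R̄`-risk is controlled by the excess ε-hinge risk: `R̄(f, ε) − R̄(f*, ε) ≤ C·(R_H(f, ε) − R_H(f*, ε))`. -/
theorem excess_Rbar_le_excess_hinge
    {𝒳 : Type*} [MeasurableSpace 𝒳]
    {Ω : Type*} [MeasurableSpace Ω] (P : Measure Ω) [IsProbabilityMeasure P]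
    (X : Ω → 𝒳) (Y : Ω → ℝ) (hX : Measurable X) (hY : Measurable Y)
    (hYval : ∀ ω, Y ω = 1 ∨ Y ω = -1)
    (hpos1 : 0 < P {ω | Y ω = 1}) (hposm : 0 < P {ω | Y ω = -1})
    -- η is a measurable version of the regression function x ↦ P(Y = 1 ∣ X = x)
    (η : 𝒳 → ℝ) (hη : Measurable η) (hη01 : ∀ x, η x ∈ Set.Icc (0 : ℝ) 1)
    (hreg : ∀ A : Set 𝒳, MeasurableSet A →
      P {ω | X ω ∈ A ∧ Y ω = 1} = ∫⁻ x in A, ENNReal.ofReal (η x) ∂(P.map X))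
    -- noncoverage levels and thresholds
    (αm α1 : ℝ) (hαm : αm ∈ Set.Ioo (0 : ℝ) 1) (hα1 : α1 ∈ Set.Ioo (0 : ℝ) 1)
    (tm t1 : ℝ)
    (htm : P[|{ω | Y ω = -1}] {ω | tm < η (X ω)} = ENNReal.ofReal αm)
    (ht1 : P[|{ω | Y ω = 1}] {ω | η (X ω) < t1} = ENNReal.ofReal α1)
    -- Assumption 1: the distribution of η(X) is atomless under both class-conditional
    -- distributions, and t1 ≤ 1/2 ≤ tm
    (hatomlessm : ∀ t : ℝ, P[|{ω | Y ω = -1}] {ω | η (X ω) = t} = 0)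
    (hatomless1 : ∀ t : ℝ, P[|{ω | Y ω = 1}] {ω | η (X ω) = t} = 0)
    (ht1half : t1 ≤ 1 / 2) (hhalftm : 1 / 2 ≤ tm)
    -- Assumption 2
    (c : ℝ) (hc : 0 < c) (hctm : c ≤ tm - 1 / 2) (hct1 : c ≤ 1 / 2 - t1)
    (ε : ℝ) (hε : 0 ≤ ε)
    -- the Bayes-type rule f*
    (fstar : 𝒳 → ℝ)
    (hfstar : ∀ x, fstar x =
      if tm < η x then 1 + ε
      else if t1 ≤ η x then ε * Real.sign (η x - 1 / 2)
      else -(1 + ε))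
    -- an arbitrary measurable feasible competitor f
    (f : 𝒳 → ℝ) (hf : Measurable f)
    (hfeasm : P[|{ω | Y ω = -1}] {ω | Y ω * f (X ω) < -ε} ≤ ENNReal.ofReal αm)
    (hfeas1 : P[|{ω | Y ω = 1}] {ω | Y ω * f (X ω) < -ε} ≤ ENNReal.ofReal α1)
    (hfInt : Integrable (fun ω => max 0 (1 + ε - Y ω * f (X ω))) P) :
    ((P {ω | Y ω * f (X ω) < -ε}).toReal
        + (1 / 2) * (P {ω | |f (X ω)| ≤ ε}).toReal)
      - ((P {ω | Y ω * fstar (X ω) < -ε}).toReal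
        + (1 / 2) * (P {ω | |fstar (X ω)| ≤ ε}).toReal)
    ≤ (1 / (4 * c) + 1 / 2) *
      ((∫ ω, max 0 (1 + ε - Y ω * f (X ω)) ∂P)
        - ∫ ω, max 0 (1 + ε - Y ω * fstar (X ω)) ∂P) := by
  -- basic sets and measurability
  have hs1 : MeasurableSet {ω | Y ω = 1} := hY (measurableSet_singleton 1)
  have hsm : MeasurableSet {ω | Y ω = -1} := hY (measurableSet_singleton (-1))
  have hsm_eq : {ω | Y ω = -1} = {ω | Y ω = 1}ᶜ := by
    ext ω
    simp only [Set.mem_setOf_eq, Set.mem_compl_iff]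
    constructor
    · intro h h'; rw [h'] at h; norm_num at h
    · intro h; rcases hYval ω with h' | h'
      · exact absurd h' h
      · exact h'
  have hμprob : IsProbabilityMeasure (P.map X) := Measure.isProbabilityMeasure_map hX.aemeasurable
  have hd1 : Measurable fun x => ENNReal.ofReal (η x) := hη.ennreal_ofReal
  have hdm : Measurable fun x => ENNReal.ofReal (1 - η x) :=
    (measurable_const.sub hη).ennreal_ofReal
  have hd1dm : ∀ x, ENNReal.ofReal (η x) + ENNReal.ofReal (1 - η x) = 1 := by
    intro x
    rw [← ENNReal.ofReal_add (hη01 x).1 (by linarith [(hη01 x).2])]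
    norm_num
  -- thresholds are interior
  have ht10 : 0 < t1 := by
    by_contra h
    push_neg at h
    have hempty : {ω | η (X ω) < t1} = (∅ : Set Ω) := by
      ext ω
      simp only [Set.mem_setOf_eq, Set.mem_empty_iff_false, iff_false, not_lt]
      linarith [(hη01 (X ω)).1]
    rw [hempty, measure_empty] at ht1
    have := ENNReal.ofReal_eq_zero.mp ht1.symm
    linarith [hα1.1]
  have htm1 : tm < 1 := by
    by_contra h
    push_neg at h
    have hempty : {ω | tm < η (X ω)} = (∅ : Set Ω) := by
      ext ω
      simp only [Set.mem_setOf_eq, Set.mem_empty_iff_false, iff_false, not_lt]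
      linarith [(hη01 (X ω)).2]
    rw [hempty, measure_empty] at htm
    have := ENNReal.ofReal_eq_zero.mp htm.symm
    linarith [hαm.1]
  -- constants
  obtain ⟨C, hC⟩ : ∃ x : ℝ, x = 1/(4*c) + 1/2 := ⟨_, rfl⟩
  obtain ⟨A, hA⟩ : ∃ x : ℝ, x = (C - 1/2)/t1 - 2*C := ⟨_, rfl⟩
  obtain ⟨B, hB⟩ : ∃ x : ℝ, x = (C - 1/2)/(1 - tm) - 2*C := ⟨_, rfl⟩
  have hA2 : -(1/2) ≤ A := hA ▸ AB_lower c t1 C hc ht10 (by linarith) hC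
  have hB2 : -(1/2) ≤ B := hB ▸ AB_lower c (1-tm) C hc (by linarith) (by linarith) hC
  have hCpos : (0:ℝ) ≤ C := by rw [hC]; positivity
  have hA1 : (0:ℝ) ≤ A + 1 := by linarith
  have hB1 : (0:ℝ) ≤ B + 1 := by linarith
  -- measurability of fstar
  have hsignm : Measurable fun x => ε * Real.sign (η x - 1/2) := by
    have heq : (fun x => ε * Real.sign (η x - 1/2))
        = fun x => if η x - 1/2 < 0 then -ε else if (0:ℝ) < η x - 1/2 then ε else 0 := by
      funext x
      rcases lt_trichotomy (η x - 1/2) 0 with h | h | h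
      · rw [Real.sign_of_neg h, if_pos h]; ring
      · rw [h, Real.sign_zero, if_neg (lt_irrefl 0), if_neg (lt_irrefl 0)]; ring
      · rw [Real.sign_of_pos h, if_neg (by linarith), if_pos h]; ring
    rw [heq]
    exact Measurable.ite (measurableSet_lt (hη.sub measurable_const) measurable_const)
      measurable_const
      (Measurable.ite (measurableSet_lt measurable_const (hη.sub measurable_const))
        measurable_const measurable_const)
  have hfsm : Measurable fstar := by
    have : fstar = fun x =>
        if tm < η x then 1 + ε
        else if t1 ≤ η x then ε * Real.sign (η x - 1/2)
        else -(1+ε) := funext hfstar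
    rw [this]
    exact Measurable.ite (measurableSet_lt measurable_const hη) measurable_const
      (Measurable.ite (measurableSet_le measurable_const hη) hsignm measurable_const)
  -- range of fstar
  have hsign_range : ∀ r : ℝ, -1 ≤ Real.sign r ∧ Real.sign r ≤ 1 := by
    intro r
    rcases lt_trichotomy r 0 with h | h | h
    · rw [Real.sign_of_neg h]; norm_num
    · rw [h, Real.sign_zero]; norm_num
    · rw [Real.sign_of_pos h]; norm_num
  have hfs_range : ∀ x, -(1+ε) ≤ fstar x ∧ fstar x ≤ 1+ε := by
    intro x
    rw [hfstar x]
    split_ifs with h1 h2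
    · exact ⟨by linarith, le_rfl⟩
    · obtain ⟨hl, hr⟩ := hsign_range (η x - 1/2)
      constructor
      · nlinarith
      · nlinarith
    · exact ⟨le_rfl, by linarith⟩
  -- sets of fstar
  have hTS1 : {x | fstar x < -ε} = {x | η x < t1} := by
    ext x
    simp only [Set.mem_setOf_eq]
    rw [hfstar x]
    split_ifs with h1 h2
    · constructor
      · intro h; linarith
      · intro h; linarith
    · obtain ⟨hl, hr⟩ := hsign_range (η x - 1/2)
      constructor
      · intro h; nlinarith
      · intro h; linarith
    · constructor
      · intro _; push_neg at h1 h2; linarith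
      · intro _; linarith
  have hTS2 : {x | ε < fstar x} = {x | tm < η x} := by
    ext x
    simp only [Set.mem_setOf_eq]
    rw [hfstar x]
    split_ifs with h1 h2
    · constructor
      · intro _; exact h1
      · intro _; linarith
    · obtain ⟨hl, hr⟩ := hsign_range (η x - 1/2)
      constructor
      · intro h; nlinarith
      · intro h; exact absurd h h1
    · constructor
      · intro h; linarith
      · intro h; exact absurd h h1
  have hTS3 : {x | |fstar x| ≤ ε} = {x | t1 ≤ η x ∧ η x ≤ tm} := by
    ext x
    simp only [Set.mem_setOf_eq, abs_le]
    rw [hfstar x]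
    split_ifs with h1 h2
    · constructor
      · intro ⟨_, h⟩; linarith
      · intro ⟨_, h⟩; linarith
    · obtain ⟨hl, hr⟩ := hsign_range (η x - 1/2)
      constructor
      · intro _; exact ⟨h2, not_lt.mp h1⟩
      · intro _; constructor <;> nlinarith
    · constructor
      · intro ⟨h, _⟩; linarith
      · intro ⟨h, _⟩; exact absurd h h2
  -- splitting P over the two classes
  have hPsplit : ∀ E : Set Ω, MeasurableSet E →
      P E = P (E ∩ {ω | Y ω = 1}) + P (E ∩ {ω | Y ω = -1}) := by
    intro E hE
    rw [hsm_eq, ← Set.diff_eq, measure_inter_add_diff E hs1]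
  -- class-1 measure as a density integral
  have hw1 : ∀ S : Set 𝒳, MeasurableSet S →
      P ((X ⁻¹' S) ∩ {ω | Y ω = 1}) = ∫⁻ x in S, ENNReal.ofReal (η x) ∂(P.map X) := by
    intro S hS
    have := hreg S hS
    have hset : {ω | X ω ∈ S ∧ Y ω = 1} = (X ⁻¹' S) ∩ {ω | Y ω = 1} := rfl
    rw [hset] at this
    exact this
  -- bounds for density integrals
  have hd1fin : ∀ S : Set 𝒳, (∫⁻ x in S, ENNReal.ofReal (η x) ∂(P.map X)) ≤ 1 := by
    intro S
    calc ∫⁻ x in S, ENNReal.ofReal (η x) ∂(P.map X)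
        ≤ ∫⁻ _ in S, 1 ∂(P.map X) :=
          lintegral_mono fun x => ENNReal.ofReal_le_one.2 (hη01 x).2
      _ = (P.map X) S := setLIntegral_one S
      _ ≤ 1 := prob_le_one
  have hdmfin : ∀ S : Set 𝒳, (∫⁻ x in S, ENNReal.ofReal (1 - η x) ∂(P.map X)) ≤ 1 := by
    intro S
    calc ∫⁻ x in S, ENNReal.ofReal (1 - η x) ∂(P.map X)
        ≤ ∫⁻ _ in S, 1 ∂(P.map X) :=
          lintegral_mono fun x => ENNReal.ofReal_le_one.2 (by linarith [(hη01 x).1])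
      _ = (P.map X) S := setLIntegral_one S
      _ ≤ 1 := prob_le_one
  -- class-(-1) measure as a density integral
  have hwm : ∀ S : Set 𝒳, MeasurableSet S →
      P ((X ⁻¹' S) ∩ {ω | Y ω = -1}) = ∫⁻ x in S, ENNReal.ofReal (1 - η x) ∂(P.map X) := by
    intro S hS
    have h1 : P (X ⁻¹' S) = (P.map X) S := (Measure.map_apply hX hS).symm
    have h2 := hPsplit (X ⁻¹' S) (hX hS)
    have h3 : (∫⁻ x in S, ENNReal.ofReal (η x) ∂(P.map X))
        + ∫⁻ x in S, ENNReal.ofReal (1 - η x) ∂(P.map X) = (P.map X) S := by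
      rw [← lintegral_add_left hd1]
      rw [lintegral_congr fun x => hd1dm x]
      exact setLIntegral_one S
    have h4 : (∫⁻ x in S, ENNReal.ofReal (η x) ∂(P.map X)) + P ((X ⁻¹' S) ∩ {ω | Y ω = -1})
        = (∫⁻ x in S, ENNReal.ofReal (η x) ∂(P.map X))
          + ∫⁻ x in S, ENNReal.ofReal (1 - η x) ∂(P.map X) := by
      conv_lhs => rw [← hw1 S hS]
      rw [← h2, h1, ← h3]
    exact (ENNReal.add_right_inj (ne_top_of_le_ne_top ENNReal.one_ne_top (hd1fin S))).mp h4
  -- transfer of lintegrals over the classes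
  have hmap1 : (P.restrict {ω | Y ω = 1}).map X
      = (P.map X).withDensity (fun x => ENNReal.ofReal (η x)) := by
    apply Measure.ext
    intro S hS
    rw [Measure.map_apply hX hS, Measure.restrict_apply (hX hS), withDensity_apply _ hS]
    exact hw1 S hS
  have hmapm : (P.restrict {ω | Y ω = -1}).map X
      = (P.map X).withDensity (fun x => ENNReal.ofReal (1 - η x)) := by
    apply Measure.ext
    intro S hS
    rw [Measure.map_apply hX hS, Measure.restrict_apply (hX hS), withDensity_apply _ hS]
    exact hwm S hS
  have hlint1 : ∀ G : 𝒳 → ℝ≥0∞, Measurable G →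
      ∫⁻ ω in {ω | Y ω = 1}, G (X ω) ∂P = ∫⁻ x, ENNReal.ofReal (η x) * G x ∂(P.map X) := by
    intro G hG
    rw [← lintegral_map hG hX, hmap1, lintegral_withDensity_eq_lintegral_mul _ hd1 hG]
    rfl
  have hlintm : ∀ G : 𝒳 → ℝ≥0∞, Measurable G →
      ∫⁻ ω in {ω | Y ω = -1}, G (X ω) ∂P
        = ∫⁻ x, ENNReal.ofReal (1 - η x) * G x ∂(P.map X) := by
    intro G hG
    rw [← lintegral_map hG hX, hmapm, lintegral_withDensity_eq_lintegral_mul _ hdm hG]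
    rfl
  -- error events decompose
  have hEg : ∀ g : 𝒳 → ℝ, Measurable g →
      P {ω | Y ω * g (X ω) < -ε}
        = (∫⁻ x in {x | g x < -ε}, ENNReal.ofReal (η x) ∂(P.map X))
          + ∫⁻ x in {x | ε < g x}, ENNReal.ofReal (1 - η x) ∂(P.map X) := by
    intro g hg
    have hE : MeasurableSet {ω | Y ω * g (X ω) < -ε} :=
      measurableSet_lt (hY.mul (hg.comp hX)) measurable_const
    have h1 : {ω | Y ω * g (X ω) < -ε} ∩ {ω | Y ω = 1}
        = (X ⁻¹' {x | g x < -ε}) ∩ {ω | Y ω = 1} := by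
      ext ω
      simp only [Set.mem_inter_iff, Set.mem_setOf_eq, Set.mem_preimage]
      constructor
      · rintro ⟨h, hy⟩
        refine ⟨?_, hy⟩
        rw [hy, one_mul] at h
        exact h
      · rintro ⟨h, hy⟩
        refine ⟨?_, hy⟩
        rw [hy, one_mul]
        exact h
    have hm : {ω | Y ω * g (X ω) < -ε} ∩ {ω | Y ω = -1}
        = (X ⁻¹' {x | ε < g x}) ∩ {ω | Y ω = -1} := by
      ext ω
      simp only [Set.mem_inter_iff, Set.mem_setOf_eq, Set.mem_preimage]
      constructor
      · rintro ⟨h, hy⟩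
        refine ⟨?_, hy⟩
        rw [hy] at h
        linarith
      · rintro ⟨h, hy⟩
        refine ⟨?_, hy⟩
        rw [hy]
        linarith
    rw [hPsplit _ hE, h1, hm, hw1 _ (measurableSet_lt hg measurable_const),
      hwm _ (measurableSet_lt measurable_const hg)]
  -- abstention events
  have hAg : ∀ g : 𝒳 → ℝ, Measurable g →
      P {ω | |g (X ω)| ≤ ε} = (P.map X) {x | |g x| ≤ ε} := by
    intro g hg
    rw [Measure.map_apply hX (measurableSet_le hg.abs measurable_const)]
    rfl
  -- hinge risk decomposes
  have hHg : ∀ g : 𝒳 → ℝ, Measurable g →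
      ∫⁻ ω, ENNReal.ofReal (max 0 (1 + ε - Y ω * g (X ω))) ∂P
        = ∫⁻ x, ENNReal.ofReal (η x) * ENNReal.ofReal (max 0 (1 + ε - g x))
            + ENNReal.ofReal (1 - η x) * ENNReal.ofReal (max 0 (1 + ε + g x)) ∂(P.map X) := by
    intro g hg
    have hG1 : Measurable fun x => ENNReal.ofReal (max 0 (1 + ε - g x)) :=
      (measurable_const.max (measurable_const.sub hg)).ennreal_ofReal
    have hG2 : Measurable fun x => ENNReal.ofReal (max 0 (1 + ε + g x)) :=
      (measurable_const.max (measurable_const.add hg)).ennreal_ofReal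
    have hsplit := lintegral_add_compl
      (fun ω => ENNReal.ofReal (max 0 (1 + ε - Y ω * g (X ω)))) hs1 (μ := P)
    have hc1 : ∫⁻ ω in {ω | Y ω = 1}, ENNReal.ofReal (max 0 (1 + ε - Y ω * g (X ω))) ∂P
        = ∫⁻ ω in {ω | Y ω = 1}, ENNReal.ofReal (max 0 (1 + ε - g (X ω))) ∂P := by
      apply setLIntegral_congr_fun_ae hs1
      filter_upwards with ω hω
      rw [show Y ω = 1 from hω, one_mul]
    have hcm : ∫⁻ ω in {ω | Y ω = 1}ᶜ, ENNReal.ofReal (max 0 (1 + ε - Y ω * g (X ω))) ∂P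
        = ∫⁻ ω in {ω | Y ω = -1}, ENNReal.ofReal (max 0 (1 + ε + g (X ω))) ∂P := by
      rw [← hsm_eq]
      apply setLIntegral_congr_fun_ae hsm
      filter_upwards with ω hω
      rw [show Y ω = -1 from hω]
      ring_nf
    rw [← hsplit, hc1, hcm, hlint1 _ hG1, hlintm _ hG2, ← lintegral_add_left (hd1.fun_mul hG1)]
  -- event intersections (again, standalone)
  have hint1 : ∀ g : 𝒳 → ℝ, {ω | Y ω * g (X ω) < -ε} ∩ {ω | Y ω = 1}
      = (X ⁻¹' {x | g x < -ε}) ∩ {ω | Y ω = 1} := by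
    intro g
    ext ω
    simp only [Set.mem_inter_iff, Set.mem_setOf_eq, Set.mem_preimage]
    constructor
    · rintro ⟨h, hy⟩
      refine ⟨?_, hy⟩
      rw [hy, one_mul] at h
      exact h
    · rintro ⟨h, hy⟩
      refine ⟨?_, hy⟩
      rw [hy, one_mul]
      exact h
  have hintm : ∀ g : 𝒳 → ℝ, {ω | Y ω * g (X ω) < -ε} ∩ {ω | Y ω = -1}
      = (X ⁻¹' {x | ε < g x}) ∩ {ω | Y ω = -1} := by
    intro g
    ext ω
    simp only [Set.mem_inter_iff, Set.mem_setOf_eq, Set.mem_preimage]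
    constructor
    · rintro ⟨h, hy⟩
      refine ⟨?_, hy⟩
      rw [hy] at h
      linarith
    · rintro ⟨h, hy⟩
      refine ⟨?_, hy⟩
      rw [hy]
      linarith
  -- feasibility transfer
  have hfeas1' : (∫⁻ x in {x | f x < -ε}, ENNReal.ofReal (η x) ∂(P.map X))
      ≤ ∫⁻ x in {x | η x < t1}, ENNReal.ofReal (η x) ∂(P.map X) := by
    rw [cond_apply hs1 P] at hfeas1 ht1
    have hle := le_of_le_of_eq hfeas1 ht1.symm
    have hkey := (ENNReal.mul_le_mul_iff_right (ENNReal.inv_ne_zero.2 (measure_ne_top P _))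
      (ENNReal.inv_ne_top.2 hpos1.ne')).mp hle
    calc (∫⁻ x in {x | f x < -ε}, ENNReal.ofReal (η x) ∂(P.map X))
        = P ((X ⁻¹' {x | f x < -ε}) ∩ {ω | Y ω = 1}) :=
          (hw1 _ (measurableSet_lt hf measurable_const)).symm
      _ = P ({ω | Y ω * f (X ω) < -ε} ∩ {ω | Y ω = 1}) := by rw [hint1 f]
      _ = P ({ω | Y ω = 1} ∩ {ω | Y ω * f (X ω) < -ε}) := by rw [Set.inter_comm]
      _ ≤ P ({ω | Y ω = 1} ∩ {ω | η (X ω) < t1}) := hkey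
      _ = P ((X ⁻¹' {x | η x < t1}) ∩ {ω | Y ω = 1}) := by rw [Set.inter_comm]; rfl
      _ = ∫⁻ x in {x | η x < t1}, ENNReal.ofReal (η x) ∂(P.map X) :=
          hw1 _ (measurableSet_lt hη measurable_const)
  have hfeasm' : (∫⁻ x in {x | ε < f x}, ENNReal.ofReal (1 - η x) ∂(P.map X))
      ≤ ∫⁻ x in {x | tm < η x}, ENNReal.ofReal (1 - η x) ∂(P.map X) := by
    rw [cond_apply hsm P] at hfeasm htm
    have hle := le_of_le_of_eq hfeasm htm.symm
    have hkey := (ENNReal.mul_le_mul_iff_right (ENNReal.inv_ne_zero.2 (measure_ne_top P _))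
      (ENNReal.inv_ne_top.2 hposm.ne')).mp hle
    calc (∫⁻ x in {x | ε < f x}, ENNReal.ofReal (1 - η x) ∂(P.map X))
        = P ((X ⁻¹' {x | ε < f x}) ∩ {ω | Y ω = -1}) :=
          (hwm _ (measurableSet_lt measurable_const hf)).symm
      _ = P ({ω | Y ω * f (X ω) < -ε} ∩ {ω | Y ω = -1}) := by rw [hintm f]
      _ = P ({ω | Y ω = -1} ∩ {ω | Y ω * f (X ω) < -ε}) := by rw [Set.inter_comm]
      _ ≤ P ({ω | Y ω = -1} ∩ {ω | tm < η (X ω)}) := hkey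
      _ = P ((X ⁻¹' {x | tm < η x}) ∩ {ω | Y ω = -1}) := by rw [Set.inter_comm]; rfl
      _ = ∫⁻ x in {x | tm < η x}, ENNReal.ofReal (1 - η x) ∂(P.map X) :=
          hwm _ (measurableSet_lt measurable_const hη)
  -- hinge integrals in real form
  have hHfr : ∫ ω, max 0 (1 + ε - Y ω * f (X ω)) ∂P
      = (∫⁻ x, ENNReal.ofReal (η x) * ENNReal.ofReal (max 0 (1 + ε - f x))
          + ENNReal.ofReal (1 - η x) * ENNReal.ofReal (max 0 (1 + ε + f x)) ∂(P.map X)).toReal := by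
    rw [integral_eq_lintegral_of_nonneg_ae (Filter.Eventually.of_forall fun ω => le_max_left 0 _)
      (show Measurable fun ω => max 0 (1 + ε - Y ω * f (X ω)) from
        measurable_const.max (measurable_const.sub (hY.mul (hf.comp hX)))).aestronglyMeasurable,
      hHg f hf]
  have hHsr : ∫ ω, max 0 (1 + ε - Y ω * fstar (X ω)) ∂P
      = (∫⁻ x, ENNReal.ofReal (η x) * ENNReal.ofReal (max 0 (1 + ε - fstar x))
          + ENNReal.ofReal (1 - η x) * ENNReal.ofReal (max 0 (1 + ε + fstar x)) ∂(P.map X)).toReal := by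
    rw [integral_eq_lintegral_of_nonneg_ae (Filter.Eventually.of_forall fun ω => le_max_left 0 _)
      (show Measurable fun ω => max 0 (1 + ε - Y ω * fstar (X ω)) from
        measurable_const.max (measurable_const.sub (hY.mul (hfsm.comp hX)))).aestronglyMeasurable,
      hHg fstar hfsm]
  -- finiteness of hinge integrals
  have hHf_fin : (∫⁻ x, ENNReal.ofReal (η x) * ENNReal.ofReal (max 0 (1 + ε - f x))
      + ENNReal.ofReal (1 - η x) * ENNReal.ofReal (max 0 (1 + ε + f x)) ∂(P.map X)) ≠ ⊤ := by
    rw [← hHg f hf]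
    have h := hfInt.hasFiniteIntegral
    rw [hasFiniteIntegral_iff_ofReal (Filter.Eventually.of_forall fun ω => le_max_left 0 _)] at h
    exact h.ne
  have hHs_fin : (∫⁻ x, ENNReal.ofReal (η x) * ENNReal.ofReal (max 0 (1 + ε - fstar x))
      + ENNReal.ofReal (1 - η x) * ENNReal.ofReal (max 0 (1 + ε + fstar x)) ∂(P.map X)) ≠ ⊤ := by
    have hb : ∀ x, ENNReal.ofReal (η x) * ENNReal.ofReal (max 0 (1 + ε - fstar x))
        + ENNReal.ofReal (1 - η x) * ENNReal.ofReal (max 0 (1 + ε + fstar x))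
        ≤ ENNReal.ofReal (2 + 2*ε) + ENNReal.ofReal (2 + 2*ε) := by
      intro x
      obtain ⟨hl, hr⟩ := hfs_range x
      refine add_le_add ?_ ?_
      · calc ENNReal.ofReal (η x) * ENNReal.ofReal (max 0 (1 + ε - fstar x))
            ≤ 1 * ENNReal.ofReal (2 + 2*ε) :=
              mul_le_mul' (ENNReal.ofReal_le_one.2 (hη01 x).2)
                (ENNReal.ofReal_le_ofReal (max_le (by linarith) (by linarith)))
          _ = ENNReal.ofReal (2 + 2*ε) := one_mul _
      · calc ENNReal.ofReal (1 - η x) * ENNReal.ofReal (max 0 (1 + ε + fstar x))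
            ≤ 1 * ENNReal.ofReal (2 + 2*ε) :=
              mul_le_mul' (ENNReal.ofReal_le_one.2 (by linarith [(hη01 x).1]))
                (ENNReal.ofReal_le_ofReal (max_le (by linarith) (by linarith)))
          _ = ENNReal.ofReal (2 + 2*ε) := one_mul _
    refine ne_top_of_le_ne_top ?_ (lintegral_mono hb)
    rw [lintegral_const]
    exact ENNReal.mul_ne_top (by simp) (measure_ne_top _ _)
  -- decomposition of the packed integrand
  have hite01 : ∀ (p : Prop) (inst : Decidable p), (0:ℝ) ≤ @ite _ p inst (1:ℝ) 0 := by
    intro p inst; split_ifs <;> norm_num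
  have hdecomp : ∀ g h : 𝒳 → ℝ, Measurable g → Measurable h →
      (∫⁻ x, ENNReal.ofReal (
          (if g x < -ε then (1:ℝ) else 0) * η x
          + (if ε < g x then (1:ℝ) else 0) * (1 - η x)
          + 1/2 * (if |g x| ≤ ε then (1:ℝ) else 0)
          + (A+1) * (η x * (if h x < -ε then (1:ℝ) else 0))
          + (B+1) * ((1 - η x) * (if ε < h x then (1:ℝ) else 0))
          + C * (η x * max 0 (1+ε-h x) + (1-η x) * max 0 (1+ε+h x))) ∂(P.map X))
      = (∫⁻ x in {x | g x < -ε}, ENNReal.ofReal (η x) ∂(P.map X))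
        + (∫⁻ x in {x | ε < g x}, ENNReal.ofReal (1 - η x) ∂(P.map X))
        + ENNReal.ofReal (1/2) * (P.map X) {x | |g x| ≤ ε}
        + ENNReal.ofReal (A+1) * ∫⁻ x in {x | h x < -ε}, ENNReal.ofReal (η x) ∂(P.map X)
        + ENNReal.ofReal (B+1) * ∫⁻ x in {x | ε < h x}, ENNReal.ofReal (1 - η x) ∂(P.map X)
        + ENNReal.ofReal C * ∫⁻ x, ENNReal.ofReal (η x) * ENNReal.ofReal (max 0 (1+ε-h x))
            + ENNReal.ofReal (1-η x) * ENNReal.ofReal (max 0 (1+ε+h x)) ∂(P.map X) := by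
    intro g h hg hh
    have h02 : ∀ x, (0:ℝ) ≤ 1 - η x := fun x => by linarith [(hη01 x).2]
    have hpoint : ∀ x, ENNReal.ofReal (
          (if g x < -ε then (1:ℝ) else 0) * η x
          + (if ε < g x then (1:ℝ) else 0) * (1 - η x)
          + 1/2 * (if |g x| ≤ ε then (1:ℝ) else 0)
          + (A+1) * (η x * (if h x < -ε then (1:ℝ) else 0))
          + (B+1) * ((1 - η x) * (if ε < h x then (1:ℝ) else 0))
          + C * (η x * max 0 (1+ε-h x) + (1-η x) * max 0 (1+ε+h x)))
        = (if g x < -ε then ENNReal.ofReal (η x) else 0)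
          + (if ε < g x then ENNReal.ofReal (1 - η x) else 0)
          + ENNReal.ofReal (1/2) * (if |g x| ≤ ε then (1:ℝ≥0∞) else 0)
          + ENNReal.ofReal (A+1) * (if h x < -ε then ENNReal.ofReal (η x) else 0)
          + ENNReal.ofReal (B+1) * (if ε < h x then ENNReal.ofReal (1 - η x) else 0)
          + ENNReal.ofReal C * (ENNReal.ofReal (η x) * ENNReal.ofReal (max 0 (1+ε-h x))
              + ENNReal.ofReal (1-η x) * ENNReal.ofReal (max 0 (1+ε+h x))) := by
      intro x
      have n1 : (0:ℝ) ≤ (if g x < -ε then (1:ℝ) else 0) * η x :=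
        mul_nonneg (hite01 _ _) (hη01 x).1
      have n2 : (0:ℝ) ≤ (if ε < g x then (1:ℝ) else 0) * (1 - η x) :=
        mul_nonneg (hite01 _ _) (h02 x)
      have n3 : (0:ℝ) ≤ 1/2 * (if |g x| ≤ ε then (1:ℝ) else 0) :=
        mul_nonneg (by norm_num) (hite01 _ _)
      have n4 : (0:ℝ) ≤ (A+1) * (η x * (if h x < -ε then (1:ℝ) else 0)) :=
        mul_nonneg hA1 (mul_nonneg (hη01 x).1 (hite01 _ _))
      have n5 : (0:ℝ) ≤ (B+1) * ((1 - η x) * (if ε < h x then (1:ℝ) else 0)) :=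
        mul_nonneg hB1 (mul_nonneg (h02 x) (hite01 _ _))
      have n6 : (0:ℝ) ≤ C * (η x * max 0 (1+ε-h x) + (1-η x) * max 0 (1+ε+h x)) :=
        mul_nonneg hCpos (add_nonneg (mul_nonneg (hη01 x).1 (le_max_left _ _))
          (mul_nonneg (h02 x) (le_max_left _ _)))
      have e1 : ENNReal.ofReal ((if g x < -ε then (1:ℝ) else 0) * η x)
          = (if g x < -ε then ENNReal.ofReal (η x) else 0) := by
        split_ifs with hx
        · rw [one_mul]
        · rw [zero_mul, ENNReal.ofReal_zero]
      have e2 : ENNReal.ofReal ((if ε < g x then (1:ℝ) else 0) * (1 - η x))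
          = (if ε < g x then ENNReal.ofReal (1 - η x) else 0) := by
        split_ifs with hx
        · rw [one_mul]
        · rw [zero_mul, ENNReal.ofReal_zero]
      have e3 : ENNReal.ofReal (1/2 * (if |g x| ≤ ε then (1:ℝ) else 0))
          = ENNReal.ofReal (1/2) * (if |g x| ≤ ε then (1:ℝ≥0∞) else 0) := by
        split_ifs with hx
        · rw [mul_one, mul_one]
        · rw [mul_zero, ENNReal.ofReal_zero, mul_zero]
      have e4 : ENNReal.ofReal ((A+1) * (η x * (if h x < -ε then (1:ℝ) else 0)))
          = ENNReal.ofReal (A+1) * (if h x < -ε then ENNReal.ofReal (η x) else 0) := by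
        split_ifs with hx
        · rw [mul_one, ENNReal.ofReal_mul hA1]
        · rw [mul_zero, mul_zero, ENNReal.ofReal_zero, mul_zero]
      have e5 : ENNReal.ofReal ((B+1) * ((1 - η x) * (if ε < h x then (1:ℝ) else 0)))
          = ENNReal.ofReal (B+1) * (if ε < h x then ENNReal.ofReal (1 - η x) else 0) := by
        split_ifs with hx
        · rw [mul_one, ENNReal.ofReal_mul hB1]
        · rw [mul_zero, mul_zero, ENNReal.ofReal_zero, mul_zero]
      have e6 : ENNReal.ofReal (C * (η x * max 0 (1+ε-h x) + (1-η x) * max 0 (1+ε+h x)))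
          = ENNReal.ofReal C * (ENNReal.ofReal (η x) * ENNReal.ofReal (max 0 (1+ε-h x))
              + ENNReal.ofReal (1-η x) * ENNReal.ofReal (max 0 (1+ε+h x))) := by
        rw [ENNReal.ofReal_mul hCpos,
          ENNReal.ofReal_add (mul_nonneg (hη01 x).1 (le_max_left _ _))
            (mul_nonneg (h02 x) (le_max_left _ _)),
          ENNReal.ofReal_mul (hη01 x).1, ENNReal.ofReal_mul (h02 x)]
      rw [ENNReal.ofReal_add (by linarith) n6, ENNReal.ofReal_add (by linarith) n5,
        ENNReal.ofReal_add (by linarith) n4, ENNReal.ofReal_add (by linarith) n3,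
        ENNReal.ofReal_add n1 n2, e1, e2, e3, e4, e5, e6]
    rw [lintegral_congr hpoint]
    -- measurability of the pieces
    have m1 : Measurable fun x => (if g x < -ε then ENNReal.ofReal (η x) else 0) :=
      Measurable.ite (measurableSet_lt hg measurable_const) hd1 measurable_const
    have m2 : Measurable fun x => (if ε < g x then ENNReal.ofReal (1 - η x) else 0) :=
      Measurable.ite (measurableSet_lt measurable_const hg) hdm measurable_const
    have m3' : Measurable fun x => (if |g x| ≤ ε then (1:ℝ≥0∞) else 0) :=
      Measurable.ite (measurableSet_le hg.abs measurable_const) measurable_const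
        measurable_const
    have m3 : Measurable fun x => ENNReal.ofReal (1/2) * (if |g x| ≤ ε then (1:ℝ≥0∞) else 0) :=
      m3'.const_mul _
    have m4' : Measurable fun x => (if h x < -ε then ENNReal.ofReal (η x) else 0) :=
      Measurable.ite (measurableSet_lt hh measurable_const) hd1 measurable_const
    have m4 : Measurable fun x =>
        ENNReal.ofReal (A+1) * (if h x < -ε then ENNReal.ofReal (η x) else 0) :=
      m4'.const_mul _
    have m5' : Measurable fun x => (if ε < h x then ENNReal.ofReal (1 - η x) else 0) :=
      Measurable.ite (measurableSet_lt measurable_const hh) hdm measurable_const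
    have m5 : Measurable fun x =>
        ENNReal.ofReal (B+1) * (if ε < h x then ENNReal.ofReal (1 - η x) else 0) :=
      m5'.const_mul _
    have mh1 : Measurable fun x => ENNReal.ofReal (η x) * ENNReal.ofReal (max 0 (1+ε-h x)) :=
      hd1.mul (measurable_const.max (measurable_const.sub hh)).ennreal_ofReal
    have mh2 : Measurable fun x =>
        ENNReal.ofReal (1-η x) * ENNReal.ofReal (max 0 (1+ε+h x)) :=
      hdm.mul (measurable_const.max (measurable_const.add hh)).ennreal_ofReal
    rw [lintegral_add_left ((((m1.fun_add m2).fun_add m3).fun_add m4).fun_add m5),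
      lintegral_add_left (((m1.fun_add m2).fun_add m3).fun_add m4),
      lintegral_add_left ((m1.fun_add m2).fun_add m3), lintegral_add_left (m1.fun_add m2),
      lintegral_add_left m1]
    congr 1
    · congr 1
      · congr 1
        · congr 1
          · congr 1
            · have : (fun x => if g x < -ε then ENNReal.ofReal (η x) else 0)
                  = Set.indicator {x | g x < -ε} (fun x => ENNReal.ofReal (η x)) := by
                funext x
                by_cases hx : g x < -ε <;>
                  simp [Set.indicator_apply, Set.mem_setOf_eq, hx]
              rw [this, lintegral_indicator (measurableSet_lt hg measurable_const)]
            · have : (fun x => if ε < g x then ENNReal.ofReal (1 - η x) else 0)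
                  = Set.indicator {x | ε < g x} (fun x => ENNReal.ofReal (1 - η x)) := by
                funext x
                by_cases hx : ε < g x <;>
                  simp [Set.indicator_apply, Set.mem_setOf_eq, hx]
              rw [this, lintegral_indicator (measurableSet_lt measurable_const hg)]
          · rw [lintegral_const_mul _ m3']
            congr 1
            have : (fun x => if |g x| ≤ ε then (1:ℝ≥0∞) else 0)
                = Set.indicator {x | |g x| ≤ ε} (fun _ => (1:ℝ≥0∞)) := by
              funext x
              by_cases hx : |g x| ≤ ε <;>
                simp [Set.indicator_apply, Set.mem_setOf_eq, hx]
            rw [this, lintegral_indicator (measurableSet_le hg.abs measurable_const),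
              setLIntegral_one]
        · rw [lintegral_const_mul _ m4']
          congr 1
          have : (fun x => if h x < -ε then ENNReal.ofReal (η x) else 0)
              = Set.indicator {x | h x < -ε} (fun x => ENNReal.ofReal (η x)) := by
            funext x
            by_cases hx : h x < -ε <;>
              simp [Set.indicator_apply, Set.mem_setOf_eq, hx]
          rw [this, lintegral_indicator (measurableSet_lt hh measurable_const)]
      · rw [lintegral_const_mul _ m5']
        congr 1
        have : (fun x => if ε < h x then ENNReal.ofReal (1 - η x) else 0)
            = Set.indicator {x | ε < h x} (fun x => ENNReal.ofReal (1 - η x)) := by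
          funext x
          by_cases hx : ε < h x <;>
            simp [Set.indicator_apply, Set.mem_setOf_eq, hx]
        rw [this, lintegral_indicator (measurableSet_lt measurable_const hh)]
    · rw [lintegral_const_mul _ (mh1.fun_add mh2)]
  -- the master inequality
  have hmaster : (∫⁻ x in {x | f x < -ε}, ENNReal.ofReal (η x) ∂(P.map X))
        + (∫⁻ x in {x | ε < f x}, ENNReal.ofReal (1 - η x) ∂(P.map X))
        + ENNReal.ofReal (1/2) * (P.map X) {x | |f x| ≤ ε}
        + ENNReal.ofReal (A+1) * ∫⁻ x in {x | fstar x < -ε}, ENNReal.ofReal (η x) ∂(P.map X)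
        + ENNReal.ofReal (B+1) * ∫⁻ x in {x | ε < fstar x}, ENNReal.ofReal (1 - η x) ∂(P.map X)
        + ENNReal.ofReal C * ∫⁻ x, ENNReal.ofReal (η x) * ENNReal.ofReal (max 0 (1+ε-fstar x))
            + ENNReal.ofReal (1-η x) * ENNReal.ofReal (max 0 (1+ε+fstar x)) ∂(P.map X)
      ≤ (∫⁻ x in {x | fstar x < -ε}, ENNReal.ofReal (η x) ∂(P.map X))
        + (∫⁻ x in {x | ε < fstar x}, ENNReal.ofReal (1 - η x) ∂(P.map X))
        + ENNReal.ofReal (1/2) * (P.map X) {x | |fstar x| ≤ ε}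
        + ENNReal.ofReal (A+1) * ∫⁻ x in {x | f x < -ε}, ENNReal.ofReal (η x) ∂(P.map X)
        + ENNReal.ofReal (B+1) * ∫⁻ x in {x | ε < f x}, ENNReal.ofReal (1 - η x) ∂(P.map X)
        + ENNReal.ofReal C * ∫⁻ x, ENNReal.ofReal (η x) * ENNReal.ofReal (max 0 (1+ε-f x))
            + ENNReal.ofReal (1-η x) * ENNReal.ofReal (max 0 (1+ε+f x)) ∂(P.map X) := by
    rw [← hdecomp f fstar hf hfsm, ← hdecomp fstar f hfsm hf]
    apply lintegral_mono
    intro x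
    apply ENNReal.ofReal_le_ofReal
    have hpsi := psi_min c t1 tm ε hc hε hct1 hctm ht10 htm1 C A B hC hA hB
      (η x) (f x) (fstar x) (hη01 x).1 (hη01 x).2 (hfstar x)
    linarith only [hpsi]
  -- feasibility in fstar-set form
  have hfeas1'' : (∫⁻ x in {x | f x < -ε}, ENNReal.ofReal (η x) ∂(P.map X))
      ≤ ∫⁻ x in {x | fstar x < -ε}, ENNReal.ofReal (η x) ∂(P.map X) := by
    rw [hTS1]; exact hfeas1'
  have hfeasm'' : (∫⁻ x in {x | ε < f x}, ENNReal.ofReal (1 - η x) ∂(P.map X))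
      ≤ ∫⁻ x in {x | ε < fstar x}, ENNReal.ofReal (1 - η x) ∂(P.map X) := by
    rw [hTS2]; exact hfeasm'
  have hmaster2 : (∫⁻ x in {x | f x < -ε}, ENNReal.ofReal (η x) ∂(P.map X))
        + (∫⁻ x in {x | ε < f x}, ENNReal.ofReal (1 - η x) ∂(P.map X))
        + ENNReal.ofReal (1/2) * (P.map X) {x | |f x| ≤ ε}
        + ENNReal.ofReal (A+1) * ∫⁻ x in {x | fstar x < -ε}, ENNReal.ofReal (η x) ∂(P.map X)
        + ENNReal.ofReal (B+1) * ∫⁻ x in {x | ε < fstar x}, ENNReal.ofReal (1 - η x) ∂(P.map X)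
        + ENNReal.ofReal C * ∫⁻ x, ENNReal.ofReal (η x) * ENNReal.ofReal (max 0 (1+ε-fstar x))
            + ENNReal.ofReal (1-η x) * ENNReal.ofReal (max 0 (1+ε+fstar x)) ∂(P.map X)
      ≤ (∫⁻ x in {x | fstar x < -ε}, ENNReal.ofReal (η x) ∂(P.map X))
        + (∫⁻ x in {x | ε < fstar x}, ENNReal.ofReal (1 - η x) ∂(P.map X))
        + ENNReal.ofReal (1/2) * (P.map X) {x | |fstar x| ≤ ε}
        + ENNReal.ofReal (A+1) * ∫⁻ x in {x | fstar x < -ε}, ENNReal.ofReal (η x) ∂(P.map X)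
        + ENNReal.ofReal (B+1) * ∫⁻ x in {x | ε < fstar x}, ENNReal.ofReal (1 - η x) ∂(P.map X)
        + ENNReal.ofReal C * ∫⁻ x, ENNReal.ofReal (η x) * ENNReal.ofReal (max 0 (1+ε-f x))
            + ENNReal.ofReal (1-η x) * ENNReal.ofReal (max 0 (1+ε+f x)) ∂(P.map X) := by
    refine hmaster.trans ?_
    gcongr
  -- cancel the multiplier terms
  have hfinA : ENNReal.ofReal (A+1)
      * (∫⁻ x in {x | fstar x < -ε}, ENNReal.ofReal (η x) ∂(P.map X)) ≠ ⊤ :=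
    ENNReal.mul_ne_top ENNReal.ofReal_ne_top
      (ne_top_of_le_ne_top ENNReal.one_ne_top (hd1fin _))
  have hfinB : ENNReal.ofReal (B+1)
      * (∫⁻ x in {x | ε < fstar x}, ENNReal.ofReal (1 - η x) ∂(P.map X)) ≠ ⊤ :=
    ENNReal.mul_ne_top ENNReal.ofReal_ne_top
      (ne_top_of_le_ne_top ENNReal.one_ne_top (hdmfin _))
  have hmaster3 : (∫⁻ x in {x | f x < -ε}, ENNReal.ofReal (η x) ∂(P.map X))
        + (∫⁻ x in {x | ε < f x}, ENNReal.ofReal (1 - η x) ∂(P.map X))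
        + ENNReal.ofReal (1/2) * (P.map X) {x | |f x| ≤ ε}
        + ENNReal.ofReal C * ∫⁻ x, ENNReal.ofReal (η x) * ENNReal.ofReal (max 0 (1+ε-fstar x))
            + ENNReal.ofReal (1-η x) * ENNReal.ofReal (max 0 (1+ε+fstar x)) ∂(P.map X)
      ≤ (∫⁻ x in {x | fstar x < -ε}, ENNReal.ofReal (η x) ∂(P.map X))
        + (∫⁻ x in {x | ε < fstar x}, ENNReal.ofReal (1 - η x) ∂(P.map X))
        + ENNReal.ofReal (1/2) * (P.map X) {x | |fstar x| ≤ ε}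
        + ENNReal.ofReal C * ∫⁻ x, ENNReal.ofReal (η x) * ENNReal.ofReal (max 0 (1+ε-f x))
            + ENNReal.ofReal (1-η x) * ENNReal.ofReal (max 0 (1+ε+f x)) ∂(P.map X) := by
    have hre := hmaster2
    have hl : (∫⁻ x in {x | f x < -ε}, ENNReal.ofReal (η x) ∂(P.map X))
        + (∫⁻ x in {x | ε < f x}, ENNReal.ofReal (1 - η x) ∂(P.map X))
        + ENNReal.ofReal (1/2) * (P.map X) {x | |f x| ≤ ε}
        + ENNReal.ofReal (A+1) * (∫⁻ x in {x | fstar x < -ε}, ENNReal.ofReal (η x) ∂(P.map X))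
        + ENNReal.ofReal (B+1) * (∫⁻ x in {x | ε < fstar x}, ENNReal.ofReal (1 - η x) ∂(P.map X))
        + ENNReal.ofReal C * ∫⁻ x, ENNReal.ofReal (η x) * ENNReal.ofReal (max 0 (1+ε-fstar x))
            + ENNReal.ofReal (1-η x) * ENNReal.ofReal (max 0 (1+ε+fstar x)) ∂(P.map X)
        = ((∫⁻ x in {x | f x < -ε}, ENNReal.ofReal (η x) ∂(P.map X))
          + (∫⁻ x in {x | ε < f x}, ENNReal.ofReal (1 - η x) ∂(P.map X))
          + ENNReal.ofReal (1/2) * (P.map X) {x | |f x| ≤ ε}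
          + ENNReal.ofReal C * ∫⁻ x, ENNReal.ofReal (η x) * ENNReal.ofReal (max 0 (1+ε-fstar x))
              + ENNReal.ofReal (1-η x) * ENNReal.ofReal (max 0 (1+ε+fstar x)) ∂(P.map X))
          + (ENNReal.ofReal (A+1)
              * (∫⁻ x in {x | fstar x < -ε}, ENNReal.ofReal (η x) ∂(P.map X))
            + ENNReal.ofReal (B+1)
              * (∫⁻ x in {x | ε < fstar x}, ENNReal.ofReal (1 - η x) ∂(P.map X))) := by
      ring
    have hr : (∫⁻ x in {x | fstar x < -ε}, ENNReal.ofReal (η x) ∂(P.map X))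
        + (∫⁻ x in {x | ε < fstar x}, ENNReal.ofReal (1 - η x) ∂(P.map X))
        + ENNReal.ofReal (1/2) * (P.map X) {x | |fstar x| ≤ ε}
        + ENNReal.ofReal (A+1) * (∫⁻ x in {x | fstar x < -ε}, ENNReal.ofReal (η x) ∂(P.map X))
        + ENNReal.ofReal (B+1) * (∫⁻ x in {x | ε < fstar x}, ENNReal.ofReal (1 - η x) ∂(P.map X))
        + ENNReal.ofReal C * ∫⁻ x, ENNReal.ofReal (η x) * ENNReal.ofReal (max 0 (1+ε-f x))
            + ENNReal.ofReal (1-η x) * ENNReal.ofReal (max 0 (1+ε+f x)) ∂(P.map X)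
        = ((∫⁻ x in {x | fstar x < -ε}, ENNReal.ofReal (η x) ∂(P.map X))
          + (∫⁻ x in {x | ε < fstar x}, ENNReal.ofReal (1 - η x) ∂(P.map X))
          + ENNReal.ofReal (1/2) * (P.map X) {x | |fstar x| ≤ ε}
          + ENNReal.ofReal C * ∫⁻ x, ENNReal.ofReal (η x) * ENNReal.ofReal (max 0 (1+ε-f x))
              + ENNReal.ofReal (1-η x) * ENNReal.ofReal (max 0 (1+ε+f x)) ∂(P.map X))
          + (ENNReal.ofReal (A+1)
              * (∫⁻ x in {x | fstar x < -ε}, ENNReal.ofReal (η x) ∂(P.map X))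
            + ENNReal.ofReal (B+1)
              * (∫⁻ x in {x | ε < fstar x}, ENNReal.ofReal (1 - η x) ∂(P.map X))) := by
      ring
    rw [hl, hr] at hre
    exact (ENNReal.add_le_add_iff_right (ENNReal.add_ne_top.2 ⟨hfinA, hfinB⟩)).mp hre
  -- pass to real numbers
  have ne1 : (∫⁻ x in {x | f x < -ε}, ENNReal.ofReal (η x) ∂(P.map X)) ≠ ⊤ :=
    ne_top_of_le_ne_top ENNReal.one_ne_top (hd1fin _)
  have ne2 : (∫⁻ x in {x | ε < f x}, ENNReal.ofReal (1 - η x) ∂(P.map X)) ≠ ⊤ :=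
    ne_top_of_le_ne_top ENNReal.one_ne_top (hdmfin _)
  have ne3 : ENNReal.ofReal (1/2) * (P.map X) {x | |f x| ≤ ε} ≠ ⊤ :=
    ENNReal.mul_ne_top ENNReal.ofReal_ne_top (measure_ne_top _ _)
  have ne4 : ENNReal.ofReal C * (∫⁻ x, ENNReal.ofReal (η x) * ENNReal.ofReal (max 0 (1+ε-fstar x))
      + ENNReal.ofReal (1-η x) * ENNReal.ofReal (max 0 (1+ε+fstar x)) ∂(P.map X)) ≠ ⊤ :=
    ENNReal.mul_ne_top ENNReal.ofReal_ne_top hHs_fin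
  have ne1s : (∫⁻ x in {x | fstar x < -ε}, ENNReal.ofReal (η x) ∂(P.map X)) ≠ ⊤ :=
    ne_top_of_le_ne_top ENNReal.one_ne_top (hd1fin _)
  have ne2s : (∫⁻ x in {x | ε < fstar x}, ENNReal.ofReal (1 - η x) ∂(P.map X)) ≠ ⊤ :=
    ne_top_of_le_ne_top ENNReal.one_ne_top (hdmfin _)
  have ne3s : ENNReal.ofReal (1/2) * (P.map X) {x | |fstar x| ≤ ε} ≠ ⊤ :=
    ENNReal.mul_ne_top ENNReal.ofReal_ne_top (measure_ne_top _ _)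
  have ne4s : ENNReal.ofReal C * (∫⁻ x, ENNReal.ofReal (η x) * ENNReal.ofReal (max 0 (1+ε-f x))
      + ENNReal.ofReal (1-η x) * ENNReal.ofReal (max 0 (1+ε+f x)) ∂(P.map X)) ≠ ⊤ :=
    ENNReal.mul_ne_top ENNReal.ofReal_ne_top hHf_fin
  have hreal := ENNReal.toReal_mono (by
    refine ENNReal.add_ne_top.2 ⟨ENNReal.add_ne_top.2 ⟨ENNReal.add_ne_top.2 ⟨ne1s, ne2s⟩, ne3s⟩, ne4s⟩) hmaster3
  rw [ENNReal.toReal_add (ENNReal.add_ne_top.2 ⟨ENNReal.add_ne_top.2 ⟨ne1, ne2⟩, ne3⟩) ne4,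
    ENNReal.toReal_add (ENNReal.add_ne_top.2 ⟨ne1, ne2⟩) ne3,
    ENNReal.toReal_add ne1 ne2,
    ENNReal.toReal_add (ENNReal.add_ne_top.2 ⟨ENNReal.add_ne_top.2 ⟨ne1s, ne2s⟩, ne3s⟩) ne4s,
    ENNReal.toReal_add (ENNReal.add_ne_top.2 ⟨ne1s, ne2s⟩) ne3s,
    ENNReal.toReal_add ne1s ne2s,
    ENNReal.toReal_mul, ENNReal.toReal_mul, ENNReal.toReal_mul, ENNReal.toReal_mul,
    ENNReal.toReal_ofReal (by norm_num : (0:ℝ) ≤ 1/2),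
    ENNReal.toReal_ofReal hCpos] at hreal
  -- rewrite the goal
  rw [hEg f hf, hEg fstar hfsm, hAg f hf, hAg fstar hfsm, hHfr, hHsr,
    ENNReal.toReal_add ne1 ne2, ENNReal.toReal_add ne1s ne2s, ← hC]
  linarith only [hreal]
end
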